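/- arXiv:2410.12282 — 9 statements merged into one kernel-verified Lean document; each statement's English description precedes it below -/
import Mathlib

section
/- Let G be a finite group and g ∈ G. Then the number of pairs (x, y) ∈ G × G with x y x⁻¹ y⁻¹ = g equals |G| · Σ_χ χ(g)/χ(1), where the sum runs over the characters χ of a complete set of representatives of the isomorphism classes of finite-dimensional complex irreducible representations of G (Frobenius' formula). -/
open CategoryTheory

set_option linter.unusedSectionVars false
set_option linter.unusedVariables false
set_option maxHeartbeats 1000000


namespace Frob
variable {G : Type} [Group G] [Fintype G]

/-- Make an `FDRep` morphism from an equivariant linear map. -/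
noncomputable def homMk {V W : FDRep ℂ G} (f : V →ₗ[ℂ] W)
    (h : ∀ g : G, f ∘ₗ V.ρ g = W.ρ g ∘ₗ f) : V ⟶ W :=
  ⟨FGModuleCat.ofHom f, fun g => by ext v; exact LinearMap.congr_fun (h g) v⟩

@[simp] lemma homMk_hom {V W : FDRep ℂ G} (f : V →ₗ[ℂ] W) (h) :
    (homMk f h).hom.hom.hom = f := rfl

lemma hom_comm {V W : FDRep ℂ G} (f : V ⟶ W) (g : G) (x : V) :
    f.hom.hom.hom (V.ρ g x) = W.ρ g (f.hom.hom.hom x) := by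
  exact congrArg (fun φ => φ.hom.hom x) (f.comm g)

/-- Restriction of a representation to an invariant submodule. -/
noncomputable def subRep {A : Type} [AddCommGroup A] [Module ℂ A]
    (ρ : Representation ℂ G A) (p : Submodule ℂ A)
    (hp : ∀ g : G, ∀ x ∈ p, ρ g x ∈ p) : Representation ℂ G p where
  toFun g := (ρ g).restrict (hp g)
  map_one' := by ext x; simp [LinearMap.restrict_apply]
  map_mul' g h := by ext x; simp [LinearMap.restrict_apply]

lemma subRep_apply {A : Type} [AddCommGroup A] [Module ℂ A]
    (ρ : Representation ℂ G A) (p : Submodule ℂ A) (hp) (g : G) (x : p) :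
    ((subRep ρ p hp g x : p) : A) = ρ g (x : A) := rfl


/-- The inclusion of an invariant submodule as an `FDRep` morphism. -/
noncomputable def subRepIncl (W : FDRep ℂ G) (p : Submodule ℂ W)
    (hp : ∀ g : G, ∀ x ∈ p, W.ρ g x ∈ p) :
    FDRep.of (subRep W.ρ p hp) ⟶ W :=
  homMk p.subtype (fun g => by ext x; rfl)

lemma simple_mk (W : FDRep ℂ G) (hnt : Nontrivial W)
    (h : ∀ p : Submodule ℂ W, (∀ g : G, ∀ x ∈ p, W.ρ g x ∈ p) → p = ⊥ ∨ p = ⊤) :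
    Simple W := by
  constructor
  intro Y f hm
  constructor
  · rintro hiso rfl
    obtain ⟨x, y, hxy⟩ := hnt
    have h1 : (𝟙 W : W ⟶ W) = 0 := by
      rw [← IsIso.inv_hom_id (0 : Y ⟶ W), Limits.comp_zero]
    have := congrArg (fun φ : W ⟶ W => φ.hom x) h1
    have h2 := congrArg (fun φ : W ⟶ W => φ.hom y) h1
    exact hxy (by simpa using this.trans h2.symm)
  · intro hne
    -- injectivity
    have hinj : Function.Injective f.hom.hom.hom := by
      rw [← LinearMap.ker_eq_bot]
      set K := LinearMap.ker f.hom.hom.hom with hK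
      have hKinv : ∀ g : G, ∀ x ∈ K, Y.ρ g x ∈ K := by
        intro g x hx
        simp only [hK, LinearMap.mem_ker] at hx ⊢
        have h' := hom_comm f g x
        rw [hx, map_zero] at h'
        exact h'
      have hcomp : subRepIncl Y K hKinv ≫ f = 0 ≫ f := by
        rw [Limits.zero_comp]
        apply Action.Hom.ext
        apply FGModuleCat.hom_ext; apply LinearMap.ext
        intro x
        exact x.2
      have := (cancel_mono f).mp hcomp
      rw [eq_bot_iff]
      intro x hx
      have := congrArg (fun φ => φ.hom.hom.hom ⟨x, hx⟩) this
      exact this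
    -- surjectivity
    have hR : ∀ g : G, ∀ x ∈ LinearMap.range f.hom.hom.hom, W.ρ g x ∈ LinearMap.range f.hom.hom.hom := by
      rintro g x ⟨y, rfl⟩
      exact ⟨Y.ρ g y, hom_comm f g y⟩
    rcases h (LinearMap.range f.hom.hom.hom) hR with hbot | htop
    · exfalso
      apply hne
      apply Action.Hom.ext
      apply FGModuleCat.hom_ext; apply LinearMap.ext
      intro x
      have : f.hom.hom.hom x ∈ (⊥ : Submodule ℂ W) := hbot ▸ LinearMap.mem_range_self _ x
      simpa using this
    · have hsurj : Function.Surjective f.hom.hom.hom := LinearMap.range_eq_top.mp htop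
      let e : Y ≃ₗ[ℂ] W := LinearEquiv.ofBijective f.hom.hom.hom ⟨hinj, hsurj⟩
      have hes : ∀ g : G, (e.symm : W →ₗ[ℂ] Y) ∘ₗ W.ρ g = Y.ρ g ∘ₗ (e.symm : W →ₗ[ℂ] Y) := by
        intro g
        ext x
        apply hinj
        simp only [LinearMap.comp_apply]
        rw [hom_comm f g]
        have h1 : f.hom.hom.hom ((e.symm : W →ₗ[ℂ] Y) (W.ρ g x)) = W.ρ g x := e.apply_symm_apply _
        have h2 : f.hom.hom.hom ((e.symm : W →ₗ[ℂ] Y) x) = x := e.apply_symm_apply _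
        rw [h1, h2]
      refine ⟨⟨homMk (e.symm : W →ₗ[ℂ] Y) hes, ?_, ?_⟩⟩
      · apply Action.Hom.ext; apply FGModuleCat.hom_ext; apply LinearMap.ext; intro x
        exact e.symm_apply_apply x
      · apply Action.Hom.ext; apply FGModuleCat.hom_ext; apply LinearMap.ext; intro x
        exact e.apply_symm_apply x


open FDRep in
lemma char_one_ne_zero (V : FDRep ℂ G) [Simple V] : V.character 1 ≠ 0 := by
  rw [FDRep.char_one]
  have : Nontrivial V := by
    by_contra hs
    rw [not_nontrivial_iff_subsingleton] at hs
    apply CategoryTheory.id_nonzero V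
    apply Action.Hom.ext
    apply FGModuleCat.hom_ext; apply LinearMap.ext
    intro x
    exact (hs.elim _ _ : (𝟙 V : V ⟶ V).hom.hom.hom x = (0 : V ⟶ V).hom.hom.hom x)
  have hpos : 0 < Module.finrank ℂ V := Module.finrank_pos
  exact_mod_cast Nat.cast_ne_zero.mpr hpos.ne'

/-- Schur: an equivariant endomorphism of a simple `FDRep` is scalar. -/
lemma exists_smul_eq_of_comm (V : FDRep ℂ G) [Simple V] (T : V →ₗ[ℂ] V)
    (hT : ∀ g : G, T ∘ₗ V.ρ g = V.ρ g ∘ₗ T) : ∃ c : ℂ, T = c • LinearMap.id := by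
  obtain ⟨c, hc⟩ := CategoryTheory.endomorphism_simple_eq_smul_id ℂ (homMk T hT)
  refine ⟨c, ?_⟩
  have := congrArg (fun φ : V ⟶ V => φ.hom.hom.hom) hc
  simp only [Action.smul_hom, homMk_hom] at this
  exact this.symm.trans (by rfl) |>.trans (by rfl)

/-- trace identity : `χ(1) * tr (T ∘ ρ h) = tr T * χ(h)` for equivariant `T`. -/
lemma trace_comp_eq (V : FDRep ℂ G) [Simple V] (T : V →ₗ[ℂ] V)
    (hT : ∀ g : G, T ∘ₗ V.ρ g = V.ρ g ∘ₗ T) (h : G) :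
    V.character 1 * LinearMap.trace ℂ V (T ∘ₗ V.ρ h) =
      LinearMap.trace ℂ V T * V.character h := by
  obtain ⟨c, rfl⟩ := exists_smul_eq_of_comm V T hT
  have h1 : LinearMap.trace ℂ V ((c • LinearMap.id : V →ₗ[ℂ] V) ∘ₗ V.ρ h)
      = c * V.character h := by
    rw [LinearMap.smul_comp, LinearMap.id_comp, map_smul, smul_eq_mul]; rfl
  have h2 : LinearMap.trace ℂ V (c • (LinearMap.id : V →ₗ[ℂ] V)) = c * V.character 1 := by
    rw [map_smul, smul_eq_mul, LinearMap.trace_id]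
    rw [FDRep.char_one]
  rw [h1, h2]
  ring


lemma rho_inv_self_apply {X : FDRep ℂ G} (g : G) (x : X) :
    X.ρ g⁻¹ (X.ρ g x) = x := by
  have : X.ρ g⁻¹ * X.ρ g = 1 := by rw [← map_mul, inv_mul_cancel, map_one]
  simpa [Module.End.mul_apply] using LinearMap.congr_fun this x

lemma rho_self_inv_apply {X : FDRep ℂ G} (g : G) (x : X) :
    X.ρ g (X.ρ g⁻¹ x) = x := by
  have : X.ρ g * X.ρ g⁻¹ = 1 := by rw [← map_mul, mul_inv_cancel, map_one]
  simpa [Module.End.mul_apply] using LinearMap.congr_fun this x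

lemma mem_linHom_invariants_iff {X Y : FDRep ℂ G} (f : X →ₗ[ℂ] Y) :
    f ∈ (Representation.linHom X.ρ Y.ρ).invariants ↔
      ∀ g : G, f ∘ₗ X.ρ g = Y.ρ g ∘ₗ f := by
  simp only [Representation.mem_invariants, Representation.linHom_apply]
  constructor
  · intro hf g
    ext x
    have h1 := LinearMap.congr_fun (hf g) (X.ρ g x)
    simp only [LinearMap.comp_apply] at h1 ⊢
    rw [rho_inv_self_apply] at h1
    exact h1.symm
  · intro hf g
    ext x
    have h1 := LinearMap.congr_fun (hf g) (X.ρ g⁻¹ x)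
    simp only [LinearMap.comp_apply] at h1 ⊢
    rw [rho_self_inv_apply] at h1
    exact h1.symm

/-- The invariants of `linHom` correspond to `FDRep` homs (unbundled group version). -/
noncomputable def invEquiv (X Y : FDRep ℂ G) :
    (Representation.linHom X.ρ Y.ρ).invariants ≃ₗ[ℂ] (X ⟶ Y) where
  toFun f := homMk f.val ((mem_linHom_invariants_iff f.val).mp f.property)
  map_add' _ _ := rfl
  map_smul' _ _ := rfl
  invFun f := ⟨f.hom.hom.hom, (mem_linHom_invariants_iff f.hom.hom.hom).mpr
    (fun g => LinearMap.ext fun x => hom_comm f g x)⟩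
  left_inv f := rfl
  right_inv f := rfl

open scoped Classical in
open FDRep Module in
/-- Orthogonality of characters, unbundled-group version. -/
lemma char_orth (V W : FDRep ℂ G) [Simple V] [Simple W] :
    ∑ g : G, V.character g * W.character g⁻¹ =
      if Nonempty (V ≅ W) then (Fintype.card G : ℂ) else 0 := by
  letI : Invertible ((Fintype.card G : ℂ)) :=
    invertibleOfNonzero (Nat.cast_ne_zero.2 Fintype.card_ne_zero)
  have key : ⅟ (Fintype.card G : ℂ) • ∑ g : G, V.character g * W.character g⁻¹ =
      if Nonempty (V ≅ W) then (1 : ℂ) else 0 := by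
    conv_lhs =>
      enter [2, 2, g]
      rw [mul_comm, ← char_dual, ← Pi.mul_apply, ← char_tensor]
      rw [char_iso (FDRep.dualTensorIsoLinHom W.ρ V)]
    rw [smul_eq_mul, invOf_eq_inv, Fintype.card_eq_nat_card, average_char_eq_finrank_invariants]
    rw [show (of (Representation.linHom W.ρ V.ρ)).ρ = Representation.linHom W.ρ V.ρ from
      FDRep.of_ρ' (Representation.linHom W.ρ V.ρ)]
    erw [(invEquiv W V).finrank_eq]
    rw_mod_cast [FDRep.finrank_hom_simple_simple W V, CategoryTheory.Iso.nonempty_iso_symm]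
  have := congrArg (fun z => (Fintype.card G : ℂ) * z) key
  simp only [smul_eq_mul, ← mul_assoc, mul_invOf_self] at this
  rw [one_mul] at this
  rw [this]
  split <;> ring


lemma char_eq_trace (V : FDRep ℂ G) (g : G) :
    V.character g = LinearMap.trace ℂ V (V.ρ g) := rfl

/-- Conjugation-reindexing for sums over the group. -/
lemma sum_conj_reindex {M : Type*} [AddCommMonoid M] (g : G) (F : G → M) :
    ∑ x : G, F x = ∑ x : G, F (g * x * g⁻¹) :=
  Fintype.sum_equiv ((Equiv.mulLeft g).trans (Equiv.mulRight g⁻¹)).symm F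
    (fun x => F (g * x * g⁻¹)) (fun x => by simp [mul_assoc])

/-- **Key lemma A**: averaging a conjugacy class inside a simple representation. -/
lemma lemA (V : FDRep ℂ G) [Simple V] (a b : G) :
    V.character 1 * ∑ x : G, V.character (x * a * x⁻¹ * b) =
      (Fintype.card G : ℂ) * V.character a * V.character b := by
  set T : V →ₗ[ℂ] V := ∑ x : G, V.ρ (x * a * x⁻¹) with hTdef
  have hT : ∀ g : G, T ∘ₗ V.ρ g = V.ρ g ∘ₗ T := by
    intro g
    rw [← Module.End.mul_eq_comp, ← Module.End.mul_eq_comp, hTdef, Finset.sum_mul,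
      Finset.mul_sum]
    refine Fintype.sum_equiv (Equiv.mulLeft g⁻¹) _ _ (fun x => ?_)
    simp only [Equiv.coe_mulLeft]
    rw [← map_mul, ← map_mul]
    congr 1
    group
  have key := trace_comp_eq V T hT b
  have h1 : LinearMap.trace ℂ V (T ∘ₗ V.ρ b) = ∑ x : G, V.character (x * a * x⁻¹ * b) := by
    rw [← Module.End.mul_eq_comp, hTdef, Finset.sum_mul, map_sum]
    refine Finset.sum_congr rfl (fun x _ => ?_)
    rw [← map_mul, ← char_eq_trace]
  have h2 : LinearMap.trace ℂ V T = (Fintype.card G : ℂ) * V.character a := by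
    rw [hTdef, map_sum]
    have : ∀ x : G, LinearMap.trace ℂ V (V.ρ (x * a * x⁻¹)) = V.character a := by
      intro x
      rw [← char_eq_trace, FDRep.char_conj]
    rw [Finset.sum_congr rfl (fun x _ => this x), Finset.sum_const, Finset.card_univ,
      nsmul_eq_mul]
  rw [h1, h2] at key
  exact key.trans (by ring)

/-- **Key lemma B**: self-convolution of an irreducible character. -/
lemma lemB (V : FDRep ℂ G) [Simple V] (h : G) :
    V.character 1 * ∑ x : G, V.character x⁻¹ * V.character (x * h) =
      (Fintype.card G : ℂ) * V.character h := by
  set T : V →ₗ[ℂ] V := ∑ x : G, V.character x⁻¹ • V.ρ x with hTdef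
  have hT : ∀ g : G, T ∘ₗ V.ρ g = V.ρ g ∘ₗ T := by
    intro g
    rw [← Module.End.mul_eq_comp, ← Module.End.mul_eq_comp, hTdef, Finset.sum_mul,
      Finset.mul_sum]
    simp only [smul_mul_assoc, mul_smul_comm, ← map_mul]
    rw [sum_conj_reindex g (fun x => V.character x⁻¹ • V.ρ (x * g))]
    refine Finset.sum_congr rfl (fun x _ => ?_)
    have hc : (g * x * g⁻¹)⁻¹ = g * x⁻¹ * g⁻¹ := by group
    rw [hc, FDRep.char_conj]
    congr 2
    group
  have key := trace_comp_eq V T hT h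
  have h1 : LinearMap.trace ℂ V (T ∘ₗ V.ρ h) = ∑ x : G, V.character x⁻¹ * V.character (x * h) := by
    rw [← Module.End.mul_eq_comp, hTdef, Finset.sum_mul, map_sum]
    refine Finset.sum_congr rfl (fun x _ => ?_)
    rw [smul_mul_assoc, map_smul, ← map_mul, smul_eq_mul, ← char_eq_trace]
  have h2 : LinearMap.trace ℂ V T = (Fintype.card G : ℂ) := by
    rw [hTdef, map_sum]
    have : ∀ x : G, LinearMap.trace ℂ V (V.character x⁻¹ • V.ρ x)
        = V.character x * V.character x⁻¹ := by
      intro x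
      rw [map_smul, smul_eq_mul, ← char_eq_trace]
      ring
    rw [Finset.sum_congr rfl (fun x _ => this x)]
    rw [char_orth V V]
    simp
  rw [h1, h2] at key
  exact key.trans (by ring)


lemma classop_comm (V : FDRep ℂ G) (φ : G → ℂ) (hφ : ∀ g x : G, φ (g * x * g⁻¹) = φ x) (g : G) :
    (∑ x : G, φ x • V.ρ x) ∘ₗ V.ρ g = V.ρ g ∘ₗ (∑ x : G, φ x • V.ρ x) := by
  rw [← Module.End.mul_eq_comp, ← Module.End.mul_eq_comp, Finset.sum_mul, Finset.mul_sum]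
  simp only [smul_mul_assoc, mul_smul_comm, ← map_mul]
  rw [sum_conj_reindex g (fun x => φ x • V.ρ (x * g))]
  refine Finset.sum_congr rfl (fun x _ => ?_)
  rw [hφ]
  have hx : g * x * g⁻¹ * g = g * x := by group
  rw [hx]

noncomputable instance : FiniteDimensional ℂ (MonoidAlgebra ℂ G) :=
  Module.Finite.equiv (MonoidAlgebra.coeffLinearEquiv ℂ).symm

/-- The left regular representation of `G` on its group algebra. -/
noncomputable def regRep : Representation ℂ G (MonoidAlgebra ℂ G) where
  toFun g := LinearMap.mulLeft ℂ (MonoidAlgebra.single g (1 : ℂ))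
  map_one' := by
    refine LinearMap.ext fun x => ?_
    show MonoidAlgebra.single (1 : G) (1 : ℂ) * x = x
    rw [← MonoidAlgebra.one_def, one_mul]
  map_mul' g h := by
    refine LinearMap.ext fun x => ?_
    show MonoidAlgebra.single (g * h) (1 : ℂ) * x
      = MonoidAlgebra.single g (1 : ℂ) * (MonoidAlgebra.single h (1 : ℂ) * x)
    rw [← mul_assoc, MonoidAlgebra.single_mul_single, one_mul]

lemma regRep_apply (g : G) (x : MonoidAlgebra ℂ G) :
    regRep g x = MonoidAlgebra.single g (1 : ℂ) * x := rfl


section Reg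

variable (S : Submodule (MonoidAlgebra ℂ G) (MonoidAlgebra ℂ G))

/-- A simple submodule of the group algebra, as a `ℂ`-subspace. -/
noncomputable def pS : Submodule ℂ (MonoidAlgebra ℂ G) := S.restrictScalars ℂ

lemma pS_inv : ∀ g : G, ∀ x ∈ pS S, regRep g x ∈ pS S := by
  intro g x hx
  exact S.smul_mem (MonoidAlgebra.single g (1 : ℂ)) hx

/-- The `FDRep` attached to a submodule of the group algebra. -/
noncomputable def WS : FDRep ℂ G := FDRep.of (subRep regRep (pS S) (pS_inv S))

lemma WS_simple (hS : IsSimpleModule (MonoidAlgebra ℂ G) S) : Simple (WS S) := by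
  haveI := hS
  apply simple_mk
  · exact (IsSimpleModule.nontrivial (MonoidAlgebra ℂ G) S : Nontrivial (WS S))
  · intro q hq
    have hsmul : ∀ a : MonoidAlgebra ℂ G, ∀ x : S, x ∈ q → a • x ∈ q := by
      intro a
      refine MonoidAlgebra.induction_on
        (motive := fun a => ∀ x : S, x ∈ q → a • x ∈ q) a ?_ ?_ ?_
      · intro g x hx
        have heq : (MonoidAlgebra.of ℂ G g) • x = subRep regRep (pS S) (pS_inv S) g x := by
          apply Subtype.ext
          rfl
        rw [heq]
        exact hq g x hx
      · intro a b ha hb x hx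
        rw [add_smul]
        exact q.add_mem (ha x hx) (hb x hx)
      · intro r a ha x hx
        rw [smul_assoc]
        exact q.smul_mem r (ha x hx)
    let Q : Submodule (MonoidAlgebra ℂ G) S :=
      { carrier := fun x => x ∈ q
        add_mem' := fun ha hb => q.add_mem ha hb
        zero_mem' := q.zero_mem
        smul_mem' := fun a x hx => hsmul a x hx }
    rcases eq_bot_or_eq_top Q with hb | ht
    · left
      rw [eq_bot_iff]
      intro x hx
      have : x ∈ Q := hx
      rw [hb] at this
      exact (Submodule.mem_bot ℂ).mpr (Subtype.ext (congrArg Subtype.val ((Submodule.mem_bot (MonoidAlgebra ℂ G) (M := S)).mp this)))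
    · right
      rw [eq_top_iff]
      intro x _
      have : x ∈ Q := by rw [ht]; trivial
      exact this

end Reg


open scoped Classical in
/-- Column orthogonality at the identity: `∑ χᵢ(1)χᵢ(h) = |G| δ_{h,1}`. -/
lemma lemR {ι : Type} [Fintype ι] (V : ι → FDRep ℂ G)
    (hsimple : ∀ i, Simple (V i))
    (hdistinct : ∀ i j : ι, Nonempty (V i ≅ V j) → i = j)
    (hcomplete : ∀ W : FDRep ℂ G, Simple W → ∃ i, Nonempty (W ≅ V i))
    (h₀ : G) :
    ∑ i, (V i).character 1 * (V i).character h₀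
      = if h₀ = 1 then (Fintype.card G : ℂ) else 0 := by
  haveI := hsimple
  set f : G → ℂ := fun h =>
    (∑ i, (V i).character 1 * (V i).character h) - (if h = 1 then (Fintype.card G : ℂ) else 0)
    with hfdef
  suffices hf : ∀ h, f h = 0 by
    have := hf h₀
    rw [hfdef] at this
    simpa [sub_eq_zero] using this
  -- `f` is a class function
  have hconj : ∀ g x : G, f (g * x * g⁻¹) = f x := by
    intro g x
    have h1 : ∀ i : ι, (V i).character (g * x * g⁻¹) = (V i).character x :=
      fun i => FDRep.char_conj _ _ _
    have h2 : (g * x * g⁻¹ = 1) = (x = 1) := by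
      apply propext
      constructor
      · intro hh
        calc x = g⁻¹ * (g * x * g⁻¹) * g := by group
        _ = 1 := by rw [hh]; group
      · rintro rfl; group
    simp only [hfdef, h1, h2]
  have hφ : ∀ g x : G, f (g * x * g⁻¹)⁻¹ = f x⁻¹ := by
    intro g x
    have hi : (g * x * g⁻¹)⁻¹ = g * x⁻¹ * g⁻¹ := by group
    rw [hi, hconj]
  -- `f` is orthogonal to every `χⱼ`
  have horth : ∀ j, ∑ x : G, f x⁻¹ * (V j).character x = 0 := by
    intro j
    have e1 : ∑ x : G, (∑ i, (V i).character 1 * (V i).character x⁻¹) * (V j).character x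
        = (Fintype.card G : ℂ) * (V j).character 1 := by
      have swap : ∑ x : G, (∑ i, (V i).character 1 * (V i).character x⁻¹) * (V j).character x
          = ∑ i, (V i).character 1 * ∑ x : G, (V j).character x * (V i).character x⁻¹ := by
        simp_rw [Finset.sum_mul]
        rw [Finset.sum_comm]
        refine Finset.sum_congr rfl fun i _ => ?_
        rw [Finset.mul_sum]
        exact Finset.sum_congr rfl fun x _ => by ring
      rw [swap]
      have hterm : ∀ i : ι, (V i).character 1 * ∑ x : G, (V j).character x * (V i).character x⁻¹
          = if i = j then (Fintype.card G : ℂ) * (V j).character 1 else 0 := by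
        intro i
        rw [char_orth (V j) (V i)]
        by_cases hij : i = j
        · subst hij
          rw [if_pos ⟨Iso.refl _⟩, if_pos rfl]
          ring
        · rw [if_neg (fun hne => hij (hdistinct j i hne).symm), if_neg hij, mul_zero]
      rw [Finset.sum_congr rfl fun i _ => hterm i, Finset.sum_ite_eq' Finset.univ j
        (fun _ => (Fintype.card G : ℂ) * (V j).character 1), if_pos (Finset.mem_univ j)]
    have e2 : ∑ x : G, (if x⁻¹ = (1 : G) then (Fintype.card G : ℂ) else 0) * (V j).character x
        = (Fintype.card G : ℂ) * (V j).character 1 := by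
      rw [Finset.sum_eq_single (1 : G)]
      · simp
      · intro x _ hx
        rw [if_neg (fun hh => hx (by simpa using inv_eq_one.mp hh)), zero_mul]
      · intro hmem; exact absurd (Finset.mem_univ 1) hmem
    simp only [hfdef, sub_mul, Finset.sum_sub_distrib, e1, e2, sub_self]
  -- the operator `∑ f(x⁻¹) ρ(x)` vanishes on each `V j`
  have hTzero : ∀ j, (∑ x : G, f x⁻¹ • (V j).ρ x) = 0 := by
    intro j
    obtain ⟨c, hc⟩ := exists_smul_eq_of_comm (V j) (∑ x : G, f x⁻¹ • (V j).ρ x)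
      (fun g => classop_comm (V j) (fun x => f x⁻¹) hφ g)
    have htr : LinearMap.trace ℂ (V j) (∑ x : G, f x⁻¹ • (V j).ρ x) = 0 := by
      rw [map_sum]
      have : ∀ x : G, LinearMap.trace ℂ (V j) (f x⁻¹ • (V j).ρ x)
          = f x⁻¹ * (V j).character x := by
        intro x
        rw [map_smul, smul_eq_mul, ← char_eq_trace]
      rw [Finset.sum_congr rfl fun x _ => this x]
      exact horth j
    rw [hc, map_smul, smul_eq_mul, LinearMap.trace_id] at htr
    have hchi := char_one_ne_zero (V j)
    have hc0 : c = 0 := by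
      rcases mul_eq_zero.mp htr with h0 | h0
      · exact h0
      · exfalso; apply hchi; rw [FDRep.char_one]; exact_mod_cast h0
    rw [hc, hc0, zero_smul]
  -- the group-algebra element `z`
  set z : MonoidAlgebra ℂ G := ∑ x : G, f x⁻¹ • MonoidAlgebra.single x (1 : ℂ) with hzdef
  have hzS : ∀ S : Submodule (MonoidAlgebra ℂ G) (MonoidAlgebra ℂ G),
      IsSimpleModule (MonoidAlgebra ℂ G) S → ∀ s ∈ S, z * s = 0 := by
    intro S hS s hs
    haveI := WS_simple S hS
    obtain ⟨j, ⟨e⟩⟩ := hcomplete (WS S) inferInstance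
    set E := FDRep.isoToLinearEquiv e with hEdef
    have hconjρ : ∀ g : G, (V j).ρ g = E.conj ((WS S).ρ g) := fun g => FDRep.Iso.conj_ρ e g
    have hTS : (∑ x : G, f x⁻¹ • (WS S).ρ x) = 0 := by
      have hmap : E.conj (∑ x : G, f x⁻¹ • (WS S).ρ x) = ∑ x : G, f x⁻¹ • (V j).ρ x := by
        rw [map_sum]
        exact Finset.sum_congr rfl fun x _ => by rw [map_smul, ← hconjρ]
      exact (LinearEquiv.map_eq_zero_iff E.conj).mp (hmap.trans (hTzero j))
    have happ := LinearMap.congr_fun hTS ⟨s, hs⟩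
    erw [LinearMap.zero_apply] at happ
    have hcoe : z * s
        = (pS S).subtype ((∑ x : G, f x⁻¹ • (WS S).ρ x) ⟨s, hs⟩) := by
      rw [hzdef, Finset.sum_mul]; erw [LinearMap.sum_apply, map_sum]
      refine Finset.sum_congr rfl fun x _ => ?_
      erw [LinearMap.smul_apply, map_smul, smul_mul_assoc]
      rfl
    rw [hcoe, happ]; rfl
  have hzall : ∀ a : MonoidAlgebra ℂ G, z * a = 0 := by
    intro a
    have ha : a ∈ (⊤ : Submodule (MonoidAlgebra ℂ G) (MonoidAlgebra ℂ G)) := trivial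
    rw [← IsSemisimpleModule.sSup_simples_eq_top (MonoidAlgebra ℂ G) (MonoidAlgebra ℂ G),
      sSup_eq_iSup'] at ha
    exact Submodule.iSup_induction (motive := fun b => z * b = 0) _ ha
      (fun i x hx => hzS i.1 i.2 x hx) (mul_zero z)
      (fun x y hx hy => by
        show z * (x + y) = 0
        rw [mul_add, show z * x = 0 from hx, show z * y = 0 from hy, add_zero])
  have hz0 : z = 0 := by have := hzall 1; rwa [mul_one] at this
  -- extract coefficients
  intro h
  have hval := congrArg (fun w : MonoidAlgebra ℂ G => w.coeff h⁻¹) hz0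
  simp only [hzdef] at hval
  rw [MonoidAlgebra.coeff_sum, Finset.sum_apply'] at hval
  have : ∀ x : G, (f x⁻¹ • MonoidAlgebra.single x (1 : ℂ)).coeff h⁻¹
      = if x = h⁻¹ then f x⁻¹ else 0 := by
    intro x
    rw [MonoidAlgebra.coeff_smul, Finsupp.smul_apply, MonoidAlgebra.coeff_single, Finsupp.single_apply]
    split <;> simp
  rw [Finset.sum_congr rfl fun x _ => this x, Finset.sum_ite_eq' Finset.univ h⁻¹
    (fun x => f x⁻¹), if_pos (Finset.mem_univ _)] at hval
  simpa using hval


lemma step4 (V : FDRep ℂ G) [Simple V] (g : G) :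
    ∑ x : G, V.character x * V.character (x⁻¹ * g)
      = (Fintype.card G : ℂ) * V.character g / V.character 1 := by
  have hrein : ∑ x : G, V.character x * V.character (x⁻¹ * g)
      = ∑ x : G, V.character x⁻¹ * V.character (x * g) :=
    Fintype.sum_equiv (Equiv.inv G) _ _ (fun x => by simp)
  rw [hrein, eq_div_iff (char_one_ne_zero V)]
  have hb := lemB V g
  linear_combination hb

lemma step3 (V : FDRep ℂ G) [Simple V] (g x : G) :
    ∑ y : G, V.character 1 * V.character (g * (y * x * y⁻¹ * x⁻¹))
      = (Fintype.card G : ℂ) * V.character x * V.character (x⁻¹ * g) := by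
  have hterm : ∀ y : G, V.character (g * (y * x * y⁻¹ * x⁻¹))
      = V.character (y * x * y⁻¹ * (x⁻¹ * g)) := by
    intro y
    rw [FDRep.char_mul_comm]
    congr 1
    group
  calc ∑ y : G, V.character 1 * V.character (g * (y * x * y⁻¹ * x⁻¹))
      = V.character 1 * ∑ y : G, V.character (y * x * y⁻¹ * (x⁻¹ * g)) := by
        rw [Finset.mul_sum]
        exact Finset.sum_congr rfl fun y _ => by rw [hterm]
    _ = (Fintype.card G : ℂ) * V.character x * V.character (x⁻¹ * g) := lemA V x (x⁻¹ * g)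

end Frob

open Frob in
/-- Frobenius' formula: for a finite group `G` and `g ∈ G`, the number of pairs
`(x, y)` with `x y x⁻¹ y⁻¹ = g` equals `|G| · Σ_χ χ(g)/χ(1)`, the sum running over the
characters of a complete set of representatives of the isomorphism classes of
finite-dimensional complex irreducible representations of `G`. -/
theorem frobenius_formula {G : Type} [Group G] [Fintype G]
    {ι : Type} [Fintype ι] (V : ι → FDRep ℂ G)
    (hsimple : ∀ i, Simple (V i))
    (hdistinct : ∀ i j : ι, Nonempty (V i ≅ V j) → i = j)
    (hcomplete : ∀ W : FDRep ℂ G, Simple W → ∃ i, Nonempty (W ≅ V i))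
    (g : G) :
    (Nat.card {p : G × G // p.1 * p.2 * p.1⁻¹ * p.2⁻¹ = g} : ℂ) =
      (Fintype.card G : ℂ) * ∑ i, (V i).character g / (V i).character 1 := by
  classical
  have hcard : (Fintype.card G : ℂ) ≠ 0 := Nat.cast_ne_zero.2 Fintype.card_ne_zero
  apply mul_left_cancel₀ hcard
  have hN : ((Nat.card {p : G × G // p.1 * p.2 * p.1⁻¹ * p.2⁻¹ = g}) : ℂ)
      = ∑ x : G, ∑ y : G, (if x * y * x⁻¹ * y⁻¹ = g then (1 : ℂ) else 0) := by
    have h1 : Nat.card {p : G × G // p.1 * p.2 * p.1⁻¹ * p.2⁻¹ = g}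
        = ∑ p : G × G, if p.1 * p.2 * p.1⁻¹ * p.2⁻¹ = g then 1 else 0 := by
      rw [Nat.card_eq_fintype_card, Fintype.card_subtype, Finset.card_filter]
    rw [h1]
    push_cast
    exact Fintype.sum_prod_type _
  calc (Fintype.card G : ℂ) * (Nat.card {p : G × G // p.1 * p.2 * p.1⁻¹ * p.2⁻¹ = g} : ℂ)
      = ∑ x : G, ∑ y : G, (if x * y * x⁻¹ * y⁻¹ = g then (Fintype.card G : ℂ) else 0) := by
        rw [hN, Finset.mul_sum]
        refine Finset.sum_congr rfl fun x _ => ?_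
        rw [Finset.mul_sum]
        refine Finset.sum_congr rfl fun y _ => ?_
        rw [mul_ite, mul_one, mul_zero]
    _ = ∑ x : G, ∑ y : G, (if g * (y * x * y⁻¹ * x⁻¹) = 1 then (Fintype.card G : ℂ) else 0) := by
        refine Finset.sum_congr rfl fun x _ => Finset.sum_congr rfl fun y _ => ?_
        congr 1
        apply propext
        constructor
        · rintro rfl; group
        · intro hh
          have : g = (y * x * y⁻¹ * x⁻¹)⁻¹ := eq_inv_of_mul_eq_one_left hh
          rw [this]; group
    _ = ∑ x : G, ∑ y : G, ∑ i, (V i).character 1 * (V i).character (g * (y * x * y⁻¹ * x⁻¹)) := by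
        refine Finset.sum_congr rfl fun x _ => Finset.sum_congr rfl fun y _ => ?_
        rw [lemR V hsimple hdistinct hcomplete]
    _ = ∑ i, ∑ x : G, ∑ y : G, (V i).character 1 * (V i).character (g * (y * x * y⁻¹ * x⁻¹)) := by
        exact (Finset.sum_congr rfl fun x _ => Finset.sum_comm).trans Finset.sum_comm
    _ = ∑ i, ∑ x : G, (Fintype.card G : ℂ) * (V i).character x * (V i).character (x⁻¹ * g) := by
        refine Finset.sum_congr rfl fun i _ => Finset.sum_congr rfl fun x _ => ?_
        haveI := hsimple i
        exact step3 (V i) g x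
    _ = ∑ i, (Fintype.card G : ℂ) * ((Fintype.card G : ℂ) * (V i).character g
          / (V i).character 1) := by
        refine Finset.sum_congr rfl fun i _ => ?_
        haveI := hsimple i
        rw [← step4 (V i) g, Finset.mul_sum]
        exact Finset.sum_congr rfl fun x _ => by ring
    _ = (Fintype.card G : ℂ) * ((Fintype.card G : ℂ)
          * ∑ i, (V i).character g / (V i).character 1) := by
        rw [Finset.mul_sum, Finset.mul_sum]
        exact Finset.sum_congr rfl fun i _ => by ring
end

section
/- Let G be a compact Hausdorff topological group and let g ∈ G be an element whose conjugacy class {a g a⁻¹ : a ∈ G} is infinite. Then μ²(α⁻¹(g)) = 0. -/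
open MeasureTheory

/-- Haar probability measure on a compact group is conjugation-invariant. -/
lemma conj_map_haar_eq {G : Type*} [Group G]
    [TopologicalSpace G] [IsTopologicalGroup G] [CompactSpace G] [T2Space G]
    [MeasurableSpace G] [BorelSpace G]
    (μ : Measure G) [μ.IsHaarMeasure] [IsProbabilityMeasure μ] (h : G) :
    μ.map (fun x => h * x * h⁻¹) = μ := by
  have hfun : (⇑(MulAut.conj h) : G → G) = fun x => h * x * h⁻¹ := by
    ext x; simp [MulAut.conj_apply]
  have hcont : Continuous (⇑(MulAut.conj h) : G → G) := by
    rw [hfun]; fun_prop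
  have hcont' : Continuous (⇑(MulAut.conj h).symm : G → G) := by
    have : (⇑(MulAut.conj h).symm : G → G) = fun x => h⁻¹ * x * h := by
      ext x; simp [MulAut.conj]
    rw [this]; fun_prop
  have hmap : (μ.map (⇑(MulAut.conj h))).IsHaarMeasure :=
    (MulAut.conj h).isHaarMeasure_map μ hcont hcont'
  have hprob : IsProbabilityMeasure (μ.map (⇑(MulAut.conj h))) :=
    Measure.isProbabilityMeasure_map hcont.measurable.aemeasurable
  have := Measure.isHaarMeasure_eq_of_isProbabilityMeasure (μ.map (⇑(MulAut.conj h))) μ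
  rwa [hfun] at this

/-- In a product of topological spaces with opens-measurable σ-algebras, a compact set can be
separated from a disjoint closed set by a set measurable for the product σ-algebra. -/
lemma exists_measurable_separating {α β : Type*} [TopologicalSpace α] [TopologicalSpace β]
    [MeasurableSpace α] [MeasurableSpace β] [OpensMeasurableSpace α] [OpensMeasurableSpace β]
    {K L : Set (α × β)} (hK : IsCompact K) (hL : IsClosed L) (hd : Disjoint K L) :
    ∃ A : Set (α × β), MeasurableSet A ∧ K ⊆ A ∧ Disjoint A L := by
  have hrect : ∀ p : α × β, p ∈ K → ∃ (U : Set α) (V : Set β),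
      IsOpen U ∧ IsOpen V ∧ p ∈ U ×ˢ V ∧ Disjoint (U ×ˢ V) L := by
    intro p hp
    have hpL : p ∈ Lᶜ := fun hpl => Set.disjoint_left.1 hd hp hpl
    obtain ⟨U, V, hU, hV, hpu, hpv, hsub⟩ := isOpen_prod_iff.1 hL.isOpen_compl p.1 p.2 hpL
    exact ⟨U, V, hU, hV, ⟨hpu, hpv⟩, Set.disjoint_left.2 fun q hq hql => (hsub hq) hql⟩
  choose! U V hR1 hR2 hR3 hR4 using hrect
  obtain ⟨t, ht⟩ := hK.elim_finite_subcover (fun p : K => U p ×ˢ V p)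
    (fun p => ((hR1 p p.2).prod (hR2 p p.2))) (fun q hq => Set.mem_iUnion.2 ⟨⟨q, hq⟩, hR3 q hq⟩)
  refine ⟨⋃ p ∈ t, U (p : α × β) ×ˢ V (p : α × β), ?_, ht, ?_⟩
  · exact t.measurableSet_biUnion fun p _ =>
      ((hR1 p p.2).measurableSet.prod (hR2 p p.2).measurableSet)
  · exact Set.disjoint_left.2 fun q hq hql => by
      obtain ⟨p, _, hqp⟩ := Set.mem_iUnion₂.1 hq
      exact Set.disjoint_left.1 (hR4 p p.2) hqp hql

/-- Finite superadditivity for disjoint compact sets in a product space (even for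
non-measurable sets). -/
lemma sum_measure_compact_le {α β : Type*} [TopologicalSpace α] [TopologicalSpace β]
    [MeasurableSpace α] [MeasurableSpace β] [OpensMeasurableSpace α] [OpensMeasurableSpace β]
    (ρ : Measure (α × β)) {ι : Type*} (K : ι → Set (α × β)) (hK : ∀ i, IsCompact (K i))
    (hcl : ∀ i, IsClosed (K i)) (hd : Pairwise (Function.onFun Disjoint K)) (s : Finset ι) :
    ∑ i ∈ s, ρ (K i) ≤ ρ (⋃ i ∈ s, K i) := by
  classical
  induction s using Finset.induction with
  | empty => simp
  | @insert a s ha ih =>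
    rw [Finset.sum_insert ha]
    have hKs : IsCompact (⋃ i ∈ s, K i) := s.finite_toSet.isCompact_biUnion fun i _ => hK i
    have hdisj : Disjoint (K a) (⋃ i ∈ s, K i) := by
      refine Set.disjoint_left.2 fun q hq hqs => ?_
      obtain ⟨i, hi, hqi⟩ := Set.mem_iUnion₂.1 hqs
      exact Set.disjoint_left.1 (hd (fun h : a = i => ha (h ▸ hi))) hq hqi
    obtain ⟨A, hAm, hKA, hAd⟩ := exists_measurable_separating (hK a)
      (Set.Finite.isClosed_biUnion s.finite_toSet fun i _ => hcl i) hdisj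
    have hsplit := measure_inter_add_diff (μ := ρ) ((K a) ∪ ⋃ i ∈ s, K i) hAm
    have h1 : ρ (K a) ≤ ρ ((K a ∪ ⋃ i ∈ s, K i) ∩ A) :=
      measure_mono fun q hq => ⟨Or.inl hq, hKA hq⟩
    have h2 : ρ (⋃ i ∈ s, K i) ≤ ρ ((K a ∪ ⋃ i ∈ s, K i) \ A) :=
      measure_mono fun q hq => ⟨Or.inr hq, fun hqA => Set.disjoint_left.1 hAd hqA hq⟩
    calc ρ (K a) + ∑ i ∈ s, ρ (K i) ≤ ρ (K a) + ρ (⋃ i ∈ s, K i) := by gcongr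
      _ ≤ ρ ((K a ∪ ⋃ i ∈ s, K i) ∩ A) + ρ ((K a ∪ ⋃ i ∈ s, K i) \ A) := by gcongr
      _ = ρ (K a ∪ ⋃ i ∈ s, K i) := hsplit
      _ = ρ (⋃ i ∈ insert a s, K i) := by rw [Finset.set_biUnion_insert]

/-- For a compact Hausdorff topological group `G` with normalized Haar measure `μ`, if the
conjugacy class of `g` is infinite then the fiber of the commutator map over `g` has
`μ × μ`-measure zero. -/
theorem commutator_fiber_measure_zero_of_infinite_class {G : Type*} [Group G]
    [TopologicalSpace G] [IsTopologicalGroup G] [CompactSpace G] [T2Space G]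
    [MeasurableSpace G] [BorelSpace G]
    (μ : Measure G) [μ.IsHaarMeasure] [IsProbabilityMeasure μ]
    (g : G) (hg : ({x : G | ∃ a : G, a * g * a⁻¹ = x} : Set G).Infinite) :
    (μ.prod μ) {p : G × G | p.1 * p.2 * p.1⁻¹ * p.2⁻¹ = g} = 0 := by
  set F : G → Set (G × G) := fun c => {p : G × G | p.1 * p.2 * p.1⁻¹ * p.2⁻¹ = c} with hF
  have hcomm : Continuous (fun p : G × G => p.1 * p.2 * p.1⁻¹ * p.2⁻¹) := by fun_prop
  have hFcl : ∀ c, IsClosed (F c) := fun c => isClosed_singleton.preimage hcomm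
  have hFcp : ∀ c, IsCompact (F c) := fun c => (hFcl c).isCompact
  -- conjugation measurable equivalence
  have key : ∀ c ∈ ({x : G | ∃ a : G, a * g * a⁻¹ = x} : Set G),
      (μ.prod μ) (F c) = (μ.prod μ) (F g) := by
    rintro c ⟨a, rfl⟩
    have hhomeo : (fun x : G => a * x * a⁻¹) =
        ⇑((Homeomorph.mulLeft a).trans (Homeomorph.mulRight a⁻¹)) := by
      ext x; simp [mul_assoc]
    set e : G ≃ᵐ G := ((Homeomorph.mulLeft a).trans (Homeomorph.mulRight a⁻¹)).toMeasurableEquiv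
      with he
    have hecoe : (⇑e : G → G) = fun x : G => a * x * a⁻¹ := by
      ext x; simp [he, mul_assoc]
    have hconj : μ.map (⇑e) = μ := by rw [hecoe]; exact conj_map_haar_eq μ a
    set φ : (G × G) ≃ᵐ (G × G) := e.prodCongr e with hφ
    have hφcoe : (⇑φ : G × G → G × G) = Prod.map (⇑e) (⇑e) := by
      ext p <;> simp [hφ, MeasurableEquiv.prodCongr, Equiv.prodCongr]
    have hmapprod : (μ.prod μ).map (⇑φ) = μ.prod μ := by
      rw [hφcoe, ← Measure.map_prod_map _ _ e.measurable e.measurable, hconj]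
    have hpre : (⇑φ) ⁻¹' (F (a * g * a⁻¹)) = F g := by
      ext ⟨x, y⟩
      simp only [Set.mem_preimage, hφcoe, Prod.map, hecoe, hF, Set.mem_setOf_eq]
      constructor
      · intro hxy
        have : a * (x * y * x⁻¹ * y⁻¹) * a⁻¹ = a * g * a⁻¹ := by
          rw [← hxy]; group
        exact mul_left_cancel (mul_right_cancel this)
      · intro hxy
        rw [show (a*x*a⁻¹) * (a*y*a⁻¹) * (a*x*a⁻¹)⁻¹ * (a*y*a⁻¹)⁻¹
            = a * (x * y * x⁻¹ * y⁻¹) * a⁻¹ by group, hxy]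
    calc (μ.prod μ) (F (a * g * a⁻¹))
        = ((μ.prod μ).map (⇑φ)) (F (a * g * a⁻¹)) := by rw [hmapprod]
      _ = (μ.prod μ) ((⇑φ) ⁻¹' (F (a * g * a⁻¹))) := φ.map_apply _
      _ = (μ.prod μ) (F g) := by rw [hpre]
  -- countably many elements of the conjugacy class give disjoint fibers of equal measure
  set m := (μ.prod μ) (F g) with hm
  by_contra hne
  obtain ⟨e⟩ : Nonempty (ℕ ↪ ({x : G | ∃ a : G, a * g * a⁻¹ = x} : Set G)) :=
    ⟨hg.natEmbedding⟩
  have hdisj : Pairwise (Function.onFun Disjoint (fun n : ℕ => F ((e n : G)))) := by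
    intro i j hij
    refine Set.disjoint_left.2 fun p hpi hpj => ?_
    exact hij (e.injective (Subtype.ext ((hpi.symm.trans hpj : ((e i : G)) = (e j : G)))))
  have hbound : ∀ N : ℕ, (N : ENNReal) * m ≤ 1 := by
    intro N
    have := sum_measure_compact_le (μ.prod μ) (fun n : ℕ => F ((e n : G)))
      (fun n => hFcp _) (fun n => hFcl _) hdisj (Finset.range N)
    have heq : ∑ n ∈ Finset.range N, (μ.prod μ) (F ((e n : G))) = (N : ENNReal) * m := by
      rw [Finset.sum_congr rfl fun n _ => key _ (e n).2]
      simp [hm, mul_comm]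
    rw [heq] at this
    exact this.trans (prob_le_one)
  have hmne_top : m ≠ ⊤ := by
    intro h
    have := hbound 1
    rw [h] at this
    simp at this
  have hmpos : 0 < m := lt_of_le_of_ne (zero_le) (Ne.symm hne)
  obtain ⟨N, hN⟩ := ENNReal.exists_nat_gt (show (1 : ENNReal) / m ≠ ⊤ by
    simp [ENNReal.div_eq_top, hne])
  have : (1 : ENNReal) < N * m := by
    calc (1 : ENNReal) = (1 / m) * m := by
          rw [ENNReal.div_mul_cancel hne hmne_top]
      _ < N * m := by
          exact ENNReal.mul_lt_mul_left hne hmne_top hN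
  exact absurd (hbound N) (not_le.2 this)
end

section
/- Let G be a connected compact Hausdorff topological group and let g ∈ G be a non-central element. Then μ²(α⁻¹(g)) = 0. -/
open MeasureTheory
open Pointwise
open scoped ENNReal

/-- A proper subgroup with closed carrier of a connected compact group has Haar measure zero. -/
lemma haar_measure_zero_of_proper_closed_subgroup' {G : Type*} [Group G]
    [TopologicalSpace G] [IsTopologicalGroup G] [CompactSpace G] [T2Space G]
    [ConnectedSpace G] [MeasurableSpace G] [BorelSpace G]
    (μ : Measure G) [μ.IsHaarMeasure] [IsProbabilityMeasure μ]
    (H : Subgroup G) (hc : IsClosed (H : Set G)) (hne : H ≠ ⊤) :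
    μ (H : Set G) = 0 := by
  by_contra h0
  have hpos : 0 < μ (H : Set G) := pos_iff_ne_zero.mpr h0
  have hnhds : (H : Set G) / (H : Set G) ∈ nhds (1 : G) :=
    MeasureTheory.Measure.div_mem_nhds_one_of_haar_pos μ (H : Set G) hc.measurableSet hpos
  have hsub : (H : Set G) / (H : Set G) ⊆ (H : Set G) := by
    rintro z ⟨a, ha, b, hb, rfl⟩
    exact H.div_mem ha hb
  have hmem : (H : Set G) ∈ nhds (1 : G) := Filter.mem_of_superset hnhds hsub
  have hopen : IsOpen (H : Set G) := Subgroup.isOpen_of_mem_nhds H hmem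
  have : (H : Set G) = Set.univ :=
    (IsClopen.eq_univ ⟨hc, hopen⟩ ⟨1, H.one_mem⟩)
  exact hne (Subgroup.coe_eq_univ.mp this)

/-- Each section of the commutator fiber over a noncentral element is null. -/
lemma commutator_section_null {G : Type*} [Group G]
    [TopologicalSpace G] [IsTopologicalGroup G] [CompactSpace G] [T2Space G]
    [ConnectedSpace G] [MeasurableSpace G] [BorelSpace G]
    (μ : Measure G) [μ.IsHaarMeasure] [IsProbabilityMeasure μ]
    (g : G) (hg : g ∉ Subgroup.center G) (x : G) :
    μ {y : G | x * y * x⁻¹ * y⁻¹ = g} = 0 := by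
  rcases Set.eq_empty_or_nonempty {y : G | x * y * x⁻¹ * y⁻¹ = g} with he | ⟨y₀, hy₀⟩
  · simp [he]
  · simp only [Set.mem_setOf_eq] at hy₀
    have hx : x ∉ Subgroup.center G := by
      intro hx
      apply hg
      have hcomm : x * y₀ = y₀ * x := (Subgroup.mem_center_iff.mp hx y₀).symm
      have : g = 1 := by rw [← hy₀, hcomm]; group
      rw [this]; exact Subgroup.one_mem _
    have hHne : Subgroup.centralizer {x} ≠ ⊤ := by
      intro htop
      apply hx
      rw [Subgroup.mem_center_iff]
      intro h
      have : h ∈ Subgroup.centralizer {x} := htop ▸ Subgroup.mem_top h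
      exact Subgroup.mem_centralizer_singleton_iff.mp this
    have hHc : IsClosed ((Subgroup.centralizer {x} : Subgroup G) : Set G) := by
      have : ((Subgroup.centralizer {x} : Subgroup G) : Set G) = {k | k * x = x * k} := by
        ext k
        simp [Subgroup.mem_centralizer_singleton_iff]
      rw [this]
      exact isClosed_eq (continuous_id.mul continuous_const)
        (continuous_const.mul continuous_id)
    have hcoset : {y : G | x * y * x⁻¹ * y⁻¹ = g}
        = (fun y => y₀⁻¹ * y) ⁻¹' ((Subgroup.centralizer {x} : Subgroup G) : Set G) := by
      ext y
      simp only [Set.mem_setOf_eq, Set.mem_preimage, SetLike.mem_coe,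
        Subgroup.mem_centralizer_singleton_iff]
      constructor
      · intro h
        have h1 : x * y * x⁻¹ = g * y := by rw [← h]; group
        have h2 : x * y₀ * x⁻¹ = g * y₀ := by rw [← hy₀]; group
        have key : x * (y₀⁻¹ * y) * x⁻¹ = y₀⁻¹ * y := by
          calc x * (y₀⁻¹ * y) * x⁻¹ = (x * y₀ * x⁻¹)⁻¹ * (x * y * x⁻¹) := by group
          _ = (g * y₀)⁻¹ * (g * y) := by rw [h1, h2]
          _ = y₀⁻¹ * y := by group
        calc y₀⁻¹ * y * x = (x * (y₀⁻¹ * y) * x⁻¹) * x := by rw [key]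
        _ = x * (y₀⁻¹ * y) := by group
      · intro h
        have hc : x * (y₀⁻¹ * y) * x⁻¹ = y₀⁻¹ * y := by
          rw [show x * (y₀⁻¹ * y) = y₀⁻¹ * y * x from by rw [← h], mul_inv_cancel_right]
        calc x * y * x⁻¹ * y⁻¹
            = (x * y₀ * x⁻¹ * y₀⁻¹) * (y₀ * ((x * (y₀⁻¹ * y) * x⁻¹) * (y₀⁻¹ * y)⁻¹) * y₀⁻¹) := by
              group
        _ = g := by rw [hc, hy₀]; group
    rw [hcoset, measure_preimage_mul]
    exact haar_measure_zero_of_proper_closed_subgroup' μ _ hHc hHne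

/-- For a connected compact Hausdorff topological group `G` with normalized Haar measure `μ`,
if `g ∈ G` is non-central then the fiber of the commutator map over `g` has
`μ × μ`-measure zero. -/
theorem commutator_fiber_measure_zero_of_noncentral {G : Type*} [Group G]
    [TopologicalSpace G] [IsTopologicalGroup G] [CompactSpace G] [T2Space G]
    [ConnectedSpace G] [MeasurableSpace G] [BorelSpace G]
    (μ : Measure G) [μ.IsHaarMeasure] [IsProbabilityMeasure μ]
    (g : G) (hg : g ∉ Subgroup.center G) :
    (μ.prod μ) {p : G × G | p.1 * p.2 * p.1⁻¹ * p.2⁻¹ = g} = 0 := by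
  set S : Set (G × G) := {p : G × G | p.1 * p.2 * p.1⁻¹ * p.2⁻¹ = g} with hSdef
  have hScl : IsClosed S := by
    have hcont : Continuous fun p : G × G => p.1 * p.2 * p.1⁻¹ * p.2⁻¹ := by fun_prop
    exact isClosed_singleton.preimage hcont
  -- It suffices to show the measure is at most any positive ε.
  have main : ∀ ε : ℝ≥0∞, 0 < ε → (μ.prod μ) S ≤ ε := by
    intro ε hε
    -- For every x, find an open V x ⊇ section with μ (V x) < ε.
    have hsec : ∀ x : G, μ {y : G | x * y * x⁻¹ * y⁻¹ = g} = 0 :=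
      commutator_section_null μ g hg
    have hV : ∀ x : G, ∃ V : Set G, {y : G | x * y * x⁻¹ * y⁻¹ = g} ⊆ V ∧
        IsOpen V ∧ μ V < ε := by
      intro x
      obtain ⟨V, hV1, hV2, hV3⟩ :=
        Set.exists_isOpen_lt_of_lt {y : G | x * y * x⁻¹ * y⁻¹ = g} ε
          (by rw [hsec x]; exact hε)
      exact ⟨V, hV1, hV2, hV3⟩
    choose V hVsub hVopen hVlt using hV
    -- Tube lemma: find open U x ∋ x such that sections over U x land in V x.
    have hU : ∀ x : G, ∃ U : Set G, IsOpen U ∧ x ∈ U ∧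
        ∀ x' ∈ U, ∀ y : G, (x', y) ∈ S → y ∈ V x := by
      intro x
      set K : Set G := Prod.fst '' (S ∩ (Set.univ ×ˢ (V x)ᶜ)) with hKdef
      have hKcomp : IsCompact K := by
        apply IsCompact.image _ continuous_fst
        apply IsClosed.isCompact
        exact hScl.inter (isClosed_univ.prod (hVopen x).isClosed_compl)
      refine ⟨Kᶜ, hKcomp.isClosed.isOpen_compl, ?_, ?_⟩
      · intro hxK
        obtain ⟨⟨a, b⟩, ⟨hab, -, hbV⟩, ha⟩ := hxK
        apply hbV
        apply hVsub x
        have ha' : a = x := ha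
        subst ha'
        exact hab
      · intro x' hx' y hy
        by_contra hyV
        exact hx' ⟨(x', y), ⟨hy, Set.mem_univ _, hyV⟩, rfl⟩
    choose U hUopen hUmem hUprop using hU
    -- Extract a finite subcover of G.
    obtain ⟨t, ht⟩ := isCompact_univ.elim_finite_subcover U hUopen
      (fun x _ => Set.mem_iUnion.mpr ⟨x, hUmem x⟩)
    -- Index by ℕ via a list.
    set l : List G := t.toList with hldef
    set e : ℕ → Set G := fun i => if h : i < l.length then U (l.get ⟨i, h⟩) else ∅ with hedef
    set W : ℕ → Set G := fun i => if h : i < l.length then V (l.get ⟨i, h⟩) else ∅ with hWdef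
    have he_meas : ∀ i, MeasurableSet (e i) := by
      intro i
      by_cases h : i < l.length
      · simp only [hedef, dif_pos h]; exact (hUopen _).measurableSet
      · simp only [hedef, dif_neg h]; exact MeasurableSet.empty
    have hW_meas : ∀ i, MeasurableSet (W i) := by
      intro i
      by_cases h : i < l.length
      · simp only [hWdef, dif_pos h]; exact (hVopen _).measurableSet
      · simp only [hWdef, dif_neg h]; exact MeasurableSet.empty
    have hW_lt : ∀ i, μ (W i) ≤ ε := by
      intro i
      by_cases h : i < l.length
      · simp only [hWdef, dif_pos h]; exact (hVlt _).le
      · simp only [hWdef, dif_neg h, measure_empty]; exact zero_le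
    -- cover of univ by e
    have hcover : (Set.univ : Set G) ⊆ ⋃ i, e i := by
      intro x hx
      obtain ⟨z, hzt, hzU⟩ := Set.mem_iUnion₂.mp (ht hx)
      have hzl : z ∈ l := by
        rw [hldef]; exact Finset.mem_toList.mpr hzt
      obtain ⟨i, hget⟩ := List.mem_iff_get.mp hzl
      refine Set.mem_iUnion.mpr ⟨(i : ℕ), ?_⟩
      simp only [hedef, dif_pos i.isLt]
      have heq : l.get ⟨(i : ℕ), i.isLt⟩ = z := by simpa using hget
      rw [heq]
      exact hzU
    -- disjointize
    set D : ℕ → Set G := disjointed e with hDdef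
    have hD_meas : ∀ i, MeasurableSet (D i) := MeasurableSet.disjointed he_meas
    have hD_disj : Pairwise (Function.onFun Disjoint D) := disjoint_disjointed e
    have hD_sub : ∀ i, D i ⊆ e i := fun i => disjointed_subset e i
    have hD_cover : (Set.univ : Set G) ⊆ ⋃ i, D i := by
      rw [hDdef, iUnion_disjointed]; exact hcover
    -- The covering set T
    set T : Set (G × G) := ⋃ i, (D i) ×ˢ (W i) with hTdef
    have hST : S ⊆ T := by
      rintro ⟨x, y⟩ hxy
      obtain ⟨i, hi⟩ := Set.mem_iUnion.mp (hD_cover (Set.mem_univ x))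
      have hxe : x ∈ e i := hD_sub i hi
      have hlen : i < l.length := by
        by_contra h
        simp only [hedef, dif_neg h] at hxe
        exact hxe
      simp only [hedef, dif_pos hlen] at hxe
      have hyW : y ∈ W i := by
        simp only [hWdef, dif_pos hlen]
        exact hUprop _ _ hxe y hxy
      exact Set.mem_iUnion.mpr ⟨i, hi, hyW⟩
    calc (μ.prod μ) S ≤ (μ.prod μ) T := measure_mono hST
    _ ≤ ∑' i, (μ.prod μ) ((D i) ×ˢ (W i)) := measure_iUnion_le _
    _ = ∑' i, μ (D i) * μ (W i) := by
        congr 1; funext i; exact Measure.prod_prod _ _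
    _ ≤ ∑' i, μ (D i) * ε := by
        apply ENNReal.tsum_le_tsum
        intro i
        exact mul_le_mul_right (hW_lt i) _
    _ = (∑' i, μ (D i)) * ε := by rw [ENNReal.tsum_mul_right]
    _ = μ (⋃ i, D i) * ε := by rw [measure_iUnion hD_disj hD_meas]
    _ ≤ 1 * ε := by
        apply mul_le_mul_left
        exact (measure_mono (Set.subset_univ _)).trans (by simp)
    _ = ε := one_mul ε
  refine le_antisymm ?_ zero_le
  refine ENNReal.le_of_forall_pos_le_add (fun ε hε _ => ?_)
  simpa using main ε (by exact_mod_cast hε)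
end

section
/- Let n ≥ 2 and let ζ be an n-th root of unity with ζ ≠ 1. Then the set {a ∈ SU(n) : there exists b ∈ SU(n) with a b a⁻¹ b⁻¹ = ζ·I} has normalized Haar measure zero in SU(n). -/
open MeasureTheory

/-- The special unitary group `SU(n)`: the subgroup of the unitary group
`Matrix.unitaryGroup (Fin n) ℂ` consisting of matrices of determinant `1`. -/
def SU (n : ℕ) : Subgroup (Matrix.unitaryGroup (Fin n) ℂ) where
  carrier := {A | (A : Matrix (Fin n) (Fin n) ℂ).det = 1}
  one_mem' := by simp
  mul_mem' := by
    intro a b ha hb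
    simp only [Set.mem_setOf_eq, Submonoid.coe_mul, Matrix.det_mul] at *
    rw [ha, hb, mul_one]
  inv_mem' := by
    intro a ha
    simp only [Set.mem_setOf_eq] at *
    have : ((a⁻¹ : Matrix.unitaryGroup (Fin n) ℂ) : Matrix (Fin n) (Fin n) ℂ)
        = star (a : Matrix (Fin n) (Fin n) ℂ) := rfl
    rw [this]
    show Matrix.det (Matrix.conjTranspose (a : Matrix (Fin n) (Fin n) ℂ)) = 1
    rw [Matrix.det_conjTranspose, ha, star_one]

noncomputable instance (n : ℕ) : MeasurableSpace (SU n) := borel (SU n)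

instance (n : ℕ) : BorelSpace (SU n) := ⟨rfl⟩

namespace SUaux

variable {n : ℕ}

def coeM (a : SU n) : Matrix (Fin n) (Fin n) ℂ := ((a : Matrix.unitaryGroup (Fin n) ℂ) : Matrix (Fin n) (Fin n) ℂ)

lemma coeM_mul (a b : SU n) : coeM (a * b) = coeM a * coeM b := rfl

lemma isInducing_coeM : Topology.IsInducing (coeM (n := n)) :=
  Topology.IsInducing.subtypeVal.comp Topology.IsInducing.subtypeVal

lemma continuous_coeM : Continuous (coeM (n := n)) := isInducing_coeM.continuous

instance : ContinuousMul (SU n) := by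
  constructor
  rw [isInducing_coeM.continuous_iff]
  exact (continuous_coeM.comp continuous_fst).matrix_mul (continuous_coeM.comp continuous_snd)

instance : MeasurableMul (SU n) :=
  ⟨fun c => (continuous_mul_left c).measurable, fun c => (continuous_mul_right c).measurable⟩

lemma countable_exp_fiber (z : ℂ) :
    {θ : ℝ | Complex.exp (θ * Complex.I) = z}.Countable := by
  by_cases h : ∃ θ₀ : ℝ, Complex.exp (θ₀ * Complex.I) = z
  · obtain ⟨θ₀, h₀⟩ := h
    apply Set.Countable.mono _ (Set.countable_range fun k : ℤ => θ₀ + k * (2 * Real.pi))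
    intro θ hθ
    simp only [Set.mem_setOf_eq] at hθ
    rw [← h₀, Complex.exp_eq_exp_iff_exists_int] at hθ
    obtain ⟨k, hk⟩ := hθ
    have hc : (θ : ℂ) = ((θ₀ + k * (2 * Real.pi) : ℝ) : ℂ) := by
      push_cast
      apply mul_right_cancel₀ Complex.I_ne_zero
      rw [hk]; ring
    have hr : θ = θ₀ + k * (2 * Real.pi) := by exact_mod_cast hc
    exact ⟨k, hr.symm⟩
  · exact Set.Countable.mono (fun θ hθ => (h ⟨θ, hθ⟩).elim) Set.countable_empty

lemma countable_quad {A B C : ℂ} (h : ¬(A = 0 ∧ B = 0 ∧ C = 0)) :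
    {θ : ℝ | A * Complex.exp (θ * Complex.I) ^ 2 + B * Complex.exp (θ * Complex.I) + C = 0}.Countable := by
  classical
  set p : Polynomial ℂ := Polynomial.C A * Polynomial.X ^ 2 + Polynomial.C B * Polynomial.X + Polynomial.C C with hp
  have hpne : p ≠ 0 := by
    intro h0
    apply h
    refine ⟨?_, ?_, ?_⟩
    · have := congrArg (Polynomial.coeff · 2) h0; simpa [hp, Polynomial.coeff_add] using this
    · have := congrArg (Polynomial.coeff · 1) h0; simpa [hp, Polynomial.coeff_add] using this
    · have := congrArg (Polynomial.coeff · 0) h0; simpa [hp, Polynomial.coeff_add] using this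
  have hfin : Set.Finite {z : ℂ | p.IsRoot z} := Polynomial.finite_setOf_isRoot hpne
  have hsub : {θ : ℝ | A * Complex.exp (θ * Complex.I) ^ 2 + B * Complex.exp (θ * Complex.I) + C = 0}
      ⊆ ⋃ z ∈ {z : ℂ | p.IsRoot z}, {θ : ℝ | Complex.exp (θ * Complex.I) = z} := by
    intro θ hθ
    simp only [Set.mem_setOf_eq] at hθ
    refine Set.mem_biUnion (?_ : p.IsRoot (Complex.exp (θ * Complex.I))) rfl
    simp [hp, Polynomial.IsRoot, hθ]
  exact Set.Countable.mono hsub (hfin.countable.biUnion fun z _ => countable_exp_fiber z)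


variable {G : Type*} [Group G] [TopologicalSpace G] [MeasurableSpace G] [BorelSpace G]
  [ContinuousMul G] [MeasurableMul G]

lemma key (μ : Measure G) [μ.IsMulLeftInvariant] [IsProbabilityMeasure μ]
    (S T : Set G) (hS : MeasurableSet S) (hT : MeasurableSet T)
    (t : ℝ → G) (ht : Continuous t)
    (hslice : ∀ a : G, a ∉ T → {θ : ℝ | t θ * a ∈ S}.Countable) :
    μ S ≤ μ T := by
  set ν : Measure ℝ := volume.restrict (Set.Icc (0:ℝ) 1) with hν
  have hν1 : ν Set.univ = 1 := by
    simp [hν, Measure.restrict_apply_univ, Real.volume_Icc]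
  set W : Set (ℝ × G) := {p | t p.1 * p.2 ∈ S} with hW
  have hWm : MeasurableSet W := by
    have hc : Continuous fun p : ℝ × G => t p.1 * p.2 :=
      (ht.comp continuous_fst).mul continuous_snd
    exact hS.preimage hc.measurable
  have h1 : (ν.prod μ) W = μ S := by
    rw [Measure.prod_apply hWm]
    have heq : ∀ θ : ℝ, μ (Prod.mk θ ⁻¹' W) = μ S := fun θ =>
      measure_preimage_mul μ (t θ) S
    simp_rw [heq]
    rw [lintegral_const, hν1, mul_one]
  have h2 : (ν.prod μ) W ≤ μ T := by
    rw [Measure.prod_apply_symm hWm]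
    calc ∫⁻ a, ν ((fun θ => (θ, a)) ⁻¹' W) ∂μ
        ≤ ∫⁻ a, T.indicator 1 a ∂μ := by
          apply lintegral_mono
          intro a
          by_cases haT : a ∈ T
          · simpa [haT] using (measure_mono (Set.subset_univ _)).trans_eq hν1
          · have hcnt : ({θ : ℝ | t θ * a ∈ S}).Countable := hslice a haT
            have : ν ((fun θ => (θ, a)) ⁻¹' W) = 0 := by
              have hsub : ((fun θ => (θ, a)) ⁻¹' W) = {θ : ℝ | t θ * a ∈ S} := rfl
              rw [hsub]
              exact hcnt.measure_zero ν
            simp [this, haT]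
      _ = μ T := by rw [lintegral_indicator_one hT]
  exact h1 ▸ h2

section
variable {n : ℕ}


abbrev E (i j : Fin n) : Matrix (Fin n) (Fin n) ℂ := Matrix.single i j (1:ℂ)

lemma star_E (i j : Fin n) : star (E i j) = E j i := by
  ext p q
  simp [Matrix.conjTranspose_apply, Matrix.single, Matrix.of_apply, and_comm,
    apply_ite (starRingEnd ℂ)]

noncomputable def rmat (a b : Fin n) (θ : ℝ) : Matrix (Fin n) (Fin n) ℂ :=
  1 + ((Real.cos θ : ℂ) - 1) • (E a a + E b b) + (Real.sin θ : ℂ) • (E b a - E a b)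

variable {a b : Fin n} (hab : a ≠ b)

lemma star_rmat (θ : ℝ) : star (rmat a b θ) =
    1 + ((Real.cos θ : ℂ) - 1) • (E a a + E b b) - (Real.sin θ : ℂ) • (E b a - E a b) := by
  simp only [rmat, star_add, star_smul, star_sub, star_one, star_E]
  rw [show star ((Real.cos θ : ℂ)) = ((Real.cos θ : ℂ)) from Complex.conj_ofReal _,
      show star ((Real.sin θ : ℂ)) = ((Real.sin θ : ℂ)) from Complex.conj_ofReal _]
  module

include hab in
lemma rmat_mul_star (θ : ℝ) : rmat a b θ * star (rmat a b θ) = 1 := by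
  rw [star_rmat]
  set x : ℂ := ((Real.cos θ : ℂ) - 1) with hx
  set y : ℂ := ((Real.sin θ : ℂ)) with hy
  set P : Matrix (Fin n) (Fin n) ℂ := E a a + E b b with hP
  set J : Matrix (Fin n) (Fin n) ℂ := E b a - E a b with hJ
  have hPP : P * P = P := by
    simp only [hP, add_mul, mul_add, Matrix.single_mul_single_same,
      Matrix.single_mul_single_of_ne _ _ _ _ hab, Matrix.single_mul_single_of_ne _ _ _ _ hab.symm,
      one_mul, add_zero, zero_add]
  have hPJ : P * J = J := by
    simp only [hP, hJ, add_mul, mul_add, mul_sub, sub_mul, Matrix.single_mul_single_same,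
      Matrix.single_mul_single_of_ne _ _ _ _ hab, Matrix.single_mul_single_of_ne _ _ _ _ hab.symm,
      one_mul, sub_zero, zero_sub, add_zero, zero_add]
  have hJP : J * P = J := by
    simp only [hP, hJ, add_mul, mul_add, mul_sub, sub_mul, Matrix.single_mul_single_same,
      Matrix.single_mul_single_of_ne _ _ _ _ hab, Matrix.single_mul_single_of_ne _ _ _ _ hab.symm,
      one_mul, sub_zero, zero_sub, add_zero, zero_add]
    abel
  have hJJ : J * J = -P := by
    simp only [hJ, hP, mul_sub, sub_mul, Matrix.single_mul_single_same,
      Matrix.single_mul_single_of_ne _ _ _ _ hab, Matrix.single_mul_single_of_ne _ _ _ _ hab.symm,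
      one_mul, sub_zero, zero_sub]
    abel
  have hcoef : x * x + 2 * x + y * y = 0 := by
    have hcs : (Real.cos θ : ℂ) ^ 2 + (Real.sin θ : ℂ) ^ 2 = 1 := by
      exact_mod_cast congrArg Complex.ofReal (Real.cos_sq_add_sin_sq θ)
    rw [hx, hy]; linear_combination hcs
  have expand : (1 + x • P + y • J) * (1 + x • P - y • J)
      = 1 + (x * x + 2 * x + y * y) • P + (y * x - x * y) • J := by
    simp only [mul_add, add_mul, mul_sub, sub_mul, one_mul, mul_one,
      Matrix.smul_mul, Matrix.mul_smul, hPP, hPJ, hJP, hJJ, smul_smul]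
    module
  rw [rmat, expand, hcoef, show y * x - x * y = 0 by ring]
  simp

end

section more
variable {n : ℕ} {a b : Fin n} (hab : a ≠ b)



lemma transpose_E (i j : Fin n) : Matrix.transpose (E i j) = E j i := by
  ext p q
  simp [Matrix.transpose_apply, Matrix.single, Matrix.of_apply, and_comm]

lemma star_rmat_eq_transpose (θ : ℝ) : star (rmat a b θ) = Matrix.transpose (rmat a b θ) := by
  rw [star_rmat, rmat]
  simp only [Matrix.transpose_add, Matrix.transpose_smul, Matrix.transpose_one,
    Matrix.transpose_sub, transpose_E]
  module

lemma continuous_rmat : Continuous fun θ => rmat a b θ := by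
  unfold rmat
  fun_prop

include hab in
lemma det_rmat (θ : ℝ) : (rmat a b θ).det = 1 := by
  have hsq : ∀ σ : ℝ, (rmat a b σ).det = 1 ∨ (rmat a b σ).det = -1 := by
    intro σ
    have h1 : (rmat a b σ).det * (rmat a b σ).det = 1 := by
      have h := congrArg Matrix.det (rmat_mul_star hab σ)
      rw [Matrix.det_mul, Matrix.det_one, star_rmat_eq_transpose, Matrix.det_transpose] at h
      exact h
    have h2 : ((rmat a b σ).det - 1) * ((rmat a b σ).det + 1) = 0 := by linear_combination h1
    rcases mul_eq_zero.mp h2 with h | h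
    · left; linear_combination h
    · right; linear_combination h
  have hcont : Continuous fun σ : ℝ => (rmat a b σ).det := continuous_rmat.matrix_det
  have hU : IsClopen {σ : ℝ | (rmat a b σ).det = 1} := by
    constructor
    · exact isClosed_eq hcont continuous_const
    · have : {σ : ℝ | (rmat a b σ).det = 1} = {σ : ℝ | (rmat a b σ).det = -1}ᶜ := by
        ext σ
        simp only [Set.mem_setOf_eq, Set.mem_compl_iff]
        constructor
        · intro h h'; rw [h] at h'; norm_num at h'
        · intro h; rcases hsq σ with h' | h'
          · exact h'
          · exact absurd h' h
      rw [this]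
      exact (isClosed_eq hcont continuous_const).isOpen_compl
  have h0 : (0:ℝ) ∈ {σ : ℝ | (rmat a b σ).det = 1} := by
    simp [rmat, Real.cos_zero, Real.sin_zero]
  have := hU.eq_univ ⟨0, h0⟩
  exact (Set.eq_univ_iff_forall.mp this θ)

include hab in
lemma rmat_mem_unitary (θ : ℝ) : rmat a b θ ∈ Matrix.unitaryGroup (Fin n) ℂ :=
  (Matrix.mem_unitaryGroup_iff).mpr (rmat_mul_star hab θ)

-- entries of rmat * A
lemma rmat_mul_apply_of_ne (θ : ℝ) (A : Matrix (Fin n) (Fin n) ℂ) {j : Fin n}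
    (hja : j ≠ a) (hjb : j ≠ b) (i : Fin n) :
    (rmat a b θ * A) j i = A j i := by
  have h1 : (E a a * A) j i = 0 := Matrix.single_mul_apply_of_ne 1 a a j i hja A
  have h2 : (E b b * A) j i = 0 := Matrix.single_mul_apply_of_ne 1 b b j i hjb A
  have h3 : (E b a * A) j i = 0 := Matrix.single_mul_apply_of_ne 1 b a j i hjb A
  have h4 : (E a b * A) j i = 0 := Matrix.single_mul_apply_of_ne 1 a b j i hja A
  simp only [rmat, add_mul, one_mul, Matrix.smul_mul, sub_mul, Matrix.add_apply,
    Matrix.smul_apply, Matrix.sub_apply, smul_eq_mul, h1, h2, h3, h4]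
  ring

lemma rmat_mul_apply_fst (θ : ℝ) (A : Matrix (Fin n) (Fin n) ℂ) (hab : a ≠ b) (i : Fin n) :
    (rmat a b θ * A) a i = (Real.cos θ : ℂ) * A a i - (Real.sin θ : ℂ) * A b i := by
  have h1 : (E a a * A) a i = 1 * A a i := Matrix.single_mul_apply_same 1 a a i A
  have h2 : (E b b * A) a i = 0 := Matrix.single_mul_apply_of_ne 1 b b a i hab A
  have h3 : (E b a * A) a i = 0 := Matrix.single_mul_apply_of_ne 1 b a a i hab A
  have h4 : (E a b * A) a i = 1 * A b i := Matrix.single_mul_apply_same 1 a b i A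
  simp only [rmat, add_mul, one_mul, Matrix.smul_mul, sub_mul, Matrix.add_apply,
    Matrix.smul_apply, Matrix.sub_apply, smul_eq_mul, h1, h2, h3, h4]
  ring


end more

section dpart
variable {n : ℕ}


noncomputable def dvec (n : ℕ) (θ : ℝ) : Fin n → ℂ := fun i =>
  if (i : ℕ) = 0 then Complex.exp (θ * Complex.I)
  else if (i : ℕ) = 1 then Complex.exp (-(θ * Complex.I)) else 1

noncomputable def dmat (n : ℕ) (θ : ℝ) : Matrix (Fin n) (Fin n) ℂ :=
  Matrix.diagonal (dvec n θ)

lemma dvec_mul_star (θ : ℝ) (i : Fin n) : dvec n θ i * star (dvec n θ i) = 1 := by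
  unfold dvec
  have h1 : star (Complex.exp (θ * Complex.I)) = Complex.exp (-(θ * Complex.I)) := by
    rw [Complex.star_def, ← Complex.exp_conj]
    congr 1
    simp [Complex.conj_I, Complex.conj_ofReal]
  have h2 : star (Complex.exp (-(θ * Complex.I))) = Complex.exp (θ * Complex.I) := by
    rw [Complex.star_def, ← Complex.exp_conj]
    congr 1
    simp [Complex.conj_I, Complex.conj_ofReal]
  split_ifs with hi0 hi1
  · rw [h1, ← Complex.exp_add]; simp
  · rw [h2, ← Complex.exp_add]; simp
  · simp

lemma dmat_mem_unitary (θ : ℝ) : dmat n θ ∈ Matrix.unitaryGroup (Fin n) ℂ := by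
  rw [Matrix.mem_unitaryGroup_iff]
  have : star (dmat n θ) = Matrix.diagonal (fun i => star (dvec n θ i)) := by
    unfold dmat
    rw [show (star (Matrix.diagonal (dvec n θ)) : Matrix (Fin n) (Fin n) ℂ)
        = Matrix.conjTranspose (Matrix.diagonal (dvec n θ)) from rfl,
      Matrix.diagonal_conjTranspose]
    rfl
  rw [this]
  unfold dmat
  rw [Matrix.diagonal_mul_diagonal, ← Matrix.diagonal_one]
  exact congrArg Matrix.diagonal (funext fun i => dvec_mul_star θ i)

lemma dmat_det (hn : 2 ≤ n) (θ : ℝ) : (dmat n θ).det = 1 := by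
  have h0 : (0:ℕ) < n := by omega
  have h1 : (1:ℕ) < n := by omega
  set i0 : Fin n := ⟨0, h0⟩
  set i1 : Fin n := ⟨1, h1⟩
  have hne : i1 ≠ i0 := by simp [i0, i1, Fin.ext_iff]
  unfold dmat
  rw [Matrix.det_diagonal]
  rw [← Finset.mul_prod_erase _ _ (Finset.mem_univ i0),
    ← Finset.mul_prod_erase _ _ (Finset.mem_erase.mpr ⟨hne, Finset.mem_univ i1⟩)]
  have hrest : ∀ i ∈ (Finset.univ.erase i0).erase i1, dvec n θ i = 1 := by
    intro i hi
    have hi1 : i ≠ i1 := (Finset.mem_erase.mp hi).1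
    have hi0 : i ≠ i0 := (Finset.mem_erase.mp (Finset.mem_erase.mp hi).2).1
    have v0 : (i : ℕ) ≠ 0 := fun h => hi0 (Fin.ext h)
    have v1 : (i : ℕ) ≠ 1 := fun h => hi1 (Fin.ext h)
    simp [dvec, v0, v1]
  rw [Finset.prod_congr rfl hrest]
  simp only [dvec, i0, i1]
  norm_num
  rw [← Complex.exp_add]
  simp

lemma continuous_dmat : Continuous fun θ => dmat n θ := by
  unfold dmat
  apply Continuous.matrix_diagonal
  apply continuous_pi
  intro i
  unfold dvec
  split_ifs with h1 h2
  · fun_prop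
  · fun_prop
  · fun_prop


end dpart

section bundled
variable {n : ℕ}

noncomputable def dSU (hn : 2 ≤ n) (θ : ℝ) : SU n :=
  ⟨⟨dmat n θ, dmat_mem_unitary θ⟩, dmat_det hn θ⟩

lemma continuous_dSU (hn : 2 ≤ n) : Continuous fun θ => dSU hn θ :=
  (continuous_dmat.subtype_mk _).subtype_mk _

lemma coeM_dSU_mul (hn : 2 ≤ n) (θ : ℝ) (a : SU n) :
    coeM (dSU hn θ * a) = dmat n θ * coeM a := rfl

noncomputable def rSU {a b : Fin n} (hab : a ≠ b) (θ : ℝ) : SU n :=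
  ⟨⟨rmat a b θ, rmat_mem_unitary hab θ⟩, det_rmat hab θ⟩

lemma continuous_rSU {a b : Fin n} (hab : a ≠ b) : Continuous fun θ => rSU hab θ :=
  (continuous_rmat.subtype_mk _).subtype_mk _

lemma coeM_rSU_mul {a b : Fin n} (hab : a ≠ b) (θ : ℝ) (c : SU n) :
    coeM (rSU hab θ * c) = rmat a b θ * coeM c := rfl

def colSet (i0 : Fin n) (m : ℕ) : Set (SU n) :=
  {a | ∀ j : Fin n, (j : ℕ) < m → coeM a j i0 = 0}

lemma measurableSet_colSet (i0 : Fin n) (m : ℕ) : MeasurableSet (colSet i0 m) := by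
  have hclosed : IsClosed (colSet i0 m) := by
    have : colSet i0 m = ⋂ j : Fin n, {a : SU n | (j : ℕ) < m → coeM a j i0 = 0} := by
      ext a; simp [colSet, Set.mem_iInter]
    rw [this]
    apply isClosed_iInter
    intro j
    by_cases hj : (j : ℕ) < m
    · simp only [hj, forall_true_left]
      exact isClosed_eq ((continuous_coeM.matrix_elem j i0)) continuous_const
    · simp only [hj, false_implies]
      exact isClosed_univ
  exact hclosed.measurableSet

lemma measurableSet_traceSet :
    MeasurableSet {a : SU n | (coeM a).trace = 0} :=
  (isClosed_eq (continuous_coeM.matrix_trace) continuous_const).measurableSet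

end bundled

section steps
variable {n : ℕ}

lemma trace_dmat_mul (hn : 2 ≤ n) (θ : ℝ) (A : Matrix (Fin n) (Fin n) ℂ) :
    (dmat n θ * A).trace =
      Complex.exp (θ * Complex.I) * A ⟨0, by omega⟩ ⟨0, by omega⟩
      + ((Finset.univ.erase (⟨0, by omega⟩ : Fin n)).erase ⟨1, by omega⟩).sum (fun i => A i i)
      + Complex.exp (-(θ * Complex.I)) * A ⟨1, by omega⟩ ⟨1, by omega⟩ := by
  have h0 : (0:ℕ) < n := by omega
  have h1 : (1:ℕ) < n := by omega
  set i0 : Fin n := ⟨0, h0⟩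
  set i1 : Fin n := ⟨1, h1⟩
  have hne : i1 ≠ i0 := by simp [i0, i1, Fin.ext_iff]
  have htr : (dmat n θ * A).trace = ∑ i : Fin n, dvec n θ i * A i i := by
    unfold Matrix.trace
    congr 1
    funext i
    simp [Matrix.diag, dmat, Matrix.diagonal_mul]
  rw [htr, ← Finset.add_sum_erase _ _ (Finset.mem_univ i0),
    ← Finset.add_sum_erase _ _ (Finset.mem_erase.mpr ⟨hne, Finset.mem_univ i1⟩)]
  have hrest : ∀ i ∈ (Finset.univ.erase i0).erase i1, dvec n θ i * A i i = A i i := by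
    intro i hi
    have hi1 : i ≠ i1 := (Finset.mem_erase.mp hi).1
    have hi0 : i ≠ i0 := (Finset.mem_erase.mp (Finset.mem_erase.mp hi).2).1
    have v0 : (i : ℕ) ≠ 0 := fun h => hi0 (Fin.ext h)
    have v1 : (i : ℕ) ≠ 1 := fun h => hi1 (Fin.ext h)
    simp [dvec, v0, v1]
  rw [Finset.sum_congr rfl hrest]
  have hd0 : dvec n θ i0 = Complex.exp (θ * Complex.I) := by simp [dvec, i0]
  have hd1 : dvec n θ i1 = Complex.exp (-(θ * Complex.I)) := by simp [dvec, i1]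
  rw [hd0, hd1]
  ring

lemma step_trace (hn : 2 ≤ n) (μ : Measure (SU n)) [μ.IsHaarMeasure] [IsProbabilityMeasure μ] :
    μ {a : SU n | (coeM a).trace = 0} ≤ μ (colSet (⟨0, by omega⟩ : Fin n) 1) := by
  have h0 : (0:ℕ) < n := by omega
  have h1 : (1:ℕ) < n := by omega
  set i0 : Fin n := ⟨0, h0⟩
  set i1 : Fin n := ⟨1, h1⟩
  apply key μ _ _ measurableSet_traceSet (measurableSet_colSet i0 1) (fun θ => dSU hn θ)
    (continuous_dSU hn)
  intro a ha
  have hA : coeM a i0 i0 ≠ 0 := by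
    intro h
    apply ha
    intro j hj
    have : j = i0 := by
      apply Fin.ext
      simp only [i0]
      omega
    rwa [this]
  set B : ℂ := ((Finset.univ.erase i0).erase i1).sum (fun i => coeM a i i) with hB
  apply Set.Countable.mono _ (countable_quad
    (A := coeM a i0 i0) (B := B) (C := coeM a i1 i1) (by tauto))
  intro θ hθ
  simp only [Set.mem_setOf_eq] at hθ ⊢
  have htr : (coeM (dSU hn θ * a)).trace = 0 := hθ
  rw [coeM_dSU_mul, trace_dmat_mul hn] at htr
  set u : ℂ := Complex.exp (θ * Complex.I) with hu
  set v : ℂ := Complex.exp (-(θ * Complex.I)) with hv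
  have huv : u * v = 1 := by
    rw [hu, hv, ← Complex.exp_add]
    simp
  linear_combination u * htr - (coeM a i1 i1) * huv

end steps

section steps2
variable {n : ℕ}

lemma step_col (hn : 2 ≤ n) (μ : Measure (SU n)) [μ.IsHaarMeasure] [IsProbabilityMeasure μ]
    (m : ℕ) (h1 : 1 ≤ m) (hm : m < n) :
    μ (colSet (⟨0, by omega⟩ : Fin n) m) ≤ μ (colSet (⟨0, by omega⟩ : Fin n) (m+1)) := by
  have h0 : (0:ℕ) < n := by omega
  set i0 : Fin n := ⟨0, h0⟩
  set am : Fin n := ⟨m - 1, by omega⟩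
  set bm : Fin n := ⟨m, hm⟩
  have hab : am ≠ bm := by
    simp only [am, bm, ne_eq, Fin.mk.injEq]
    omega
  apply key μ _ _ (measurableSet_colSet i0 m) (measurableSet_colSet i0 (m+1)) (rSU hab)
    (continuous_rSU hab)
  intro a ha
  by_cases hcase : ∀ j : Fin n, (j : ℕ) < m - 1 → coeM a j i0 = 0
  · set x : ℂ := coeM a am i0 with hx
    set y : ℂ := coeM a bm i0 with hy
    have hxy : ¬(x + Complex.I * y = 0 ∧ (0:ℂ) = 0 ∧ x - Complex.I * y = 0) := by
      rintro ⟨hA, -, hC⟩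
      have hx0 : x = 0 := by linear_combination (hA + hC) / 2
      have hy0 : y = 0 := by
        have h2y : 2 * Complex.I * y = 0 := by linear_combination hA - hC
        have h2I : (2 : ℂ) * Complex.I ≠ 0 := by
          simp [Complex.I_ne_zero]
        exact (mul_eq_zero.mp h2y).elim (fun h => absurd h h2I) id
      apply ha
      intro j hj
      rcases lt_trichotomy ((j:ℕ)) (m-1) with hlt | heq | hgt
      · exact hcase j hlt
      · have : j = am := by apply Fin.ext; simp only [am]; omega
        rw [this, ← hx]; exact hx0
      · have : j = bm := by apply Fin.ext; simp only [bm]; omega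
        rw [this, ← hy]; exact hy0
    apply Set.Countable.mono _ (countable_quad
      (A := x + Complex.I * y) (B := (0:ℂ)) (C := x - Complex.I * y) hxy)
    intro θ hθ
    simp only [Set.mem_setOf_eq] at hθ ⊢
    have hmem : rSU hab θ * a ∈ colSet i0 m := hθ
    have h0' : coeM (rSU hab θ * a) am i0 = 0 := by
      apply hmem
      simp only [am]
      omega
    rw [coeM_rSU_mul, rmat_mul_apply_fst _ _ hab] at h0'
    set u : ℂ := Complex.exp (θ * Complex.I) with hu
    set w : ℂ := Complex.exp (-(θ:ℂ) * Complex.I) with hw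
    have huv : u * w = 1 := by
      rw [hu, hw, ← Complex.exp_add]
      ring_nf
      exact Complex.exp_zero
    have hcos : (Real.cos θ : ℂ) = (u + w) / 2 := by
      rw [Complex.ofReal_cos]; rfl
    have hsin : (Real.sin θ : ℂ) = (w - u) * Complex.I / 2 := by
      rw [Complex.ofReal_sin]; rfl
    rw [hcos, hsin] at h0'
    linear_combination (2 * u) * h0' - (x - Complex.I * y) * huv
  · push_neg at hcase
    obtain ⟨j, hj, hne⟩ := hcase
    apply Set.Countable.mono _ Set.countable_empty
    intro θ hθ
    exfalso
    simp only [Set.mem_setOf_eq] at hθ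
    have hmem : rSU hab θ * a ∈ colSet i0 m := hθ
    have hja : j ≠ am := by
      simp only [am, ne_eq, Fin.ext_iff, Fin.val_mk]
      omega
    have hjb : j ≠ bm := by
      simp only [bm, ne_eq, Fin.ext_iff, Fin.val_mk]
      omega
    have := hmem j (by omega)
    rw [coeM_rSU_mul, rmat_mul_apply_of_ne _ _ hja hjb] at this
    exact hne this

lemma colSet_empty (hn : 2 ≤ n) : colSet (⟨0, by omega⟩ : Fin n) n = (∅ : Set (SU n)) := by
  have h0 : (0:ℕ) < n := by omega
  set i0 : Fin n := ⟨0, h0⟩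
  ext a
  simp only [colSet, Set.mem_setOf_eq, Set.mem_empty_iff_false, iff_false]
  intro h
  have hu : star (coeM a) * coeM a = 1 :=
    Matrix.UnitaryGroup.star_mul_self (a : Matrix.unitaryGroup (Fin n) ℂ)
  have h11 := congrFun (congrFun hu i0) i0
  rw [Matrix.mul_apply] at h11
  have hz : ∀ j : Fin n, (star (coeM a)) i0 j * coeM a j i0 = 0 := by
    intro j
    rw [h j j.isLt, mul_zero]
  rw [Finset.sum_congr rfl (fun j _ => hz j), Finset.sum_const_zero] at h11
  have : (1 : Matrix (Fin n) (Fin n) ℂ) i0 i0 = 1 := Matrix.one_apply_eq i0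
  rw [this] at h11
  exact one_ne_zero h11.symm

lemma colSet_one_null (hn : 2 ≤ n) (μ : Measure (SU n)) [μ.IsHaarMeasure]
    [IsProbabilityMeasure μ] :
    μ (colSet (⟨0, by omega⟩ : Fin n) 1) = 0 := by
  have key2 : ∀ m : ℕ, 1 ≤ m → m ≤ n →
      μ (colSet (⟨0, by omega⟩ : Fin n) 1) ≤ μ (colSet (⟨0, by omega⟩ : Fin n) m) := by
    intro m
    induction m with
    | zero => omega
    | succ k ih =>
      intro _ hkn
      rcases Nat.eq_or_lt_of_le (show 1 ≤ k + 1 by omega) with h | h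
      · rw [← h]
      · have hk1 : 1 ≤ k := by omega
        exact le_trans (ih hk1 (by omega)) (step_col hn μ k hk1 (by omega))
  have := key2 n (by omega) le_rfl
  rw [colSet_empty hn, measure_empty] at this
  exact le_antisymm this (zero_le)

end steps2

end SUaux

open SUaux in
/-- For `n ≥ 2` and an `n`-th root of unity `ζ ≠ 1`, the set of `a ∈ SU(n)` for which there is
some `b ∈ SU(n)` with `a b a⁻¹ b⁻¹ = ζ·I` has normalized Haar measure zero in `SU(n)`. -/
theorem SU_measure_zero_of_commutator_eq_scalar (n : ℕ) (hn : 2 ≤ n)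
    (ζ : ℂ) (hζn : ζ ^ n = 1) (hζ : ζ ≠ 1)
    (μ : Measure (SU n)) [μ.IsHaarMeasure] [IsProbabilityMeasure μ] :
    μ {a : SU n | ∃ b : SU n,
        ((↑(↑(a * b * a⁻¹ * b⁻¹) : Matrix.unitaryGroup (Fin n) ℂ)) :
          Matrix (Fin n) (Fin n) ℂ) = ζ • (1 : Matrix (Fin n) (Fin n) ℂ)} = 0 := by
  have hsub : {a : SU n | ∃ b : SU n,
        ((↑(↑(a * b * a⁻¹ * b⁻¹) : Matrix.unitaryGroup (Fin n) ℂ)) :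
          Matrix (Fin n) (Fin n) ℂ) = ζ • (1 : Matrix (Fin n) (Fin n) ℂ)}
      ⊆ {a : SU n | (coeM a).trace = 0} := by
    rintro a ⟨b, hb⟩
    simp only [Set.mem_setOf_eq]
    set A : Matrix (Fin n) (Fin n) ℂ := coeM a with hA
    set B : Matrix (Fin n) (Fin n) ℂ := coeM b with hB
    have hc : A * B * star A * star B = ζ • (1 : Matrix (Fin n) (Fin n) ℂ) := hb
    have hAA : star A * A = 1 :=
      Matrix.UnitaryGroup.star_mul_self (a : Matrix.unitaryGroup (Fin n) ℂ)
    have hBB : star B * B = 1 :=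
      Matrix.UnitaryGroup.star_mul_self (b : Matrix.unitaryGroup (Fin n) ℂ)
    have h2 : B * star A * star B = ζ • star A := by
      have h3 : star A * (A * B * star A * star B) = star A * (ζ • (1 : Matrix (Fin n) (Fin n) ℂ)) :=
        congrArg _ hc
      rw [show star A * (A * B * star A * star B) = (star A * A) * B * star A * star B by
            noncomm_ring, hAA, one_mul] at h3
      rw [h3, Matrix.mul_smul, mul_one]
    have htr : (star A).trace = ζ * (star A).trace := by
      have h4 := congrArg Matrix.trace h2
      rw [Matrix.trace_smul, smul_eq_mul] at h4
      rw [← h4]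
      rw [Matrix.trace_mul_comm (B * star A) (star B), show star B * (B * star A)
          = (star B * B) * star A by noncomm_ring, hBB, one_mul]
    have htr0 : (star A).trace = 0 := by
      by_contra hne
      have h1t : (1 : ℂ) * (star A).trace = ζ * (star A).trace := by
        rw [one_mul]; exact htr
      exact hζ (mul_right_cancel₀ hne h1t).symm
    have : star A.trace = 0 := by
      rw [show star A.trace = (star A : Matrix (Fin n) (Fin n) ℂ).trace from
        (Matrix.trace_conjTranspose A).symm]
      exact htr0
    exact star_eq_zero.mp this
  have h1 : μ {a : SU n | (coeM a).trace = 0} = 0 := by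
    have := (step_trace hn μ).trans_eq (colSet_one_null hn μ)
    exact le_antisymm this (zero_le)
  exact le_antisymm ((measure_mono hsub).trans_eq h1) (zero_le)
end

section
/- Let G be a non-abelian connected compact Lie group and let g ∈ G be a central element. Then μ²(α⁻¹(g)) = 0. -/
open MeasureTheory

open Pointwise in
/-- A proper closed subgroup of a connected compact group has Haar measure zero. -/
theorem aux_null_of_proper_closed {G : Type*} [Group G] [TopologicalSpace G]
    [IsTopologicalGroup G] [T2Space G] [CompactSpace G] [ConnectedSpace G]
    [MeasurableSpace G] [BorelSpace G]
    (μ : Measure G) [μ.IsHaarMeasure] (H : Subgroup G) (hc : IsClosed (H : Set G))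
    (hne : H ≠ ⊤) : μ (H : Set G) = 0 := by
  by_contra h
  have hpos : 0 < μ (H : Set G) := pos_iff_ne_zero.2 h
  have hnhds : (H : Set G) / (H : Set G) ∈ nhds (1 : G) :=
    MeasureTheory.Measure.div_mem_nhds_one_of_haar_pos μ (H : Set G) hc.measurableSet hpos
  have hsub : (H : Set G) / (H : Set G) ⊆ (H : Set G) := by
    rintro z ⟨a, ha, b, hb, rfl⟩
    exact H.div_mem ha hb
  have hopen : IsOpen (H : Set G) :=
    Subgroup.isOpen_of_mem_nhds H (Filter.mem_of_superset hnhds hsub)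
  have huniv : (H : Set G) = Set.univ :=
    IsClopen.eq_univ ⟨hc, hopen⟩ ⟨1, H.one_mem⟩
  exact hne (Subgroup.coe_eq_univ.1 huniv)

open Pointwise in
/-- For a non-abelian connected compact Lie group `G` with normalized Haar measure `μ` and a
central element `g ∈ G`, the fiber of the commutator map over `g` has `μ × μ`-measure zero. -/
theorem commutator_fiber_central_measure_zero_of_compact_lie
    {E : Type*} [NormedAddCommGroup E] [NormedSpace ℝ E] [FiniteDimensional ℝ E]
    {H : Type*} [TopologicalSpace H] (I : ModelWithCorners ℝ E H)
    {G : Type*} [Group G] [TopologicalSpace G] [ChartedSpace H G] [LieGroup I (⊤ : ℕ∞) G]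
    [CompactSpace G] [ConnectedSpace G] [T2Space G]
    [MeasurableSpace G] [BorelSpace G]
    (hG : ∃ x y : G, x * y ≠ y * x)
    (μ : Measure G) [μ.IsHaarMeasure] [IsProbabilityMeasure μ]
    (g : G) (hg : g ∈ Subgroup.center G) :
    (μ.prod μ) {p : G × G | p.1 * p.2 * p.1⁻¹ * p.2⁻¹ = g} = 0 := by
  classical
  haveI : IsTopologicalGroup G := topologicalGroup_of_lieGroup I (⊤ : ℕ∞)
  haveI : SecondCountableTopology H := I.secondCountableTopology
  haveI : SecondCountableTopology G := ChartedSpace.secondCountable_of_sigmaCompact H G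
  haveI : SMulInvariantMeasure G G μ :=
    ⟨fun c s _ => MeasureTheory.measure_preimage_mul μ c s⟩
  -- center is a proper closed subgroup, hence null
  have hZclosed : IsClosed (Subgroup.center G : Set G) := by
    have : (Subgroup.center G : Set G) = ⋂ z : G, {x : G | z * x = x * z} := by
      ext x
      simp [Subgroup.mem_center_iff, Set.mem_iInter]
    rw [this]
    exact isClosed_iInter fun z =>
      isClosed_eq (continuous_const.mul continuous_id) (continuous_id.mul continuous_const)
  have hZne : Subgroup.center G ≠ ⊤ := by
    obtain ⟨x, y, hxy⟩ := hG
    intro htop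
    exact hxy ((Subgroup.mem_center_iff.1 (htop ▸ Subgroup.mem_top y) x))
  have hZnull : μ (Subgroup.center G : Set G) = 0 :=
    aux_null_of_proper_closed μ _ hZclosed hZne
  -- the fiber is closed, hence measurable
  set F : Set (G × G) := {p : G × G | p.1 * p.2 * p.1⁻¹ * p.2⁻¹ = g} with hF
  have hFclosed : IsClosed F := by
    apply isClosed_eq _ continuous_const
    exact ((continuous_fst.mul continuous_snd).mul continuous_fst.inv).mul continuous_snd.inv
  have hFmeas : MeasurableSet F := hFclosed.measurableSet
  rw [Measure.prod_apply hFmeas]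
  -- bound each slice
  have hslice : ∀ x : G, μ (Prod.mk x ⁻¹' F) ≤
      (Subgroup.center G : Set G).indicator (fun _ => (1 : ENNReal)) x := by
    intro x
    by_cases hx : x ∈ Subgroup.center G
    · rw [Set.indicator_of_mem hx]
      exact (measure_mono (Set.subset_univ _)).trans (by simp)
    · rw [Set.indicator_of_notMem hx]
      rcases Set.eq_empty_or_nonempty (Prod.mk x ⁻¹' F) with he | ⟨y₀, hy₀⟩
      · simp [he]
      · have hy₀' : x * y₀ * x⁻¹ * y₀⁻¹ = g := hy₀
        have k2 : x * y₀ * x⁻¹ = g * y₀ := by rw [← hy₀']; group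
        -- slice is contained in a left coset of the centralizer of x
        have hsub : Prod.mk x ⁻¹' F ⊆ y₀ • (Subgroup.centralizer {x} : Set G) := by
          intro y hy
          have hy' : x * y * x⁻¹ * y⁻¹ = g := hy
          have k1 : x * y * x⁻¹ = g * y := by rw [← hy']; group
          have key : x * (y₀⁻¹ * y) * x⁻¹ = (x * y₀ * x⁻¹)⁻¹ * (x * y * x⁻¹) := by group
          rw [k1, k2] at key
          have key2 : x * (y₀⁻¹ * y) * x⁻¹ = y₀⁻¹ * y := by rw [key]; group
          have hcomm : x * (y₀⁻¹ * y) = y₀⁻¹ * y * x := mul_inv_eq_iff_eq_mul.mp key2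
          refine ⟨y₀⁻¹ * y, ?_, ?_⟩
          · rw [SetLike.mem_coe, Subgroup.mem_centralizer_iff]
            rintro z rfl
            exact hcomm
          · show y₀ * (y₀⁻¹ * y) = y
            group
        -- centralizer of a non-central element is a proper closed subgroup
        have hCset : (Subgroup.centralizer {x} : Set G) = {y : G | x * y = y * x} := by
          ext y
          simp [Subgroup.mem_centralizer_iff]
        have hCclosed : IsClosed (Subgroup.centralizer {x} : Set G) := by
          rw [hCset]
          exact isClosed_eq (continuous_const.mul continuous_id)
            (continuous_id.mul continuous_const)
        have hCne : Subgroup.centralizer {x} ≠ ⊤ := by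
          intro htop
          apply hx
          rw [Subgroup.mem_center_iff]
          intro z
          have hz : z ∈ Subgroup.centralizer {x} := htop ▸ Subgroup.mem_top z
          exact (Subgroup.mem_centralizer_iff.1 hz x rfl).symm
        have hCnull : μ (Subgroup.centralizer {x} : Set G) = 0 :=
          aux_null_of_proper_closed μ _ hCclosed hCne
        calc μ (Prod.mk x ⁻¹' F) ≤ μ (y₀ • (Subgroup.centralizer {x} : Set G)) :=
              measure_mono hsub
          _ = μ (Subgroup.centralizer {x} : Set G) := MeasureTheory.measure_smul μ y₀ _
          _ = 0 := hCnull
  refine le_antisymm ?_ zero_le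
  calc ∫⁻ x, μ (Prod.mk x ⁻¹' F) ∂μ
      ≤ ∫⁻ x, (Subgroup.center G : Set G).indicator (fun _ => (1 : ENNReal)) x ∂μ :=
        lintegral_mono hslice
    _ = 0 := by
        rw [lintegral_indicator hZclosed.measurableSet]
        simp [hZnull]
end

section
/- Let G be a non-abelian connected compact Lie group. Then for every g ∈ G, μ²(α⁻¹(g)) = 0; that is, every fiber of the commutator map has measure zero. -/
open MeasureTheory Pointwise

lemma null_of_closed_proper_subgroup
    {G : Type*} [Group G] [TopologicalSpace G] [IsTopologicalGroup G]
    [CompactSpace G] [ConnectedSpace G] [T2Space G]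
    [MeasurableSpace G] [BorelSpace G]
    (μ : Measure G) [μ.IsHaarMeasure]
    (H : Subgroup G) (hc : IsClosed (H : Set G)) (hne : H ≠ ⊤) :
    μ (H : Set G) = 0 := by
  by_contra h
  have hpos : 0 < μ (H : Set G) := pos_iff_ne_zero.mpr h
  have hnhds : (H : Set G) / (H : Set G) ∈ nhds (1 : G) :=
    MeasureTheory.Measure.div_mem_nhds_one_of_haar_pos μ (H : Set G) hc.measurableSet hpos
  have hsub : (H : Set G) / (H : Set G) ⊆ (H : Set G) := by
    rintro z ⟨a, ha, b, hb, rfl⟩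
    exact H.div_mem ha hb
  have hopen : IsOpen (H : Set G) :=
    H.isOpen_of_mem_nhds (Filter.mem_of_superset hnhds hsub)
  have : (H : Set G) = Set.univ :=
    IsClopen.eq_univ ⟨hc, hopen⟩ ⟨1, H.one_mem⟩
  exact hne (by rwa [← Subgroup.coe_eq_univ])

/-- For a non-abelian connected compact Lie group `G` with normalized Haar measure `μ`, every
element `g ∈ G`, the fiber of the commutator map over `g` has `μ × μ`-measure zero. -/
theorem commutator_fiber_measure_zero_of_compact_lie
    {E : Type*} [NormedAddCommGroup E] [NormedSpace ℝ E] [FiniteDimensional ℝ E]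
    {H : Type*} [TopologicalSpace H] (I : ModelWithCorners ℝ E H)
    {G : Type*} [Group G] [TopologicalSpace G] [ChartedSpace H G] [LieGroup I (⊤ : ℕ∞) G]
    [CompactSpace G] [ConnectedSpace G] [T2Space G]
    [MeasurableSpace G] [BorelSpace G]
    (hG : ∃ x y : G, x * y ≠ y * x)
    (μ : Measure G) [μ.IsHaarMeasure] [IsProbabilityMeasure μ]
    (g : G) :
    (μ.prod μ) {p : G × G | p.1 * p.2 * p.1⁻¹ * p.2⁻¹ = g} = 0 := by
  haveI : IsTopologicalGroup G := topologicalGroup_of_lieGroup I (⊤ : ℕ∞)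
  haveI : SecondCountableTopology H := I.secondCountableTopology
  haveI : SecondCountableTopology G := ChartedSpace.secondCountable_of_sigmaCompact H G
  -- the fiber is closed, hence measurable
  have hclosed : IsClosed {p : G × G | p.1 * p.2 * p.1⁻¹ * p.2⁻¹ = g} :=
    isClosed_eq (((continuous_fst.mul continuous_snd).mul continuous_fst.inv).mul
      continuous_snd.inv) continuous_const
  rw [Measure.prod_apply hclosed.measurableSet]
  -- the center is a proper closed subgroup, hence null
  have hZclosed : IsClosed ((Subgroup.center G : Subgroup G) : Set G) := by
    have : ((Subgroup.center G : Subgroup G) : Set G)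
        = ⋂ y : G, {z : G | y * z = z * y} := by
      ext z
      simp only [SetLike.mem_coe, Subgroup.mem_center_iff, Set.mem_iInter, Set.mem_setOf_eq]
    rw [this]
    exact isClosed_iInter fun y =>
      isClosed_eq (continuous_const.mul continuous_id) (continuous_id.mul continuous_const)
  have hZne : (Subgroup.center G : Subgroup G) ≠ ⊤ := by
    intro h
    obtain ⟨x, y, hxy⟩ := hG
    exact hxy ((Subgroup.mem_center_iff.mp (h ▸ Subgroup.mem_top x)) y).symm
  have hZnull : μ ((Subgroup.center G : Subgroup G) : Set G) = 0 :=
    null_of_closed_proper_subgroup μ _ hZclosed hZne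
  -- for noncentral x, the slice is null
  have hslice : ∀ x : G, x ∉ Subgroup.center G →
      μ (Prod.mk x ⁻¹' {p : G × G | p.1 * p.2 * p.1⁻¹ * p.2⁻¹ = g}) = 0 := by
    intro x hx
    set S : Set G := {y : G | x * y * x⁻¹ * y⁻¹ = g} with hS
    have hpre : Prod.mk x ⁻¹' {p : G × G | p.1 * p.2 * p.1⁻¹ * p.2⁻¹ = g} = S := rfl
    rw [hpre]
    rcases Set.eq_empty_or_nonempty S with h | ⟨y₀, hy₀⟩
    · simp [h]
    · -- S ⊆ y₀ • centralizer {x}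
      set C : Subgroup G := Subgroup.centralizer {x} with hC
      have hCclosed : IsClosed (C : Set G) := by
        have : (C : Set G) = {z : G | x * z = z * x} := by
          ext z; simp [hC, Subgroup.mem_centralizer_iff]
        rw [this]
        exact isClosed_eq (continuous_const.mul continuous_id)
          (continuous_id.mul continuous_const)
      have hCne : C ≠ ⊤ := by
        intro h
        apply hx
        rw [Subgroup.mem_center_iff]
        intro y
        have := (h ▸ Subgroup.mem_top y : y ∈ C)
        exact (Subgroup.mem_centralizer_iff.mp this x rfl).symm
      have hCnull : μ (C : Set G) = 0 := null_of_closed_proper_subgroup μ _ hCclosed hCne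
      have hsub : S ⊆ y₀ • (C : Set G) := by
        intro y hy
        have hy' : x * y * x⁻¹ * y⁻¹ = g := hy
        have hy₀' : x * y₀ * x⁻¹ * y₀⁻¹ = g := hy₀
        have key : x * (y₀⁻¹ * y) * x⁻¹ * (y₀⁻¹ * y)⁻¹ = 1 := by
          have e : x * (y₀⁻¹ * y) * x⁻¹ * (y₀⁻¹ * y)⁻¹
              = y₀⁻¹ * (x * y₀ * x⁻¹ * y₀⁻¹)⁻¹ * (x * y * x⁻¹ * y⁻¹) * y₀ := by group
          rw [e, hy', hy₀']
          group
        have comm : x * (y₀⁻¹ * y) = (y₀⁻¹ * y) * x :=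
          mul_inv_eq_iff_eq_mul.mp (mul_inv_eq_one.mp key)
        refine ⟨y₀⁻¹ * y, ?_, by simp [smul_eq_mul, mul_assoc]⟩
        show y₀⁻¹ * y ∈ C
        rw [hC, Subgroup.mem_centralizer_iff]
        rintro w hw
        rw [Set.mem_singleton_iff] at hw
        subst hw
        exact comm
      refine measure_mono_null hsub ?_
      rw [measure_smul]
      exact hCnull
  -- conclude via the integral
  have hae : ∀ᵐ x ∂μ,
      μ (Prod.mk x ⁻¹' {p : G × G | p.1 * p.2 * p.1⁻¹ * p.2⁻¹ = g}) = 0 := by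
    filter_upwards [measure_eq_zero_iff_ae_notMem.mp hZnull] with x hx
    exact hslice x hx
  exact lintegral_eq_zero_iff' (Measurable.aemeasurable
    (measurable_measure_prodMk_left hclosed.measurableSet)) |>.mpr hae
end

section
/- Let H be a compact Hausdorff topological group, N a finite central subgroup of H, G = H/N the quotient topological group with quotient homomorphism q : H → G, and let ν and μ be the normalized Haar measures on H and G respectively. Then for every g ∈ G and every h₀ ∈ H with q(h₀) = g, one has μ²(α_G⁻¹(g)) = Σ_{n ∈ N} ν²(α_H⁻¹(h₀·n)), where α_G and α_H denote the commutator maps of G and H. -/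
open MeasureTheory Set Topology Filter
open scoped Pointwise

/-- Any continuous real-valued function on a product of two compact Hausdorff spaces is
measurable with respect to the product sigma-algebra (via Stone–Weierstrass). -/
theorem measurable_continuous_on_compact_prod
    {X Y : Type*} [TopologicalSpace X] [CompactSpace X] [T2Space X]
    [MeasurableSpace X] [OpensMeasurableSpace X]
    [TopologicalSpace Y] [CompactSpace Y] [T2Space Y]
    [MeasurableSpace Y] [OpensMeasurableSpace Y]
    (f : C(X × Y, ℝ)) : Measurable f := by
  classical
  set A : Subalgebra ℝ C(X × Y, ℝ) := Algebra.adjoin ℝ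
    ((Set.range fun φ : C(X, ℝ) => φ.comp ⟨Prod.fst, continuous_fst⟩) ∪
     (Set.range fun ψ : C(Y, ℝ) => ψ.comp ⟨Prod.snd, continuous_snd⟩)) with hA
  have hmeas : ∀ g ∈ A, Measurable g := by
    intro g hg
    rw [hA] at hg
    induction hg using Algebra.adjoin_induction with
    | mem x hx =>
      rcases hx with ⟨φ, rfl⟩ | ⟨ψ, rfl⟩
      · exact (φ.continuous.measurable).comp measurable_fst
      · exact (ψ.continuous.measurable).comp measurable_snd
    | algebraMap r =>
      have : ⇑(algebraMap ℝ C(X × Y, ℝ) r) = fun _ => r := rfl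
      rw [this]; exact measurable_const
    | add x y hx hy hx' hy' =>
      have : ⇑(x + y) = ⇑x + ⇑y := rfl
      rw [this]; exact hx'.add hy'
    | mul x y hx hy hx' hy' =>
      have : ⇑(x * y) = ⇑x * ⇑y := rfl
      rw [this]; exact hx'.mul hy'
  have hsep : A.SeparatesPoints := by
    intro p p' hne
    have hcoord : p.1 ≠ p'.1 ∨ p.2 ≠ p'.2 := by
      by_contra h
      push_neg at h
      exact hne (Prod.ext h.1 h.2)
    rcases hcoord with h1 | h2
    · obtain ⟨φ, hφ0, hφ1, -⟩ := exists_continuous_zero_one_of_isClosed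
        (isClosed_singleton (x := p.1)) (isClosed_singleton (x := p'.1))
        (by simpa [Set.disjoint_singleton] using h1)
      refine ⟨⇑(φ.comp ⟨Prod.fst, continuous_fst⟩), ⟨φ.comp ⟨Prod.fst, continuous_fst⟩,
        Algebra.subset_adjoin (Or.inl ⟨φ, rfl⟩), rfl⟩, ?_⟩
      have e0 : φ p.1 = 0 := hφ0 rfl
      have e1 : φ p'.1 = 1 := hφ1 rfl
      simp only [ContinuousMap.comp_apply, ContinuousMap.coe_mk]
      rw [e0, e1]; norm_num
    · obtain ⟨ψ, hψ0, hψ1, -⟩ := exists_continuous_zero_one_of_isClosed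
        (isClosed_singleton (x := p.2)) (isClosed_singleton (x := p'.2))
        (by simpa [Set.disjoint_singleton] using h2)
      refine ⟨⇑(ψ.comp ⟨Prod.snd, continuous_snd⟩), ⟨ψ.comp ⟨Prod.snd, continuous_snd⟩,
        Algebra.subset_adjoin (Or.inr ⟨ψ, rfl⟩), rfl⟩, ?_⟩
      have e0 : ψ p.2 = 0 := hψ0 rfl
      have e1 : ψ p'.2 = 1 := hψ1 rfl
      simp only [ContinuousMap.comp_apply, ContinuousMap.coe_mk]
      rw [e0, e1]; norm_num
  choose u hu using fun k : ℕ =>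
    ContinuousMap.exists_mem_subalgebra_near_continuousMap_of_separatesPoints A hsep f
      (1 / (k + 1)) (by positivity)
  have hten : Tendsto (fun k : ℕ => ⇑(u k : C(X × Y, ℝ))) atTop (nhds ⇑f) := by
    rw [tendsto_pi_nhds]
    intro p
    rw [tendsto_iff_dist_tendsto_zero]
    apply squeeze_zero (fun k => dist_nonneg) (g := fun k : ℕ => 1 / (k + 1 : ℝ))
    · intro k
      have := ContinuousMap.norm_coe_le_norm ((u k : C(X × Y, ℝ)) - f) p
      simpa [dist_eq_norm] using this.trans (hu k).le
    · exact tendsto_one_div_add_atTop_nhds_zero_nat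
  exact measurable_of_tendsto_metrizable (fun k => hmeas _ (u k).2) hten

open MeasureTheory Set

/-- If the sets `E i` are measurable and pairwise disjoint, then for an arbitrary set `C`
the sum of the outer measures of `C ∩ E i` is at most the outer measure of `C`. -/
theorem sum_measure_inter_le_of_disjoint {X ι : Type*} [MeasurableSpace X] (μ : Measure X)
    (E : ι → Set X) (hE : ∀ i, MeasurableSet (E i))
    (hdisj : ∀ i j, i ≠ j → Disjoint (E i) (E j)) :
    ∀ (s : Finset ι) (C : Set X), ∑ i ∈ s, μ (C ∩ E i) ≤ μ C := by
  classical
  intro s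
  induction s using Finset.induction with
  | empty => intro C; simp
  | @insert j s hj ih =>
    intro C
    rw [Finset.sum_insert hj]
    have key : μ (C ∩ E j) + μ (C \ E j) = μ C := measure_inter_add_diff C (hE j)
    have hle : ∑ i ∈ s, μ (C ∩ E i) ≤ μ (C \ E j) := by
      refine le_trans (Finset.sum_le_sum fun i hi => ?_) (ih (C \ E j))
      refine measure_mono fun x hx => ?_
      have hne : i ≠ j := by rintro rfl; exact hj hi
      exact ⟨⟨hx.1, fun hxj => (hdisj i j hne).le_bot ⟨hx.2, hxj⟩⟩, hx.2⟩
    calc μ (C ∩ E j) + ∑ i ∈ s, μ (C ∩ E i) ≤ μ (C ∩ E j) + μ (C \ E j) := by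
          exact add_le_add (le_refl _) hle
      _ = μ C := key

/-- A compact Hausdorff group admits a Borel-measurable retraction onto a set of coset
representatives for a finite subgroup `N`. -/
theorem exists_measurable_retraction {H : Type*} [Group H] [TopologicalSpace H]
    [IsTopologicalGroup H] [CompactSpace H] [T2Space H] [MeasurableSpace H] [BorelSpace H]
    (N : Subgroup H) [Fintype N] :
    ∃ r : H → H, Measurable r ∧ (∀ a : H, ((r a : H) : H ⧸ N) = (a : H ⧸ N)) ∧
      (∀ a b : H, (a : H ⧸ N) = (b : H ⧸ N) → r a = r b) := by
  classical
  -- an open set around 1 meeting N only in 1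
  have hNfin : ((N : Set H) \ {1}).Finite := (Set.toFinite (N : Set H)).diff
  set O : Set H := ((N : Set H) \ {1})ᶜ with hO
  have hOopen : IsOpen O := hNfin.isClosed.isOpen_compl
  have hO1 : (1 : H) ∈ O := by simp [hO]
  have hONsub : ∀ x : H, x ∈ O → x ∈ N → x = 1 := by
    intro x hx hxN
    by_contra hne
    exact hx ⟨hxN, hne⟩
  -- a symmetric open neighborhood V of 1 with v⁻¹ * w ∈ O for v, w ∈ V
  obtain ⟨V₀, hV₀nhds, hV₀⟩ := exists_nhds_split_inv (hOopen.mem_nhds hO1)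
  set V : Set H := interior V₀ ∩ (interior V₀)⁻¹ with hV
  have hVopen : IsOpen V := isOpen_interior.inter isOpen_interior.inv
  have hV1 : (1 : H) ∈ V := by
    constructor
    · exact mem_interior_iff_mem_nhds.mpr hV₀nhds
    · rw [Set.mem_inv, inv_one]; exact mem_interior_iff_mem_nhds.mpr hV₀nhds
  have hVsub : ∀ v ∈ V, ∀ w ∈ V, v⁻¹ * w ∈ O := by
    intro v hv w hw
    have hv' : v⁻¹ ∈ V₀ := interior_subset (Set.mem_inv.mp hv.2)
    have hw' : w⁻¹ ∈ V₀ := interior_subset (Set.mem_inv.mp hw.2)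
    have := hV₀ _ hv' _ hw'
    simpa [div_eq_mul_inv] using this
  -- injectivity of the quotient map on translates of V
  have hinj : ∀ h v w : H, v ∈ V → w ∈ V → ((h * v : H) : H ⧸ N) = ((h * w : H) : H ⧸ N) →
      v = w := by
    intro h v w hv hw hq
    have h1 : (h * v)⁻¹ * (h * w) ∈ N := QuotientGroup.eq.mp hq
    have h2 : (h * v)⁻¹ * (h * w) = v⁻¹ * w := by group
    rw [h2] at h1
    have h3 : v⁻¹ * w = 1 := hONsub _ (hVsub v hv w hw) h1
    exact inv_mul_eq_one.mp h3
  -- finite subcover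
  have hcover : (Set.univ : Set H) ⊆ ⋃ h : H, h • V := by
    intro a _
    exact Set.mem_iUnion.mpr ⟨a, by simpa using Set.smul_mem_smul_set hV1 (a := a)⟩
  obtain ⟨t, ht⟩ := isCompact_univ.elim_finite_subcover (fun h : H => h • V)
    (fun h => hVopen.smul h) hcover
  set k := t.card with hk
  set e : Fin k → H := fun i => ((t.equivFin.symm i : t) : H) with he
  set W : Fin k → Set H := fun i => e i • V with hW
  have hWopen : ∀ i, IsOpen (W i) := fun i => hVopen.smul _
  have hcov' : ∀ a : H, ∃ i, a ∈ W i := by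
    intro a
    obtain ⟨h, hh, ha⟩ := Set.mem_iUnion₂.mp (ht (Set.mem_univ a))
    refine ⟨t.equivFin ⟨h, hh⟩, ?_⟩
    have : e (t.equivFin ⟨h, hh⟩) = h := by simp [he]
    show a ∈ e (t.equivFin ⟨h, hh⟩) • V
    rw [this]; exact ha
  -- saturations
  set P : Fin k → Set H := fun i => ⋃ n : N, (fun a => a * (n : H)) ⁻¹' (W i) with hP
  have hPmem : ∀ i a, a ∈ P i ↔ ∃ n : N, a * (n : H) ∈ W i := by
    intro i a; simp [hP]
  have hPopen : ∀ i, IsOpen (P i) :=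
    fun i => isOpen_iUnion fun n => (hWopen i).preimage (continuous_mul_right _)
  have hPW : ∀ i a, a ∈ W i → a ∈ P i := by
    intro i a ha
    exact (hPmem i a).mpr ⟨1, by simpa using ha⟩
  have hPsat : ∀ i a (n : N), a ∈ P i → a * (n : H) ∈ P i := by
    intro i a n ha
    obtain ⟨m, hm⟩ := (hPmem i a).mp ha
    refine (hPmem i _).mpr ⟨n⁻¹ * m, ?_⟩
    have : a * (n : H) * ((n⁻¹ * m : N) : H) = a * (m : H) := by
      push_cast; group
    rw [this]; exact hm
  have hPsat' : ∀ i a (n : N), a * (n : H) ∈ P i → a ∈ P i := by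
    intro i a n ha
    have := hPsat i (a * (n : H)) n⁻¹ ha
    simpa using this
  -- minimal index
  have hPex : ∀ a : H, ∃ i, a ∈ P i := fun a => (hcov' a).imp fun i h => hPW i a h
  set T : H → Finset (Fin k) := fun a => Finset.univ.filter (fun i => a ∈ P i) with hT
  have hTne : ∀ a, (T a).Nonempty := by
    intro a
    obtain ⟨i, hi⟩ := hPex a
    exact ⟨i, by simp [hT, hi]⟩
  set idx : H → Fin k := fun a => (T a).min' (hTne a) with hidx
  have hidx_mem : ∀ a, a ∈ P (idx a) := by
    intro a
    have := (T a).min'_mem (hTne a)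
    simpa [hT] using this
  have hidx_coset : ∀ a (n : N), idx (a * (n : H)) = idx a := by
    intro a n
    have hTeq : T (a * (n : H)) = T a := by
      ext i
      simp only [hT, Finset.mem_filter, Finset.mem_univ, true_and]
      exact ⟨fun h => hPsat' i a n h, fun h => hPsat i a n h⟩
    simp [hidx, hTeq]
  set D : Set H := {a | a ∈ W (idx a)} with hD
  -- existence of representative in D
  have hD_exists : ∀ a : H, ∃ n : N, a * (n : H) ∈ D := by
    intro a
    obtain ⟨m, hm⟩ := (hPmem _ a).mp (hidx_mem a)
    refine ⟨m, ?_⟩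
    show a * (m : H) ∈ W (idx (a * (m : H)))
    rw [hidx_coset a m]
    exact hm
  -- uniqueness within cosets
  have hD_unique : ∀ x y : H, x ∈ D → y ∈ D → ((x : H ⧸ N) = (y : H ⧸ N)) → x = y := by
    intro x y hx hy hq
    have hn : x⁻¹ * y ∈ N := QuotientGroup.eq.mp hq
    have hyx : y = x * ((⟨x⁻¹ * y, hn⟩ : N) : H) := by
      simp [mul_inv_cancel_left]
    have hiq : idx y = idx x := by rw [hyx]; exact hidx_coset x _
    have hxW : x ∈ W (idx x) := hx
    have hyW : y ∈ W (idx x) := by rw [← hiq]; exact hy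
    obtain ⟨v, hv, hxv⟩ := hxW
    obtain ⟨w, hw, hyw⟩ := hyW
    have hxv' : e (idx x) * v = x := hxv
    have hyw' : e (idx x) * w = y := hyw
    have : v = w := by
      refine hinj (e (idx x)) v w hv hw ?_
      rw [hxv', hyw']; exact hq
    rw [← hxv', ← hyw', this]
  have hD_exu : ∀ a : H, ∃! n : N, a * (n : H) ∈ D := by
    intro a
    obtain ⟨n, hn⟩ := hD_exists a
    refine ⟨n, hn, fun m hm => ?_⟩
    have hq : ((a * (m : H) : H) : H ⧸ N) = ((a * (n : H) : H) : H ⧸ N) := by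
      rw [QuotientGroup.eq]
      have : (a * (m : H))⁻¹ * (a * (n : H)) = (m : H)⁻¹ * (n : H) := by group
      rw [this]
      exact N.mul_mem (N.inv_mem m.2) n.2
    have := hD_unique _ _ hm hn hq
    have := mul_left_cancel this
    exact Subtype.ext this
  set r : H → H := fun a => a * ((Fintype.choose _ (hD_exu a) : N) : H) with hr
  have hrD : ∀ a, r a ∈ D := fun a => Fintype.choose_spec _ (hD_exu a)
  have hrq : ∀ a : H, ((r a : H) : H ⧸ N) = (a : H ⧸ N) := by
    intro a
    rw [QuotientGroup.eq]
    have : (r a)⁻¹ * a = (((Fintype.choose _ (hD_exu a) : N) : H))⁻¹ := by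
      rw [hr]; group
    rw [this]
    exact N.inv_mem (Fintype.choose _ (hD_exu a)).2
  have hr_coset : ∀ a b : H, (a : H ⧸ N) = (b : H ⧸ N) → r a = r b := by
    intro a b h
    exact hD_unique _ _ (hrD a) (hrD b) (by rw [hrq a, hrq b, h])
  have hr_eq : ∀ (a : H) (n : N), a * (n : H) ∈ D → r a = a * (n : H) := by
    intro a n hn
    refine hD_unique _ _ (hrD a) hn ?_
    rw [hrq a, QuotientGroup.eq]
    simpa using n.2
  -- measurability of D
  have hidx_char : ∀ (a : H) (i : Fin k), idx a = i ↔ a ∈ P i ∧ ∀ j, j < i → a ∉ P j := by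
    intro a i
    constructor
    · rintro rfl
      refine ⟨hidx_mem a, fun j hj hPj => ?_⟩
      have hjT : j ∈ T a := by simp [hT, hPj]
      exact absurd (Finset.min'_le _ _ hjT) (not_le.mpr hj)
    · rintro ⟨hPi, hmin⟩
      have hiT : i ∈ T a := by simp [hT, hPi]
      have h1 : idx a ≤ i := Finset.min'_le _ _ hiT
      rcases lt_or_eq_of_le h1 with h | h
      · exact absurd (hidx_mem a) (hmin _ h)
      · exact h
  have hDmeas : MeasurableSet D := by
    have hDeq : D = ⋃ i : Fin k, ((P i ∩ ⋂ j : Fin k, ⋂ (_ : j < i), (P j)ᶜ) ∩ W i) := by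
      ext a
      simp only [hD, Set.mem_setOf_eq, Set.mem_iUnion, Set.mem_inter_iff, Set.mem_iInter,
        Set.mem_compl_iff]
      constructor
      · intro h
        exact ⟨idx a, ⟨hidx_mem a, fun j hj => ((hidx_char a (idx a)).mp rfl).2 j hj⟩, h⟩
      · rintro ⟨i, ⟨hPi, hmin⟩, hWi⟩
        have : idx a = i := (hidx_char a i).mpr ⟨hPi, hmin⟩
        rw [this]; exact hWi
    rw [hDeq]
    refine MeasurableSet.iUnion fun i => ?_
    refine MeasurableSet.inter (MeasurableSet.inter (hPopen i).measurableSet ?_)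
      (hWopen i).measurableSet
    exact MeasurableSet.iInter fun j => MeasurableSet.iInter fun _ =>
      (hPopen j).measurableSet.compl
  -- measurability of r
  have hrmeas : Measurable r := by
    intro B hB
    have : r ⁻¹' B = ⋃ n : N, (fun a => a * (n : H)) ⁻¹' (D ∩ B) := by
      ext a
      simp only [Set.mem_preimage, Set.mem_iUnion, Set.mem_inter_iff]
      constructor
      · intro h
        exact ⟨Fintype.choose _ (hD_exu a), hrD a, h⟩
      · rintro ⟨n, hnD, hnB⟩
        rw [hr_eq a n hnD]; exact hnB
    rw [this]
    exact MeasurableSet.iUnion fun n =>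
      (hDmeas.inter hB).preimage (measurable_mul_const _)
  exact ⟨r, hrmeas, hrq, hr_coset⟩

/-- Let `H` be a compact Hausdorff topological group, `N` a finite central subgroup,
`G = H ⧸ N` with the pushforward `μ` of the normalized Haar measure `ν` of `H` as its
normalized Haar measure. Then for `g ∈ G` and any lift `h₀ ∈ H` of `g`, the `μ²`-measure of the
commutator fiber over `g` equals `Σ_{n ∈ N} ν²(α_H⁻¹(h₀·n))`. -/
theorem quotient_commutator_fiber_measure {H : Type*} [Group H] [TopologicalSpace H]
    [IsTopologicalGroup H] [CompactSpace H] [T2Space H] [MeasurableSpace H] [BorelSpace H]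
    (N : Subgroup H) [N.Normal] (hN : N ≤ Subgroup.center H) [Fintype N]
    (ν : Measure H) [ν.IsHaarMeasure] [IsProbabilityMeasure ν]
    (μ : Measure (H ⧸ N)) (hμ : μ = ν.map (QuotientGroup.mk' N))
    (g : H ⧸ N) (h₀ : H) (hh₀ : QuotientGroup.mk' N h₀ = g) :
    (μ.prod μ) {p : (H ⧸ N) × (H ⧸ N) | p.1 * p.2 * p.1⁻¹ * p.2⁻¹ = g} =
      ∑ n : N, (ν.prod ν) {p : H × H | p.1 * p.2 * p.1⁻¹ * p.2⁻¹ = h₀ * (n : H)} := by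
  classical
  obtain ⟨r, hrmeas, hrq, hrc⟩ := exists_measurable_retraction N
  have hg : ((h₀ : H) : H ⧸ N) = g := hh₀
  have hmk : Measurable (QuotientGroup.mk : H → H ⧸ N) := measurable_quotient_mk''
  set mk2 : H × H → (H ⧸ N) × (H ⧸ N) :=
    Prod.map QuotientGroup.mk QuotientGroup.mk with hmk2def
  have hmk2 : Measurable mk2 := hmk.prodMap hmk
  -- the measurable section
  set sq : H ⧸ N → H := fun x => r x.out with hsqdef
  have hsq : ∀ x : H ⧸ N, ((sq x : H) : H ⧸ N) = x := fun x =>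
    (hrq _).trans (QuotientGroup.out_eq' x)
  have hsmeas : Measurable sq := by
    intro B hB
    have hpre : (Quotient.mk'' : H → H ⧸ N) ⁻¹' (sq ⁻¹' B) = r ⁻¹' B := by
      ext a
      simp only [Set.mem_preimage]
      have h1 : sq (Quotient.mk'' a) = r a :=
        hrc _ _ (QuotientGroup.out_eq' ((a : H ⧸ N)))
      rw [h1]
    exact measurableSet_quotient.mpr (hpre ▸ hrmeas hB)
  -- the measures
  have hprod : μ.prod μ = (ν.prod ν).map mk2 := by
    rw [hμ, QuotientGroup.coe_mk']
    exact Measure.map_prod_map ν ν hmk hmk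
  set S : Set ((H ⧸ N) × (H ⧸ N)) := {p | p.1 * p.2 * p.1⁻¹ * p.2⁻¹ = g} with hS
  set Cn : N → Set (H × H) :=
    fun n => {p : H × H | p.1 * p.2 * p.1⁻¹ * p.2⁻¹ = h₀ * (n : H)} with hCndef
  set C : Set (H × H) := mk2 ⁻¹' S with hCdef
  have hmem_C : ∀ p : H × H, p ∈ C ↔ ((p.1 * p.2 * p.1⁻¹ * p.2⁻¹ : H) : H ⧸ N) = g := by
    intro p
    simp only [hCdef, hS, Set.mem_preimage, Set.mem_setOf_eq, hmk2def, Prod.map,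
      QuotientGroup.mk_mul, QuotientGroup.mk_inv]
  have hCdecomp : C = ⋃ n : N, Cn n := by
    ext p
    rw [hmem_C]
    simp only [hCndef, Set.mem_iUnion, Set.mem_setOf_eq]
    constructor
    · intro h
      have h' : ((h₀ : H) : H ⧸ N) = ((p.1 * p.2 * p.1⁻¹ * p.2⁻¹ : H) : H ⧸ N) := by
        rw [h, hg]
      have hmem := QuotientGroup.eq.mp h'
      exact ⟨⟨_, hmem⟩, by simp [mul_inv_cancel_left]⟩
    · rintro ⟨n, hn⟩
      rw [hn, QuotientGroup.mk_mul_of_mem h₀ n.2, hg]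
  -- separating measurable sets around the fibers
  have hNinj : ∀ n m : N, h₀ * (n : H) = h₀ * (m : H) → n = m := fun n m h =>
    Subtype.ext (mul_left_cancel h)
  have hUry : ∀ n : N, ∃ f : C(H, ℝ),
      (∀ m : N, m ≠ n → f (h₀ * (m : H)) = 0) ∧ f (h₀ * (n : H)) = 1 := by
    intro n
    have hsfin : ((fun m : N => h₀ * (m : H)) '' {m | m ≠ n}).Finite :=
      (Set.toFinite _).image _
    have hdisj : Disjoint ((fun m : N => h₀ * (m : H)) '' {m | m ≠ n}) {h₀ * (n : H)} := by
      rw [Set.disjoint_singleton_right]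
      rintro ⟨m, hm, hme⟩
      exact hm (hNinj m n hme)
    obtain ⟨f, hf0, hf1, -⟩ := exists_continuous_zero_one_of_isClosed
      hsfin.isClosed isClosed_singleton hdisj
    exact ⟨f, fun m hm => hf0 ⟨m, hm, rfl⟩, hf1 rfl⟩
  choose f hf0 hf1 using hUry
  have hcomm_cont : Continuous (fun p : H × H => p.1 * p.2 * p.1⁻¹ * p.2⁻¹) := by fun_prop
  set gc : N → (H × H → ℝ) := fun n p => f n (p.1 * p.2 * p.1⁻¹ * p.2⁻¹) with hgcdef
  have hgcmeas : ∀ n, Measurable (gc n) := fun n =>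
    measurable_continuous_on_compact_prod ((f n).comp ⟨_, hcomm_cont⟩)
  set E' : N → Set (H × H) := fun n => gc n ⁻¹' (Set.Ioi (1 / 2 : ℝ)) with hE'def
  set E : N → Set (H × H) := fun n => E' n ∩ ⋂ m : N, ⋂ (_ : m ≠ n), (E' m)ᶜ with hEdef
  have hEmeas : ∀ n, MeasurableSet (E n) := fun n =>
    ((hgcmeas n) measurableSet_Ioi).inter (MeasurableSet.iInter fun m =>
      MeasurableSet.iInter fun _ => ((hgcmeas m) measurableSet_Ioi).compl)
  have hEdisj : ∀ n m : N, n ≠ m → Disjoint (E n) (E m) := by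
    intro n m hnm
    rw [Set.disjoint_left]
    rintro p ⟨hpn, -⟩ ⟨-, hpc⟩
    exact (Set.mem_iInter.mp (Set.mem_iInter.mp hpc n) hnm) hpn
  have hCnE : ∀ n, Cn n ⊆ E n := by
    intro n p hp
    have hβ : p.1 * p.2 * p.1⁻¹ * p.2⁻¹ = h₀ * (n : H) := hp
    constructor
    · show gc n p ∈ Set.Ioi (1 / 2 : ℝ)
      have : gc n p = 1 := by rw [hgcdef]; simp only [hβ]; exact hf1 n
      rw [this]; norm_num
    · refine Set.mem_iInter.mpr fun m => Set.mem_iInter.mpr fun hm => ?_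
      show gc m p ∉ Set.Ioi (1 / 2 : ℝ)
      have : gc m p = 0 := by rw [hgcdef]; simp only [hβ]; exact hf0 m n (Ne.symm hm)
      rw [this]; norm_num
  -- lower bound
  have h1 : ∑ n : N, (ν.prod ν) (Cn n) ≤ (μ.prod μ) S := by
    have step1 : ∑ n : N, (ν.prod ν) (Cn n) ≤ ∑ n : N, (ν.prod ν) (C ∩ E n) :=
      Finset.sum_le_sum fun n _ => measure_mono fun p hp =>
        ⟨hCdecomp ▸ Set.mem_iUnion.mpr ⟨n, hp⟩, hCnE n hp⟩
    have step2 : ∑ n : N, (ν.prod ν) (C ∩ E n) ≤ (ν.prod ν) C :=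
      sum_measure_inter_le_of_disjoint (ν.prod ν) E hEmeas hEdisj Finset.univ C
    have step3 : (ν.prod ν) C ≤ (μ.prod μ) S := by
      rw [hprod]
      exact Measure.le_map_apply hmk2.aemeasurable S
    exact le_trans (le_trans step1 step2) step3
  -- upper bound
  have h2 : (μ.prod μ) S ≤ ∑ n : N, (ν.prod ν) (Cn n) := by
    set u : Set (H × H) := ⋃ n : N, toMeasurable (ν.prod ν) (Cn n) with hudef
    have humeas : MeasurableSet u := MeasurableSet.iUnion fun n => measurableSet_toMeasurable _ _
    have hCu : C ⊆ u := by
      rw [hCdecomp]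
      exact Set.iUnion_mono fun n => subset_toMeasurable _ _
    set u' : Set (H × H) := {p : H × H | ∀ n m : N, (p.1 * (n : H), p.2 * (m : H)) ∈ u}
      with hu'def
    have hu'meas : MeasurableSet u' := by
      have : u' = ⋂ n : N, ⋂ m : N,
          (fun p : H × H => (p.1 * (n : H), p.2 * (m : H))) ⁻¹' u := by
        ext p; simp [hu'def, Set.mem_iInter]
      rw [this]
      exact MeasurableSet.iInter fun n => MeasurableSet.iInter fun m =>
        humeas.preimage (((continuous_mul_right ((n : H))).measurable.comp
          measurable_fst).prod ((continuous_mul_right ((m : H))).measurable.comp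
          measurable_snd))
    have hCsat : ∀ (p : H × H) (n m : N), p ∈ C → (p.1 * (n : H), p.2 * (m : H)) ∈ C := by
      intro p n m hp
      show mk2 (p.1 * (n : H), p.2 * (m : H)) ∈ S
      have e1 : ((p.1 * (n : H) : H) : H ⧸ N) = (p.1 : H ⧸ N) :=
        QuotientGroup.mk_mul_of_mem p.1 n.2
      have e2 : ((p.2 * (m : H) : H) : H ⧸ N) = (p.2 : H ⧸ N) :=
        QuotientGroup.mk_mul_of_mem p.2 m.2
      have he : mk2 (p.1 * (n : H), p.2 * (m : H)) = mk2 p := by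
        simp only [hmk2def, Prod.map, e1, e2]
      rw [he]; exact hp
    have hCu' : C ⊆ u' := fun p hp n m => hCu (hCsat p n m hp)
    set t : Set ((H ⧸ N) × (H ⧸ N)) :=
      (fun x : (H ⧸ N) × (H ⧸ N) => (sq x.1, sq x.2)) ⁻¹' u' with htdef
    have htmeas : MeasurableSet t :=
      hu'meas.preimage ((hsmeas.comp measurable_fst).prod (hsmeas.comp measurable_snd))
    have hSt : S ⊆ t := by
      intro x hx
      show (sq x.1, sq x.2) ∈ u'
      apply hCu'
      show mk2 (sq x.1, sq x.2) ∈ S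
      have he : mk2 (sq x.1, sq x.2) = x := by
        simp only [hmk2def, Prod.map, hsq x.1, hsq x.2]
      rw [he]; exact hx
    have hpre_sub : mk2 ⁻¹' t ⊆ u' := by
      intro p hp
      intro n m
      have hp' : (sq ((p.1 : H ⧸ N)), sq ((p.2 : H ⧸ N))) ∈ u' := hp
      have hn1 : (sq ((p.1 : H ⧸ N)))⁻¹ * p.1 ∈ N := QuotientGroup.eq.mp (hsq _)
      have hn2 : (sq ((p.2 : H ⧸ N)))⁻¹ * p.2 ∈ N := QuotientGroup.eq.mp (hsq _)
      have e1 : p.1 * (n : H) =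
          sq ((p.1 : H ⧸ N)) * (((⟨_, hn1⟩ : N) * n : N) : H) := by
        push_cast
        group
      have e2 : p.2 * (m : H) =
          sq ((p.2 : H ⧸ N)) * (((⟨_, hn2⟩ : N) * m : N) : H) := by
        push_cast
        group
      have := hp' ((⟨_, hn1⟩ : N) * n) ((⟨_, hn2⟩ : N) * m)
      rw [e1, e2]
      exact this
    calc (μ.prod μ) S ≤ (μ.prod μ) t := measure_mono hSt
      _ = (ν.prod ν) (mk2 ⁻¹' t) := by rw [hprod]; exact Measure.map_apply hmk2 htmeas
      _ ≤ (ν.prod ν) u' := measure_mono hpre_sub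
      _ ≤ (ν.prod ν) u := measure_mono (fun p hp => by simpa using hp 1 1)
      _ ≤ ∑' n : N, (ν.prod ν) (toMeasurable (ν.prod ν) (Cn n)) := measure_iUnion_le _
      _ = ∑ n : N, (ν.prod ν) (toMeasurable (ν.prod ν) (Cn n)) := tsum_fintype _
      _ = ∑ n : N, (ν.prod ν) (Cn n) :=
          Finset.sum_congr rfl fun n _ => measure_toMeasurable _
  exact le_antisymm h2 h1
end

section
/- Let G be a compact Lie group which is an FC group (every conjugacy class of G is finite) and let G⁰ denote the identity component of G. Then there exist a finite group Δ and a continuous surjective group homomorphism φ : G⁰ × Δ → G such that: the restriction of φ to G⁰ × {1} is the inclusion of G⁰ into G, the kernel N of φ is finite, and both coordinate projections G⁰ × Δ → G⁰ and G⁰ × Δ → Δ restrict to injective maps on N (so N embeds diagonally, consisting of elements of the form (n, n⁻¹)). -/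
open Set Filter Topology

private theorem auxFC_open {E : Type*} [NormedAddCommGroup E] [NormedSpace ℝ E] [FiniteDimensional ℝ E]
  {H : Type*} [TopologicalSpace H] (I : ModelWithCorners ℝ E H)
  {G : Type*} [Group G] [TopologicalSpace G] [IsTopologicalGroup G] [ChartedSpace H G]
  [LieGroup I (⊤ : ℕ∞) G] : IsOpen (connectedComponent (1 : G)) := by
  obtain ⟨q, hq⟩ := interior_extChartAt_target_nonempty I (1 : G)
  set c := extChartAt I (1 : G) with hc
  have hqt : q ∈ c.target := interior_subset hq
  set x₀ := c.symm q with hx₀def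
  have hx₀s : x₀ ∈ c.source := c.map_target hqt
  have hcx₀ : c x₀ = q := c.right_inv hqt
  obtain ⟨r, hr, hball⟩ := Metric.isOpen_iff.1 isOpen_interior q hq
  have hballt : Metric.ball q r ⊆ c.target := hball.trans interior_subset
  set A := c.source ∩ c ⁻¹' Metric.ball q r with hA
  have hAopen : IsOpen A :=
    (continuousOn_extChartAt (1 : G)).isOpen_inter_preimage (isOpen_extChartAt_source 1)
      Metric.isOpen_ball
  have hAeq : A = c.symm '' Metric.ball q r := by
    apply Subset.antisymm
    · rintro g ⟨hg, hgb⟩; exact ⟨c g, hgb, c.left_inv hg⟩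
    · rintro _ ⟨y, hy, rfl⟩
      have hyt : y ∈ c.target := hballt hy
      exact ⟨c.map_target hyt, by rw [mem_preimage, c.right_inv hyt]; exact hy⟩
  have hAconn : IsPreconnected A := by
    rw [hAeq]
    exact ((convex_ball q r).isPreconnected).image _
      ((continuousOn_extChartAt_symm (1 : G)).mono hballt)
  have hx₀A : x₀ ∈ A := ⟨hx₀s, by rw [mem_preimage, hcx₀]; exact Metric.mem_ball_self hr⟩
  rw [isOpen_iff_mem_nhds]
  intro x hx
  have hBopen : IsOpen (((x * x₀⁻¹) * ·) '' A) := isOpenMap_mul_left _ A hAopen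
  have hxB : x ∈ (((x * x₀⁻¹) * ·) '' A) := ⟨x₀, hx₀A, by group⟩
  have hBconn : IsPreconnected (((x * x₀⁻¹) * ·) '' A) :=
    hAconn.image _ (continuous_mul_left _).continuousOn
  have hsub : (((x * x₀⁻¹) * ·) '' A) ⊆ connectedComponent x :=
    hBconn.subset_connectedComponent hxB
  rw [← connectedComponent_eq hx] at hsub
  exact mem_nhds_iff.2 ⟨_, hsub, hBopen, hxB⟩

private theorem auxFC_pow {E : Type*} [NormedAddCommGroup E] [NormedSpace ℝ E] [FiniteDimensional ℝ E]
    {H : Type*} [TopologicalSpace H] (I : ModelWithCorners ℝ E H)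
    {G : Type*} [Group G] [TopologicalSpace G] [IsTopologicalGroup G] [ChartedSpace H G]
    [LieGroup I (⊤ : ℕ∞) G] (n : ℕ) (hn : n ≠ 0) :
    Filter.map (fun g : G => g ^ n) (𝓝 1) = 𝓝 1 ∧
      ∃ U ∈ 𝓝 (1 : G), Set.InjOn (fun g : G => g ^ n) U := by
  obtain ⟨q, hq⟩ := interior_extChartAt_target_nonempty I (1 : G)
  set c := extChartAt I (1 : G) with hc
  have hqt : q ∈ c.target := interior_subset hq
  set x₀ := c.symm q with hx₀def
  have hx₀s : x₀ ∈ c.source := c.map_target hqt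
  have hcx₀ : c x₀ = q := c.right_inv hqt
  have hqr : q ∈ interior (Set.range I) :=
    interior_mono (extChartAt_target_subset_range (1 : G)) hq
  have hrange_nhds : Set.range I ∈ 𝓝 q := mem_interior_iff_mem_nhds.1 hqr
  have htarget_nhds : c.target ∈ 𝓝 q := mem_interior_iff_mem_nhds.1 hq
  have hsource_nhds : c.source ∈ 𝓝 x₀ := (isOpen_extChartAt_source (1 : G)).mem_nhds hx₀s
  have hx₀chart : x₀ ∈ (chartAt H (1 : G)).source := by
    rw [← extChartAt_source I]; exact hx₀s
  have hcont_symm : ContinuousAt c.symm q := continuousAt_extChartAt_symm'' hqt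
  have hcont_c : ContinuousAt c x₀ := continuousAt_extChartAt' hx₀s
  have hmapc : Filter.map c (𝓝 x₀) = 𝓝 q := by
    have h := (chartAt H (1 : G)).map_extend_nhds_of_mem_interior_range
      (I := I) hx₀chart (by exact hcx₀ ▸ hqr)
    rw [show (chartAt H (1 : G)).extend I = c from rfl] at h
    rw [h, hcx₀]
  have hmapcs : Filter.map c.symm (𝓝 q) = 𝓝 x₀ := by
    have h1 : (c.symm ∘ c) =ᶠ[𝓝 x₀] id := by
      filter_upwards [hsource_nhds] with g hg
      exact c.left_inv hg
    rw [← hmapc, Filter.map_map, Filter.map_congr h1, Filter.map_id]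
  -- chart representation of smooth maps fixing x₀
  have hone : (1 : WithTop ℕ∞) ≤ ((⊤ : ℕ∞) : WithTop ℕ∞) := by exact_mod_cast le_top
  have hrep : ∀ f : G → G, ContMDiff I I ((⊤ : ℕ∞) : WithTop ℕ∞) f → f x₀ = x₀ →
      ContDiffAt ℝ ((⊤ : ℕ∞) : WithTop ℕ∞) (fun y => c (f (c.symm y))) q := by
    intro f hf hfx
    have h1 := (contMDiffAt_iff_of_mem_source (I := I) (I' := I) (x := (1 : G)) (y := (1 : G))
      hx₀chart (by rw [hfx]; exact hx₀chart)).1 hf.contMDiffAt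
    have h2 := h1.2
    rw [show extChartAt I (1 : G) x₀ = q from hcx₀] at h2
    exact (h2.congr (fun y _ => rfl) rfl).contDiffAt hrange_nhds
  -- the multiplication-style map in charts
  set Mf : E × E → E := fun uv => c (c.symm uv.1 * x₀⁻¹ * c.symm uv.2) with hMf
  have hMf_cd : ContDiffAt ℝ ((⊤ : ℕ∞) : WithTop ℕ∞) Mf (q, q) := by
    have hsm : ContMDiff (I.prod I) I ((⊤ : ℕ∞) : WithTop ℕ∞) (fun p : G × G => p.1 * x₀⁻¹ * p.2) :=
      (contMDiff_fst.mul contMDiff_const).mul contMDiff_snd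
    have hx2 : ((x₀, x₀) : G × G) ∈ (chartAt (ModelProd H H) ((1 : G), (1 : G))).source := by
      simp only [prodChartedSpace_chartAt, OpenPartialHomeomorph.prod_source, mem_prod]
      exact ⟨hx₀chart, hx₀chart⟩
    have hy2 : ((x₀, x₀) : G × G).1 * x₀⁻¹ * ((x₀, x₀) : G × G).2 ∈ (chartAt H (1 : G)).source := by
      have : x₀ * x₀⁻¹ * x₀ = x₀ := by group
      simpa [this] using hx₀chart
    have h1 := (contMDiffAt_iff_of_mem_source (x := ((1 : G), (1 : G))) (y := (1 : G))
      hx2 hy2).1 hsm.contMDiffAt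
    have h2 := h1.2
    have hpt : (extChartAt (I.prod I) ((1 : G), (1 : G))) (x₀, x₀) = (q, q) := by
      rw [extChartAt_prod]
      show (c x₀, c x₀) = (q, q)
      rw [hcx₀]
    rw [hpt] at h2
    have hsymm_pt : ∀ uv : E × E, (extChartAt (I.prod I) ((1 : G), (1 : G))).symm uv
        = (c.symm uv.1, c.symm uv.2) := by
      intro uv
      rw [extChartAt_prod, PartialEquiv.prod_symm]
      rfl
    have heq : ∀ uv : E × E,
        (extChartAt I (1 : G) ∘ (fun p : G × G => p.1 * x₀⁻¹ * p.2) ∘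
          (extChartAt (I.prod I) ((1 : G), (1 : G))).symm) uv = Mf uv := by
      intro uv
      simp only [Function.comp_apply, hsymm_pt]
      rfl
    have h3 : ContDiffWithinAt ℝ ((⊤ : ℕ∞) : WithTop ℕ∞) Mf (Set.range (I.prod I)) (q, q) :=
      h2.congr (fun y _ => (heq y).symm) (heq (q, q)).symm
    refine h3.contDiffAt ?_
    rw [ModelWithCorners.range_prod]
    exact prod_mem_nhds hrange_nhds hrange_nhds
  have hMf_diff : HasFDerivAt Mf (fderiv ℝ Mf (q, q)) (q, q) :=
    (hMf_cd.differentiableAt (by simp)).hasFDerivAt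
  set D := fderiv ℝ Mf (q, q) with hD
  -- slices
  have hslice1 : HasFDerivAt (fun u : E => Mf (u, q))
      (D.comp ((ContinuousLinearMap.id ℝ E).prod 0)) q :=
    HasFDerivAt.comp (x := q) (g := Mf) (f := fun u : E => (u, q)) hMf_diff
      (HasFDerivAt.prodMk (hasFDerivAt_id q) (hasFDerivAt_const q q))
  have hev1 : (fun u : E => Mf (u, q)) =ᶠ[𝓝 q] id := by
    filter_upwards [htarget_nhds] with u hu
    show c (c.symm u * x₀⁻¹ * c.symm q) = u
    rw [← hx₀def, inv_mul_cancel_right, c.right_inv hu]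
  have huniq1 : D.comp ((ContinuousLinearMap.id ℝ E).prod 0) = ContinuousLinearMap.id ℝ E :=
    (hslice1.congr_of_eventuallyEq hev1.symm).unique (hasFDerivAt_id q)
  have hslice2 : HasFDerivAt (fun v : E => Mf (q, v))
      (D.comp ((0 : E →L[ℝ] E).prod (ContinuousLinearMap.id ℝ E))) q :=
    HasFDerivAt.comp (x := q) (g := Mf) (f := fun v : E => (q, v)) hMf_diff
      (HasFDerivAt.prodMk (hasFDerivAt_const q q) (hasFDerivAt_id q))
  have hev2 : (fun v : E => Mf (q, v)) =ᶠ[𝓝 q] id := by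
    filter_upwards [htarget_nhds] with v hv
    show c (c.symm q * x₀⁻¹ * c.symm v) = v
    rw [← hx₀def, mul_inv_cancel, one_mul, c.right_inv hv]
  have huniq2 : D.comp ((0 : E →L[ℝ] E).prod (ContinuousLinearMap.id ℝ E)) =
      ContinuousLinearMap.id ℝ E :=
    (hslice2.congr_of_eventuallyEq hev2.symm).unique (hasFDerivAt_id q)
  have hDapply : ∀ u v : E, D (u, v) = u + v := by
    intro u v
    have e1 : D (u, 0) = u := by
      have := ContinuousLinearMap.ext_iff.1 huniq1 u
      simpa using this
    have e2 : D (0, v) = v := by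
      have := ContinuousLinearMap.ext_iff.1 huniq2 v
      simpa using this
    have : ((u, v) : E × E) = (u, 0) + (0, v) := by simp
    rw [this, map_add, e1, e2]
  -- iterated multiplication in charts
  set Fk : ℕ → E → E := fun k y => c (x₀ * (x₀⁻¹ * c.symm y) ^ k) with hFk
  have hFkq : ∀ k, Fk k q = q := by
    intro k
    simp only [Fk, ← hx₀def]
    simp [hcx₀]
  have hder : ∀ k : ℕ, HasFDerivAt (Fk k) ((k : ℝ) • ContinuousLinearMap.id ℝ E) q := by
    intro k
    induction k with
    | zero =>
      have h0 : Fk 0 = fun _ => q := by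
        funext y; simp [Fk, hcx₀]
      rw [h0]
      simpa using hasFDerivAt_const q q
    | succ k ih =>
      have hcontg : ContinuousAt (fun y => x₀ * (x₀⁻¹ * c.symm y) ^ k) q :=
        (continuousAt_const.mul ((continuousAt_const.mul hcont_symm).pow k))
      have hpre : (fun y => x₀ * (x₀⁻¹ * c.symm y) ^ k) ⁻¹' c.source ∈ 𝓝 q := by
        apply hcontg.preimage_mem_nhds
        have : x₀ * (x₀⁻¹ * c.symm q) ^ k = x₀ := by
          rw [← hx₀def]; simp
        rw [this]; exact hsource_nhds
      have hev : (fun y => Mf (Fk k y, y)) =ᶠ[𝓝 q] Fk (k + 1) := by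
        filter_upwards [htarget_nhds, hpre] with y hyt hys
        show c (c.symm (c (x₀ * (x₀⁻¹ * c.symm y) ^ k)) * x₀⁻¹ * c.symm y)
            = c (x₀ * (x₀⁻¹ * c.symm y) ^ (k + 1))
        rw [c.left_inv hys]
        congr 1
        rw [pow_succ]
        group
      have hg : HasFDerivAt Mf D (Fk k q, q) := by rw [hFkq k]; exact hMf_diff
      have hstep : HasFDerivAt (fun y => Mf (Fk k y, y))
          (D.comp (((k : ℝ) • ContinuousLinearMap.id ℝ E).prod (ContinuousLinearMap.id ℝ E))) q :=
        HasFDerivAt.comp (x := q) (g := Mf) (f := fun y : E => (Fk k y, y)) hg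
          (HasFDerivAt.prodMk ih (hasFDerivAt_id q))
      have hlin : D.comp (((k : ℝ) • ContinuousLinearMap.id ℝ E).prod
          (ContinuousLinearMap.id ℝ E)) = ((k + 1 : ℕ) : ℝ) • ContinuousLinearMap.id ℝ E := by
        ext u
        simp [hDapply, add_smul]
      rw [← hlin]
      exact hstep.congr_of_eventuallyEq hev.symm
  -- smoothness of the chart representative
  have hFn_cd : ContDiffAt ℝ ((⊤ : ℕ∞) : WithTop ℕ∞) (Fk n) q := by
    have hsm : ContMDiff I I ((⊤ : ℕ∞) : WithTop ℕ∞) (fun g : G => x₀ * (x₀⁻¹ * g) ^ n) :=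
      contMDiff_mul_left.comp ((contMDiff_pow n).comp contMDiff_mul_left)
    have := hrep _ hsm (by simp)
    exact this
  have hne : (n : ℝ) ≠ 0 := Nat.cast_ne_zero.2 hn
  have heqv : ∃ eqv : E ≃L[ℝ] E, (eqv : E →L[ℝ] E) = (n : ℝ) • ContinuousLinearMap.id ℝ E := by
    refine ⟨(LinearEquiv.smulOfNeZero ℝ E (n : ℝ) hne).toContinuousLinearEquiv, ?_⟩
    ext u
    simp [LinearEquiv.smulOfNeZero, LinearEquiv.smulOfUnit, Units.smul_def,
      DistribMulAction.toLinearEquiv, DistribMulAction.toLinearMap]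
  obtain ⟨eqv, heqvcoe⟩ := heqv
  have hstrict : HasStrictFDerivAt (Fk n) (eqv : E →L[ℝ] E) q := by
    apply hFn_cd.hasStrictFDerivAt' ?_ (by simp)
    rw [heqvcoe]; exact hder n
  set ph := hstrict.toOpenPartialHomeomorph (Fk n) with hph
  have hphq : q ∈ ph.source := hstrict.mem_toOpenPartialHomeomorph_source
  have hinj : Set.InjOn (Fk n) ph.source := by
    have h := ph.injOn
    rwa [hstrict.toOpenPartialHomeomorph_coe] at h
  have hmapFn : Filter.map (Fk n) (𝓝 q) = 𝓝 q := by
    have h := hstrict.map_nhds_eq_of_equiv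
    rwa [hFkq n] at h
  -- transfer to G
  set fN : G → G := fun g => x₀ * (x₀⁻¹ * g) ^ n with hfN
  have hfN_cont : Continuous fN :=
    continuous_const.mul ((continuous_const.mul continuous_id).pow n)
  have hfNx₀ : fN x₀ = x₀ := by simp [fN]
  have hcomm : ∀ g ∈ c.source, c (fN g) = Fk n (c g) := by
    intro g hg
    simp only [Fk, fN]
    rw [c.left_inv hg]
  have hevN : fN =ᶠ[𝓝 x₀] fun g => c.symm (Fk n (c g)) := by
    have hpre : fN ⁻¹' c.source ∈ 𝓝 x₀ :=
      hfN_cont.continuousAt.preimage_mem_nhds (by rw [hfNx₀]; exact hsource_nhds)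
    filter_upwards [hsource_nhds, hpre] with g hg hg2
    rw [← hcomm g hg, c.left_inv hg2]
  have hmapfN : Filter.map fN (𝓝 x₀) = 𝓝 x₀ := by
    rw [Filter.map_congr hevN]
    rw [show (fun g => c.symm (Fk n (c g))) = c.symm ∘ (Fk n ∘ c) from rfl]
    rw [← Filter.map_map, ← Filter.map_map, hmapc, hmapFn, hmapcs]
  have h1N : ∀ g : G, fN (x₀ * g) = x₀ * g ^ n := by
    intro g; simp [fN, inv_mul_cancel_left]
  constructor
  · have hconj : (fun g : G => g ^ n) = (fun h => x₀⁻¹ * h) ∘ fN ∘ (fun g => x₀ * g) := by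
      funext g
      simp [Function.comp, h1N, inv_mul_cancel_left]
    rw [hconj, ← Filter.map_map, ← Filter.map_map, map_mul_left_nhds_one, hmapfN,
      map_mul_left_nhds]
    simp
  · have hWnh : c.source ∩ c ⁻¹' ph.source ∈ 𝓝 x₀ :=
      inter_mem hsource_nhds
        (hcont_c.preimage_mem_nhds (by rw [hcx₀]; exact ph.open_source.mem_nhds hphq))
    have hinjN : Set.InjOn fN (c.source ∩ c ⁻¹' ph.source) := by
      rintro g₁ ⟨h1s, h1p⟩ g₂ ⟨h2s, h2p⟩ hfe
      have hF : Fk n (c g₁) = Fk n (c g₂) := by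
        rw [← hcomm _ h1s, ← hcomm _ h2s, hfe]
      have hcg : c g₁ = c g₂ := hinj h1p h2p hF
      rw [← c.left_inv h1s, ← c.left_inv h2s, hcg]
    refine ⟨(fun g => x₀ * g) ⁻¹' (c.source ∩ c ⁻¹' ph.source), ?_, ?_⟩
    · exact (continuous_mul_left x₀).continuousAt.preimage_mem_nhds (by rw [mul_one]; exact hWnh)
    · intro g₁ hg₁ g₂ hg₂ he
      have : fN (x₀ * g₁) = fN (x₀ * g₂) := by
        rw [h1N, h1N]
        simpa using congrArg (fun t => x₀ * t) he
      exact mul_left_cancel (hinjN hg₁ hg₂ this)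

private theorem auxFC_central {G : Type*} [Group G] [TopologicalSpace G] [IsTopologicalGroup G] [T2Space G]
    (hFC : ∀ g : G, ({x : G | ∃ a : G, a * g * a⁻¹ = x} : Set G).Finite) :
    ∀ z ∈ connectedComponent (1 : G), ∀ g : G, z * g = g * z := by
  intro z hz g
  have hfin := hFC g
  set f : G → G := fun a => a * g * a⁻¹ with hf
  have hfc : Continuous f := (continuous_id.mul continuous_const).mul continuous_inv
  have hVclosed : IsClosed (f ⁻¹' {g}) := isClosed_singleton.preimage hfc
  have hVopen : IsOpen (f ⁻¹' {g}) := by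
    have hcl : IsClosed (f ⁻¹' ({x : G | ∃ a : G, a * g * a⁻¹ = x} \ {g})) :=
      ((hfin.subset diff_subset).isClosed).preimage hfc
    have heq : f ⁻¹' {g} = (f ⁻¹' ({x : G | ∃ a : G, a * g * a⁻¹ = x} \ {g}))ᶜ := by
      ext a
      simp only [mem_preimage, mem_singleton_iff, mem_compl_iff, mem_diff, mem_setOf_eq]
      constructor
      · intro h hh; exact hh.2 h
      · intro h; by_contra hne; exact h ⟨⟨a, rfl⟩, hne⟩
    rw [heq]
    exact hcl.isOpen_compl
  have h1V : (1 : G) ∈ f ⁻¹' {g} := by simp [hf]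
  have hzV := IsClopen.connectedComponent_subset ⟨hVclosed, hVopen⟩ h1V hz
  have hz' : z * g * z⁻¹ = g := hzV
  calc z * g = z * g * z⁻¹ * z := by group
  _ = g * z := by rw [hz']

private theorem auxFC_main
    {E : Type*} [NormedAddCommGroup E] [NormedSpace ℝ E] [FiniteDimensional ℝ E]
    {H : Type*} [TopologicalSpace H] (I : ModelWithCorners ℝ E H)
    {G : Type*} [Group G] [TopologicalSpace G] [IsTopologicalGroup G] [ChartedSpace H G]
    [LieGroup I (⊤ : ℕ∞) G] [CompactSpace G] [T2Space G]
    (hFC : ∀ g : G, ({x : G | ∃ a : G, a * g * a⁻¹ = x} : Set G).Finite)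
    (aux_open : IsOpen (connectedComponent (1 : G)))
    (aux_central : ∀ z ∈ connectedComponent (1 : G), ∀ g : G, z * g = g * z)
    (aux_pow : ∀ n : ℕ, n ≠ 0 →
      Filter.map (fun g : G => g ^ n) (𝓝 1) = 𝓝 1 ∧
        ∃ U ∈ 𝓝 (1 : G), Set.InjOn (fun g : G => g ^ n) U) :
    ∃ (Δ : Type) (_ : Group Δ) (_ : Fintype Δ) (_ : TopologicalSpace Δ)
      (φ : (↥(Subgroup.connectedComponentOfOne G) × Δ) →* G),
      DiscreteTopology Δ ∧
      Continuous φ ∧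
      Function.Surjective φ ∧
      (∀ x : ↥(Subgroup.connectedComponentOfOne G), φ (x, 1) = (x : G)) ∧
      (φ.ker : Set (↥(Subgroup.connectedComponentOfOne G) × Δ)).Finite ∧
      (∀ a b : φ.ker, (a : ↥(Subgroup.connectedComponentOfOne G) × Δ).1 =
        (b : ↥(Subgroup.connectedComponentOfOne G) × Δ).1 → a = b) ∧
      (∀ a b : φ.ker, (a : ↥(Subgroup.connectedComponentOfOne G) × Δ).2 =
        (b : ↥(Subgroup.connectedComponentOfOne G) × Δ).2 → a = b) := by
  classical
  set Z := Subgroup.connectedComponentOfOne G with hZdef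
  have hZset : (Z : Set G) = connectedComponent (1 : G) := rfl
  have hZopen : IsOpen (Z : Set G) := by rw [hZset]; exact aux_open
  have hcent : ∀ z ∈ Z, ∀ g : G, z * g = g * z := fun z hz g => aux_central z hz g
  haveI hZnormal : Z.Normal := by
    constructor
    intro z hz g
    rw [← hcent z hz g, mul_inv_cancel_right]
    exact hz
  -- finite quotient
  haveI hQfin : Finite (G ⧸ Z) := by
    have hcover : (Set.univ : Set G) ⊆ ⋃ g : G, (fun h => g * h) '' (Z : Set G) := by
      intro g _
      exact mem_iUnion.2 ⟨g, ⟨1, Z.one_mem, by simp⟩⟩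
    obtain ⟨t, ht⟩ := isCompact_univ.elim_finite_subcover _
      (fun g : G => isOpenMap_mul_left g _ hZopen) hcover
    refine Finite.of_surjective (fun i : t => (QuotientGroup.mk (i : G) : G ⧸ Z)) ?_
    intro a
    obtain ⟨g, rfl⟩ := QuotientGroup.mk_surjective a
    have hg := ht (mem_univ g)
    rw [mem_iUnion₂] at hg
    obtain ⟨i, hi, z, hzZ, hz⟩ := hg
    refine ⟨⟨i, hi⟩, ?_⟩
    show QuotientGroup.mk i = QuotientGroup.mk g
    rw [← hz]
    exact (QuotientGroup.mk_mul_of_mem i hzZ).symm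
  haveI : Fintype (G ⧸ Z) := Fintype.ofFinite _
  set n := Nat.card (G ⧸ Z) with hn
  have hn0 : n ≠ 0 := Nat.card_pos.ne'
  obtain ⟨hmap, U, hU, hUinj⟩ := aux_pow n hn0
  have h1U : (1 : G) ∈ U := mem_of_mem_nhds hU
  -- divisibility in Z
  have hdivset : ∀ g ∈ (Z : Set G), ∃ w ∈ (Z : Set G), w ^ n = g := by
    set K : Subgroup G :=
      { carrier := (fun z : G => z ^ n) '' (Z : Set G)
        one_mem' := ⟨1, Z.one_mem, one_pow n⟩
        mul_mem' := by
          rintro a b ⟨x, hx, rfl⟩ ⟨y, hy, rfl⟩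
          have hc : Commute x y := hcent x hx y
          exact ⟨x * y, Z.mul_mem hx hy, by simpa using hc.mul_pow n⟩
        inv_mem' := by
          rintro a ⟨x, hx, rfl⟩
          exact ⟨x⁻¹, Z.inv_mem hx, by simpa using inv_pow x n⟩ } with hK
    have hKnhds : (K : Set G) ∈ 𝓝 (1 : G) := by
      rw [← hmap, mem_map]
      refine mem_of_superset (hZopen.mem_nhds Z.one_mem) ?_
      intro z hz
      exact ⟨z, hz, rfl⟩
    have hKopen : IsOpen (K : Set G) := Subgroup.isOpen_of_mem_nhds K hKnhds
    have hKclosed : IsClosed (K : Set G) := Subgroup.isClosed_of_isOpen K hKopen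
    have hsub : connectedComponent (1 : G) ⊆ (K : Set G) :=
      IsClopen.connectedComponent_subset ⟨hKclosed, hKopen⟩ K.one_mem
    intro g hg
    obtain ⟨w, hw, hwn⟩ := hsub (by rwa [← hZset])
    exact ⟨w, hw, hwn⟩
  -- finite n-torsion inside Z
  set Zn : Set G := {g : G | g ∈ Z ∧ g ^ n = 1} with hZn
  have hZn_fin : Zn.Finite := by
    have hTclosed : IsClosed Zn := by
      have h1 : IsClosed (Z : Set G) := by rw [hZset]; exact isClosed_connectedComponent
      have h2 : IsClosed {g : G | g ^ n = 1} := isClosed_singleton.preimage (continuous_pow n)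
      exact h1.inter h2
    have hdisc : DiscreteTopology Zn := by
      rw [discreteTopology_subtype_iff]
      intro a ha
      have hVnh : (fun b => b * a⁻¹) ⁻¹' U ∈ 𝓝 a := by
        apply (continuous_mul_right a⁻¹).continuousAt.preimage_mem_nhds
        rw [show a * a⁻¹ = 1 by group]
        exact hU
      rw [← Filter.empty_mem_iff_bot]
      have hint : ((fun b => b * a⁻¹) ⁻¹' U \ {a}) ∩ Zn = ∅ := by
        ext b
        simp only [mem_inter_iff, mem_diff, mem_preimage, mem_singleton_iff, mem_empty_iff_false,
          iff_false, not_and, and_imp]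
        intro hbU hba hbZ
        have hcb : Commute b a⁻¹ := (hcent a⁻¹ (Z.inv_mem ha.1) b).symm
        have hpow : (b * a⁻¹) ^ n = 1 := by
          rw [hcb.mul_pow, hbZ.2, inv_pow, ha.2, inv_one, one_mul]
        exact hba (mul_inv_eq_one.1 (hUinj hbU h1U (by simp [hpow])))
      have : ((fun b => b * a⁻¹) ⁻¹' U \ {a}) ∩ Zn ∈ 𝓝[≠] a ⊓ 𝓟 Zn :=
        Filter.inter_mem_inf (diff_mem_nhdsWithin_compl hVnh {a}) (Filter.mem_principal_self Zn)
      rwa [hint] at this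
    exact hTclosed.isCompact.finite (isDiscrete_iff_discreteTopology.mpr hdisc)
  have hZn_one : (1 : G) ∈ Zn := ⟨Z.one_mem, one_pow n⟩
  have hZn_mul : ∀ x ∈ Zn, ∀ y ∈ Zn, x * y ∈ Zn := by
    intro x hx y hy
    refine ⟨Z.mul_mem hx.1 hy.1, ?_⟩
    have hc : Commute x y := hcent x hx.1 y
    rw [hc.mul_pow, hx.2, hy.2, one_mul]
  have hZn_inv : ∀ x ∈ Zn, x⁻¹ ∈ Zn := fun x hx =>
    ⟨Z.inv_mem hx.1, by rw [inv_pow, hx.2, inv_one]⟩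
  -- section of the quotient
  set s : (G ⧸ Z) → G := fun a => if a = 1 then 1 else Quotient.out a with hsdef
  have hsmk : ∀ a : G ⧸ Z, (QuotientGroup.mk (s a) : G ⧸ Z) = a := by
    intro a
    by_cases h : a = 1
    · simp [hsdef, h]
    · simp only [hsdef, if_neg h]
      exact QuotientGroup.out_eq' a
  have hs1 : s 1 = 1 := by simp [hsdef]
  set co : (G ⧸ Z) → (G ⧸ Z) → G := fun a b => s a * s b * (s (a * b))⁻¹ with hcodef
  have hco_mem : ∀ a b, co a b ∈ Z := by
    intro a b
    rw [← QuotientGroup.eq_one_iff]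
    show (QuotientGroup.mk (s a * s b * (s (a * b))⁻¹) : G ⧸ Z) = 1
    rw [QuotientGroup.mk_mul, QuotientGroup.mk_mul, QuotientGroup.mk_inv, hsmk, hsmk, hsmk]
    group
  have hsplit : ∀ a b, s a * s b = co a b * s (a * b) := by
    intro a b
    show s a * s b = s a * s b * (s (a * b))⁻¹ * s (a * b)
    rw [inv_mul_cancel_right]
  have hco1 : ∀ b, co 1 b = 1 := by
    intro b
    show s 1 * s b * (s (1 * b))⁻¹ = 1
    rw [hs1, one_mul, one_mul, mul_inv_cancel]
  have hcoc : ∀ a b d, co a b * co (a * b) d = co b d * co a (b * d) := by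
    intro a b d
    have h1 : (co a b * co (a * b) d) * s (a * b * d) = (s a * s b) * s d := by
      calc (co a b * co (a * b) d) * s (a * b * d)
          = co a b * (co (a * b) d * s ((a * b) * d)) := mul_assoc _ _ _
        _ = co a b * (s (a * b) * s d) := congrArg (fun t => co a b * t) (hsplit (a * b) d).symm
        _ = (co a b * s (a * b)) * s d := (mul_assoc _ _ _).symm
        _ = (s a * s b) * s d := congrArg (fun t => t * s d) (hsplit a b).symm
    have h2 : (co b d * co a (b * d)) * s (a * (b * d)) = s a * (s b * s d) := by
      calc (co b d * co a (b * d)) * s (a * (b * d))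
          = co b d * (co a (b * d) * s (a * (b * d))) := mul_assoc _ _ _
        _ = co b d * (s a * s (b * d)) := congrArg (fun t => co b d * t) (hsplit a (b * d)).symm
        _ = (co b d * s a) * s (b * d) := (mul_assoc _ _ _).symm
        _ = (s a * co b d) * s (b * d) :=
            congrArg (fun t => t * s (b * d)) (hcent (co b d) (hco_mem b d) (s a))
        _ = s a * (co b d * s (b * d)) := mul_assoc _ _ _
        _ = s a * (s b * s d) := congrArg (fun t => s a * t) (hsplit b d).symm
    have h3 : a * b * d = a * (b * d) := mul_assoc a b d
    apply mul_right_cancel (b := s (a * b * d))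
    rw [h1, h3, h2]
    exact mul_assoc _ _ _
  -- pass to the commutative group ↥Z
  letI : CommGroup ↥Z :=
    { (Subgroup.toGroup Z) with
      mul_comm := fun a b => Subtype.ext (hcent (↑a) a.2 (↑b)) }
  set γ : (G ⧸ Z) → (G ⧸ Z) → ↥Z := fun a b => ⟨co a b, hco_mem a b⟩ with hγdef
  set σ : (G ⧸ Z) → ↥Z := fun a => ∏ b : G ⧸ Z, γ a b with hσdef
  have hγcoc : ∀ a b d, γ a b * γ (a * b) d = γ b d * γ a (b * d) :=
    fun a b d => Subtype.ext (hcoc a b d)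
  have hσkey : ∀ a b, (γ a b) ^ n = σ a * σ b * (σ (a * b))⁻¹ := by
    intro a b
    have h1 : ∏ d : G ⧸ Z, (γ a b * γ (a * b) d) = ∏ d : G ⧸ Z, (γ b d * γ a (b * d)) :=
      Finset.prod_congr rfl fun d _ => hγcoc a b d
    rw [Finset.prod_mul_distrib, Finset.prod_mul_distrib, Finset.prod_const] at h1
    have hre : ∏ d : G ⧸ Z, γ a (b * d) = ∏ d : G ⧸ Z, γ a d :=
      Fintype.prod_equiv (Equiv.mulLeft b) _ _ fun d => rfl
    rw [hre] at h1
    have hcard : (Finset.univ : Finset (G ⧸ Z)).card = n := by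
      rw [Finset.card_univ, hn, Nat.card_eq_fintype_card]
    rw [hcard] at h1
    rw [eq_mul_inv_iff_mul_eq]
    show γ a b ^ n * σ (a * b) = σ a * σ b
    rw [hσdef]
    simp only
    rw [h1, mul_comm]
  -- choose n-th roots
  have hdivZ : ∀ z : ↥Z, ∃ w : ↥Z, w ^ n = z := by
    intro z
    obtain ⟨w, hw, hwn⟩ := hdivset (↑z) z.2
    exact ⟨⟨w, hw⟩, Subtype.ext (by simpa using hwn)⟩
  choose τ hτ using fun a => hdivZ (σ a)
  set s' : (G ⧸ Z) → G := fun a => (↑(τ a))⁻¹ * s a with hs'def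
  have hs'mk : ∀ a : G ⧸ Z, (QuotientGroup.mk (s' a) : G ⧸ Z) = a := by
    intro a
    show (QuotientGroup.mk ((↑(τ a))⁻¹ * s a) : G ⧸ Z) = a
    rw [QuotientGroup.mk_mul, QuotientGroup.mk_inv,
      (QuotientGroup.eq_one_iff _).2 (τ a).2, inv_one, one_mul, hsmk]
  set co' : (G ⧸ Z) → (G ⧸ Z) → G := fun a b => s' a * s' b * (s' (a * b))⁻¹ with hco'def
  have hco'_mem : ∀ a b, co' a b ∈ Z := by
    intro a b
    rw [← QuotientGroup.eq_one_iff]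
    show (QuotientGroup.mk (s' a * s' b * (s' (a * b))⁻¹) : G ⧸ Z) = 1
    rw [QuotientGroup.mk_mul, QuotientGroup.mk_mul, QuotientGroup.mk_inv, hs'mk, hs'mk, hs'mk]
    group
  have hsplit' : ∀ a b, s' a * s' b = co' a b * s' (a * b) := by
    intro a b
    show s' a * s' b = s' a * s' b * (s' (a * b))⁻¹ * s' (a * b)
    rw [inv_mul_cancel_right]
  have hco'_eq : ∀ a b, co' a b = ↑((τ a)⁻¹ * (τ b)⁻¹ * τ (a * b) * γ a b) := by
    intro a b
    have h1 : s a * (↑(τ b))⁻¹ = (↑(τ b))⁻¹ * s a :=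
      (hcent _ (Z.inv_mem (τ b).2) (s a)).symm
    have h2 : (↑(τ (a * b)) : G) * co a b = co a b * ↑(τ (a * b)) :=
      hcent _ (τ (a * b)).2 (co a b)
    calc co' a b
        = (↑(τ a))⁻¹ * (s a * (↑(τ b))⁻¹) * (s b * (s (a * b))⁻¹) * ↑(τ (a * b)) := by
          show (↑(τ a))⁻¹ * s a * ((↑(τ b))⁻¹ * s b) * ((↑(τ (a * b)))⁻¹ * s (a * b))⁻¹ = _
          group
      _ = (↑(τ a))⁻¹ * ((↑(τ b))⁻¹ * s a) * (s b * (s (a * b))⁻¹) * ↑(τ (a * b)) := by rw [h1]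
      _ = (↑(τ a))⁻¹ * (↑(τ b))⁻¹ * (co a b * ↑(τ (a * b))) := by
          show _ = (↑(τ a))⁻¹ * (↑(τ b))⁻¹ * ((s a * s b * (s (a * b))⁻¹) * ↑(τ (a * b)))
          group
      _ = (↑(τ a))⁻¹ * (↑(τ b))⁻¹ * (↑(τ (a * b)) * co a b) := by rw [← h2]
      _ = ↑((τ a)⁻¹ * (τ b)⁻¹ * τ (a * b) * γ a b) := by
          push_cast
          show _ = (↑(τ a))⁻¹ * (↑(τ b))⁻¹ * ↑(τ (a * b)) * co a b
          group
  have hco'_pow : ∀ a b, (co' a b) ^ n = 1 := by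
    intro a b
    rw [hco'_eq a b]
    have habc : ∀ x y z : ↥Z, x⁻¹ * y⁻¹ * z * (x * y * z⁻¹) = 1 := by
      intro x y z
      rw [show x * y * z⁻¹ = z⁻¹ * (x * y) from mul_comm _ _,
        show x⁻¹ * y⁻¹ = (y * x)⁻¹ from (mul_inv_rev y x).symm,
        mul_assoc ((y * x)⁻¹) z (z⁻¹ * (x * y)), ← mul_assoc z z⁻¹ (x * y),
        mul_inv_cancel, one_mul, mul_comm x y, inv_mul_cancel]
    have hZcalc : ((τ a)⁻¹ * (τ b)⁻¹ * τ (a * b) * γ a b) ^ n = 1 := by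
      rw [mul_pow, mul_pow, mul_pow, inv_pow, inv_pow, hτ a, hτ b, hτ (a * b), hσkey a b]
      exact habc _ _ _
    rw [← SubgroupClass.coe_pow, hZcalc, OneMemClass.coe_one]
  have hσ1 : σ 1 = 1 := by
    rw [hσdef]
    simp only
    apply Finset.prod_eq_one
    intro b _
    exact Subtype.ext (hco1 b)
  have hτ1 : (↑(τ 1) : G) ∈ Zn := by
    refine ⟨(τ 1).2, ?_⟩
    have h := hτ 1
    rw [hσ1] at h
    rw [← SubgroupClass.coe_pow, h, OneMemClass.coe_one]
  have hco'Zn : ∀ a b, co' a b ∈ Zn := fun a b => ⟨hco'_mem a b, hco'_pow a b⟩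
  have hs'1 : s' 1 = (↑(τ 1))⁻¹ := by
    show (↑(τ 1))⁻¹ * s 1 = (↑(τ 1))⁻¹
    rw [hs1, mul_one]
  -- the finite supplement
  set Δ' : Subgroup G :=
    { carrier := {g : G | ∃ z ∈ Zn, ∃ a : G ⧸ Z, g = z * s' a}
      one_mem' := ⟨↑(τ 1), hτ1, 1, by rw [hs'1, mul_inv_cancel]⟩
      mul_mem' := by
        rintro x y ⟨z, hz, a, rfl⟩ ⟨w, hw, b, rfl⟩
        refine ⟨z * w * co' a b, hZn_mul _ (hZn_mul _ hz _ hw) _ (hco'Zn a b), a * b, ?_⟩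
        calc (z * s' a) * (w * s' b)
            = z * ((s' a * w) * s' b) := by group
          _ = z * ((w * s' a) * s' b) := by rw [← hcent w hw.1 (s' a)]
          _ = (z * w) * (s' a * s' b) := by group
          _ = (z * w) * (co' a b * s' (a * b)) := by rw [hsplit' a b]
          _ = z * w * co' a b * s' (a * b) := by group
      inv_mem' := by
        rintro x ⟨z, hz, a, rfl⟩
        have hu : co' a a⁻¹ * (↑(τ 1))⁻¹ ∈ Zn :=
          hZn_mul _ (hco'Zn a a⁻¹) _ (hZn_inv _ hτ1)
        refine ⟨(co' a a⁻¹ * (↑(τ 1))⁻¹)⁻¹ * z⁻¹,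
          hZn_mul _ (hZn_inv _ hu) _ (hZn_inv _ hz), a⁻¹, ?_⟩
        have h1 : s' a * s' a⁻¹ = co' a a⁻¹ * (↑(τ 1))⁻¹ := by
          rw [hsplit' a a⁻¹, mul_inv_cancel, hs'1]
        have h2 : (s' a)⁻¹ = s' a⁻¹ * (co' a a⁻¹ * (↑(τ 1))⁻¹)⁻¹ := by
          rw [← h1]; group
        have h3 : s' a⁻¹ * (co' a a⁻¹ * (↑(τ 1))⁻¹)⁻¹
            = (co' a a⁻¹ * (↑(τ 1))⁻¹)⁻¹ * s' a⁻¹ :=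
          (hcent _ (Z.inv_mem (Z.mul_mem (hco'Zn a a⁻¹).1 (Z.inv_mem hτ1.1))) (s' a⁻¹)).symm
        have h4 : s' a⁻¹ * z⁻¹ = z⁻¹ * s' a⁻¹ :=
          (hcent _ (Z.inv_mem hz.1) (s' a⁻¹)).symm
        calc (z * s' a)⁻¹
            = (s' a)⁻¹ * z⁻¹ := by group
          _ = (s' a⁻¹ * (co' a a⁻¹ * (↑(τ 1))⁻¹)⁻¹) * z⁻¹ := by rw [← h2]
          _ = ((co' a a⁻¹ * (↑(τ 1))⁻¹)⁻¹ * s' a⁻¹) * z⁻¹ := by rw [h3]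
          _ = (co' a a⁻¹ * (↑(τ 1))⁻¹)⁻¹ * (s' a⁻¹ * z⁻¹) := by group
          _ = (co' a a⁻¹ * (↑(τ 1))⁻¹)⁻¹ * (z⁻¹ * s' a⁻¹) := by rw [h4]
          _ = ((co' a a⁻¹ * (↑(τ 1))⁻¹)⁻¹ * z⁻¹) * s' a⁻¹ := by group } with hΔ'def
  have hΔ'fin : (Δ' : Set G).Finite := by
    have hsub : (Δ' : Set G) ⊆
        (fun p : G × (G ⧸ Z) => p.1 * s' p.2) '' (Zn ×ˢ (Set.univ : Set (G ⧸ Z))) := by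
      rintro g ⟨z, hz, a, rfl⟩
      exact ⟨(z, a), ⟨hz, mem_univ a⟩, rfl⟩
    exact ((hZn_fin.prod finite_univ).image _).subset hsub
  have hcover : ∀ g : G, ∃ w ∈ Z, ∃ d ∈ Δ', g = w * d := by
    intro g
    have hw : g * (s' (QuotientGroup.mk g : G ⧸ Z))⁻¹ ∈ Z := by
      rw [← QuotientGroup.eq_one_iff]
      rw [QuotientGroup.mk_mul, QuotientGroup.mk_inv, hs'mk]
      group
    exact ⟨g * (s' (QuotientGroup.mk g))⁻¹, hw, s' (QuotientGroup.mk g),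
      ⟨1, hZn_one, QuotientGroup.mk g, (one_mul _).symm⟩, by group⟩
  -- transfer Δ' to a finite group in `Type`
  haveI hfinΔ' : Finite ↥Δ' := hΔ'fin.to_subtype
  obtain ⟨Δ, grpΔ, fintΔ, ⟨eΔ⟩⟩ :=
    (Finite.exists_type_univ_nonempty_mulEquiv ↥Δ' :
      ∃ (Δ : Type) (_ : Group Δ) (_ : Fintype Δ), Nonempty (↥Δ' ≃* Δ))
  set ψ : Δ →* G := Δ'.subtype.comp eΔ.symm.toMonoidHom with hψdef
  have hψinj : Function.Injective ψ := Δ'.subtype_injective.comp eΔ.symm.injective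
  have hψval : ∀ d : Δ, ψ d = ↑(eΔ.symm d) := fun d => rfl
  have hcommφ : ∀ (z : ↥Z) (d : Δ), Commute (Z.subtype z) (ψ d) :=
    fun z d => hcent (↑z) z.2 (ψ d)
  letI topΔ : TopologicalSpace Δ := ⊥
  haveI discΔ : DiscreteTopology Δ := ⟨rfl⟩
  set φ : (↥Z × Δ) →* G := (Z.subtype).noncommCoprod ψ hcommφ with hφdef
  have hφval : ∀ p : ↥Z × Δ, φ p = ↑p.1 * ψ p.2 := fun p => rfl
  refine ⟨Δ, grpΔ, fintΔ, topΔ, φ, discΔ, ?_, ?_, ?_, ?_, ?_, ?_⟩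
  · -- continuity
    have hc : Continuous fun p : ↥Z × Δ => (↑p.1 : G) * ψ p.2 :=
      (continuous_subtype_val.comp continuous_fst).mul
        ((continuous_of_discreteTopology (f := fun d : Δ => ψ d)).comp continuous_snd)
    exact hc
  · -- surjectivity
    intro g
    obtain ⟨w, hw, d, hd, rfl⟩ := hcover g
    refine ⟨(⟨w, hw⟩, eΔ ⟨d, hd⟩), ?_⟩
    rw [hφval]
    simp [hψval]
  · -- restriction to the identity component
    intro x
    rw [hφval]
    simp
  · -- finite kernel
    apply Set.Finite.of_finite_image (f := Prod.snd)
    · exact Set.Finite.subset Set.finite_univ (subset_univ _)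
    · rintro ⟨x₁, d₁⟩ h₁ ⟨x₂, d₂⟩ h₂ h
      simp only at h
      subst h
      rw [SetLike.mem_coe, MonoidHom.mem_ker, hφval] at h₁ h₂
      have hx : (↑x₁ : G) = ↑x₂ := by
        have e1 : (↑x₁ : G) = (ψ d₁)⁻¹ := eq_inv_of_mul_eq_one_left h₁
        have e2 : (↑x₂ : G) = (ψ d₁)⁻¹ := eq_inv_of_mul_eq_one_left h₂
        rw [e1, e2]
      exact Prod.ext (Subtype.ext hx) rfl
  · -- first projection injective on the kernel
    rintro ⟨⟨x₁, d₁⟩, h₁⟩ ⟨⟨x₂, d₂⟩, h₂⟩ h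
    simp only at h
    rw [MonoidHom.mem_ker, hφval] at h₁ h₂
    subst h
    have hψeq : ψ d₁ = ψ d₂ := by
      have e1 : ψ d₁ = (↑x₁ : G)⁻¹ := eq_inv_of_mul_eq_one_right h₁
      have e2 : ψ d₂ = (↑x₁ : G)⁻¹ := eq_inv_of_mul_eq_one_right h₂
      rw [e1, e2]
    exact Subtype.ext (Prod.ext rfl (hψinj hψeq))
  · -- second projection injective on the kernel
    rintro ⟨⟨x₁, d₁⟩, h₁⟩ ⟨⟨x₂, d₂⟩, h₂⟩ h
    simp only at h
    rw [MonoidHom.mem_ker, hφval] at h₁ h₂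
    subst h
    have hx : (↑x₁ : G) = ↑x₂ := by
      have e1 : (↑x₁ : G) = (ψ d₁)⁻¹ := eq_inv_of_mul_eq_one_left h₁
      have e2 : (↑x₂ : G) = (ψ d₁)⁻¹ := eq_inv_of_mul_eq_one_left h₂
      rw [e1, e2]
    exact Subtype.ext (Prod.ext (Subtype.ext hx) rfl)

/-- Structure theorem for compact Lie FC groups: a compact Lie group `G` all of whose conjugacy
classes are finite is a quotient of `G⁰ × Δ` for a finite group `Δ`, via a continuous surjection
restricting to the inclusion on `G⁰`, whose kernel `N` is finite and projects injectively to
both factors (so `N` embeds diagonally, consisting of elements of the form `(n, n⁻¹)`). -/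
theorem compact_lie_FC_structure
    {E : Type*} [NormedAddCommGroup E] [NormedSpace ℝ E] [FiniteDimensional ℝ E]
    {H : Type*} [TopologicalSpace H] (I : ModelWithCorners ℝ E H)
    {G : Type*} [Group G] [TopologicalSpace G] [IsTopologicalGroup G] [ChartedSpace H G]
    [LieGroup I (⊤ : ℕ∞) G] [CompactSpace G] [T2Space G]
    (hFC : ∀ g : G, ({x : G | ∃ a : G, a * g * a⁻¹ = x} : Set G).Finite) :
    ∃ (Δ : Type) (_ : Group Δ) (_ : Fintype Δ) (_ : TopologicalSpace Δ)
      (φ : (↥(Subgroup.connectedComponentOfOne G) × Δ) →* G),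
      DiscreteTopology Δ ∧
      Continuous φ ∧
      Function.Surjective φ ∧
      (∀ x : ↥(Subgroup.connectedComponentOfOne G), φ (x, 1) = (x : G)) ∧
      (φ.ker : Set (↥(Subgroup.connectedComponentOfOne G) × Δ)).Finite ∧
      (∀ a b : φ.ker, (a : ↥(Subgroup.connectedComponentOfOne G) × Δ).1 =
        (b : ↥(Subgroup.connectedComponentOfOne G) × Δ).1 → a = b) ∧
      (∀ a b : φ.ker, (a : ↥(Subgroup.connectedComponentOfOne G) × Δ).2 =
        (b : ↥(Subgroup.connectedComponentOfOne G) × Δ).2 → a = b) :=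
  auxFC_main I hFC (auxFC_open I) (auxFC_central hFC) (fun n hn => auxFC_pow I n hn)
end

section
/- Let G be a compact Hausdorff topological group whose FC-centre F = {g ∈ G : the conjugacy class of g in G is finite} is an open subgroup of G. Then for every g ∈ F, μ²(α⁻¹(g)) = μ²(α⁻¹(g) ∩ (F × F)); that is, the fiber of the commutator map of G over g has the same measure as its intersection with F × F. -/
open MeasureTheory
open scoped ENNReal

section Aux

variable {G : Type*} [Group G] [TopologicalSpace G] [IsTopologicalGroup G]
  [T2Space G] [MeasurableSpace G] [BorelSpace G]

/-- If `x` has infinite conjugacy class, then the set of elements conjugating `x` to any fixed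
element `c` is contained in an open set of measure at most `1/n`. -/
lemma small_conj_nbhd (μ : Measure G) [μ.IsHaarMeasure] [IsProbabilityMeasure μ]
    (x : G) (hx : ({z : G | ∃ a : G, a * x * a⁻¹ = z} : Set G).Infinite) (c : G) (n : ℕ) :
    ∃ W : Set G, IsOpen W ∧ μ W ≤ (n : ℝ≥0∞)⁻¹ ∧ {y : G | y * x * y⁻¹ = c} ⊆ W := by
  classical
  have f := hx.natEmbedding
  set k : Fin n → G := fun i => (f (i : ℕ) : G) with hk
  have hkinj : Function.Injective k := by
    intro i j h
    have := f.injective (Subtype.ext h)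
    exact Fin.ext (by exact_mod_cast this)
  have hka : ∀ i : Fin n, ∃ a : G, a * x * a⁻¹ = k i := fun i => (f (i : ℕ)).2
  choose a ha using hka
  -- pairwise disjoint open neighbourhoods of the `k i`
  have hsep : ∀ i j : Fin n, ∃ AB : Set G × Set G,
      IsOpen AB.1 ∧ IsOpen AB.2 ∧ k i ∈ AB.1 ∧
        (i ≠ j → k j ∈ AB.2 ∧ Disjoint AB.1 AB.2) := by
    intro i j
    by_cases hij : i = j
    · exact ⟨(Set.univ, Set.univ), isOpen_univ, isOpen_univ, trivial,
        fun h => absurd hij h⟩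
    · have hkk : k i ≠ k j := fun h => hij (hkinj h)
      obtain ⟨A, B, hA, hB, hiA, hjB, hAB⟩ := t2_separation hkk
      exact ⟨(A, B), hA, hB, hiA, fun _ => ⟨hjB, hAB⟩⟩
  choose AB hAB1 hAB2 hABmem hABdis using hsep
  set V : Fin n → Set G :=
    fun i => ⋂ j, ((AB i j).1 ∩ if j = i then Set.univ else (AB j i).2) with hV
  have hVopen : ∀ i, IsOpen (V i) := by
    intro i
    refine isOpen_iInter_of_finite fun j => (hAB1 i j).inter ?_
    split_ifs with h
    · exact isOpen_univ
    · exact hAB2 j i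
  have hkV : ∀ i, k i ∈ V i := by
    intro i
    refine Set.mem_iInter.2 fun j => ⟨hABmem i j, ?_⟩
    split_ifs with h
    · trivial
    · exact (hABdis j i h).1
  have hVdis : ∀ i j, i ≠ j → Disjoint (V i) (V j) := by
    intro i j hij
    have h1 : V i ⊆ (AB i j).1 := fun y hy => (Set.mem_iInter.1 hy j).1
    have h2 : V j ⊆ (AB i j).2 := by
      intro y hy
      have h3 := (Set.mem_iInter.1 hy i).2
      rwa [if_neg hij] at h3
    exact ((hABdis i j hij).2).mono h1 h2
  set O : Set G := ⋂ i, (fun y : G => (a i * y) * x * (a i * y)⁻¹) ⁻¹' V i with hO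
  have hOopen : IsOpen O :=
    isOpen_iInter_of_finite fun i => (hVopen i).preimage (by fun_prop)
  have hCO : {y : G | y * x * y⁻¹ = x} ⊆ O := by
    intro y hy
    simp only [Set.mem_setOf_eq] at hy
    refine Set.mem_iInter.2 fun i => ?_
    show (a i * y) * x * (a i * y)⁻¹ ∈ V i
    have h1 : (a i * y) * x * (a i * y)⁻¹ = a i * (y * x * y⁻¹) * (a i)⁻¹ := by group
    rw [h1, hy, ha i]
    exact hkV i
  have hOsmall : μ O ≤ (n : ℝ≥0∞)⁻¹ := by
    rw [ENNReal.le_inv_iff_mul_le]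
    set T : Fin n → Set G := fun i => (fun z => (a i)⁻¹ * z) ⁻¹' O with hT
    have hTopen : ∀ i, IsOpen (T i) := fun i => hOopen.preimage (by fun_prop)
    have hTμ : ∀ i, μ (T i) = μ O := fun i => measure_preimage_mul μ _ O
    have hmemV : ∀ i z, z ∈ T i → z * x * z⁻¹ ∈ V i := by
      intro i z hz
      have h1 := Set.mem_iInter.1 hz i
      simp only [Set.mem_preimage] at h1
      have h2 : a i * ((a i)⁻¹ * z) * x * (a i * ((a i)⁻¹ * z))⁻¹ = z * x * z⁻¹ := by group
      rwa [h2] at h1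
    have hTdis : Pairwise (Function.onFun Disjoint T) := by
      intro i j hij
      refine Set.disjoint_left.2 fun z hzi hzj => ?_
      exact Set.disjoint_left.1 (hVdis i j hij) (hmemV i z hzi) (hmemV j z hzj)
    have hsum : ∑' i : Fin n, μ (T i) ≤ 1 := by
      rw [← measure_iUnion hTdis fun i => (hTopen i).measurableSet]
      exact prob_le_one
    rw [tsum_fintype] at hsum
    simp only [hTμ] at hsum
    rw [Finset.sum_const, Finset.card_univ, Fintype.card_fin, nsmul_eq_mul] at hsum
    rwa [mul_comm]
  by_cases hne : ({y : G | y * x * y⁻¹ = c} : Set G).Nonempty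
  · obtain ⟨y₀, hy₀⟩ := hne
    simp only [Set.mem_setOf_eq] at hy₀
    refine ⟨(fun y => y₀⁻¹ * y) ⁻¹' O, hOopen.preimage (by fun_prop), ?_, ?_⟩
    · rw [measure_preimage_mul]; exact hOsmall
    · intro y hy
      simp only [Set.mem_setOf_eq] at hy
      show y₀⁻¹ * y ∈ O
      apply hCO
      show (y₀⁻¹ * y) * x * (y₀⁻¹ * y)⁻¹ = x
      have h1 : (y₀⁻¹ * y) * x * (y₀⁻¹ * y)⁻¹ = y₀⁻¹ * (y * x * y⁻¹) * y₀ := by group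
      rw [h1, hy, ← hy₀]
      group
  · rw [Set.not_nonempty_iff_eq_empty] at hne
    exact ⟨∅, isOpen_empty, by simp, by simp [hne]⟩

/-- A closed subset of `G × G` whose slices over points outside the open set `F` can be enclosed
in arbitrarily small open sets is null outside `F` in the first coordinate. -/
lemma first_coord_null [CompactSpace G] (μ : Measure G) [μ.IsHaarMeasure]
    [IsProbabilityMeasure μ] (F : Set G) (hFopen : IsOpen F)
    (E : Set (G × G)) (hE : IsClosed E)
    (hsl : ∀ x ∉ F, ∀ n : ℕ, ∃ W : Set G, IsOpen W ∧ μ W ≤ (n : ℝ≥0∞)⁻¹ ∧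
      ∀ y : G, (x, y) ∈ E → y ∈ W) :
    μ.prod μ {p : G × G | p.1 ∉ F ∧ p ∈ E} = 0 := by
  classical
  have hbound : ∀ n : ℕ, μ.prod μ {p : G × G | p.1 ∉ F ∧ p ∈ E} ≤ (n : ℝ≥0∞)⁻¹ := by
    intro n
    have htube : ∀ x : {x : G // x ∉ F}, ∃ UW : Set G × Set G,
        IsOpen UW.1 ∧ (x : G) ∈ UW.1 ∧ IsOpen UW.2 ∧ μ UW.2 ≤ (n : ℝ≥0∞)⁻¹ ∧
          ∀ p : G × G, p ∈ E → p.1 ∈ UW.1 → p.2 ∈ UW.2 := by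
      rintro ⟨x, hx⟩
      obtain ⟨W, hWo, hWμ, hWsl⟩ := hsl x hx n
      set K : Set (G × G) := E ∩ Set.univ ×ˢ Wᶜ with hK
      have hKclosed : IsClosed K := hE.inter (isClosed_univ.prod hWo.isClosed_compl)
      have hproj : IsClosed (Prod.fst '' K) :=
        (hKclosed.isCompact.image continuous_fst).isClosed
      refine ⟨((Prod.fst '' K)ᶜ, W), hproj.isOpen_compl, ?_, hWo, hWμ, ?_⟩
      · intro hmem
        obtain ⟨⟨x', y⟩, hpK, rfl⟩ := hmem
        exact hpK.2.2 (hWsl y hpK.1)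
      · rintro ⟨x', y⟩ hpE hpU
        by_contra hyW
        exact hpU ⟨(x', y), ⟨hpE, ⟨trivial, hyW⟩⟩, rfl⟩
    choose UW hUo hUm hWo hWμ hUWtube using htube
    have hFcomp : IsCompact (Fᶜ : Set G) := hFopen.isClosed_compl.isCompact
    have hcover : (Fᶜ : Set G) ⊆ ⋃ i : {x : G // x ∉ F}, (UW i).1 := fun x hx =>
      Set.mem_iUnion.2 ⟨⟨x, hx⟩, hUm _⟩
    obtain ⟨t, ht⟩ := hFcomp.elim_finite_subcover (fun i => (UW i).1) (fun i => hUo i) hcover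
    set l := t.toList with hl
    set U' : ℕ → Set G := fun m => (l[m]?.map fun i => (UW i).1).getD ∅ with hU'
    set W' : ℕ → Set G := fun m => (l[m]?.map fun i => (UW i).2).getD ∅ with hW'
    have hU'open : ∀ m, IsOpen (U' m) := by
      intro m
      cases h : l[m]? with
      | none => simp [hU', h]
      | some i => simpa [hU', h] using hUo i
    have hW'μ : ∀ m, μ (W' m) ≤ (n : ℝ≥0∞)⁻¹ := by
      intro m
      cases h : l[m]? with
      | none => simp [hW', h]
      | some i => simpa [hW', h] using hWμ i
    have htube' : ∀ m, ∀ p : G × G, p ∈ E → p.1 ∈ U' m → p.2 ∈ W' m := by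
      intro m p hpE hpU
      cases h : l[m]? with
      | none => simp [hU', h] at hpU
      | some i =>
        simp only [hU', h, Option.map_some, Option.getD_some] at hpU
        simpa [hW', h] using hUWtube i p hpE hpU
    have hcov' : (Fᶜ : Set G) ⊆ ⋃ m, U' m := by
      intro x hx
      obtain ⟨i, hit, hxU⟩ := Set.mem_iUnion₂.1 (ht hx)
      obtain ⟨m, hm⟩ := List.mem_iff_getElem?.1 (Finset.mem_toList.2 hit)
      refine Set.mem_iUnion.2 ⟨m, ?_⟩
      simp only [hU', hl, hm, Option.map_some, Option.getD_some]
      exact hxU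
    have hsub : {p : G × G | p.1 ∉ F ∧ p ∈ E} ⊆
        ⋃ m, (disjointed U' m ∩ Fᶜ) ×ˢ W' m := by
      rintro ⟨x, y⟩ ⟨hx, hE'⟩
      have hx' : x ∈ ⋃ m, disjointed U' m := by
        rw [iUnion_disjointed]; exact hcov' hx
      obtain ⟨m, hm⟩ := Set.mem_iUnion.1 hx'
      exact Set.mem_iUnion.2 ⟨m, ⟨⟨hm, hx⟩, htube' m (x, y) hE' (disjointed_subset U' m hm)⟩⟩
    calc μ.prod μ {p : G × G | p.1 ∉ F ∧ p ∈ E}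
        ≤ μ.prod μ (⋃ m, (disjointed U' m ∩ Fᶜ) ×ˢ W' m) := measure_mono hsub
      _ ≤ ∑' m, μ.prod μ ((disjointed U' m ∩ Fᶜ) ×ˢ W' m) := measure_iUnion_le _
      _ = ∑' m, μ (disjointed U' m ∩ Fᶜ) * μ (W' m) := by
          simp only [Measure.prod_prod]
      _ ≤ ∑' m, μ (disjointed U' m) * (n : ℝ≥0∞)⁻¹ := ENNReal.tsum_le_tsum fun m =>
          mul_le_mul' (measure_mono Set.inter_subset_left) (hW'μ m)
      _ = (∑' m, μ (disjointed U' m)) * (n : ℝ≥0∞)⁻¹ := ENNReal.tsum_mul_right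
      _ = μ (⋃ m, disjointed U' m) * (n : ℝ≥0∞)⁻¹ := by
          rw [measure_iUnion (disjoint_disjointed U')
            (MeasurableSet.disjointed fun m => (hU'open m).measurableSet)]
      _ ≤ 1 * (n : ℝ≥0∞)⁻¹ := mul_le_mul' prob_le_one le_rfl
      _ = (n : ℝ≥0∞)⁻¹ := one_mul _
  by_contra h
  obtain ⟨n, hn⟩ := ENNReal.exists_inv_nat_lt h
  exact absurd (hbound n) (not_le.2 hn)

/-- The symmetric version of `first_coord_null` for the second coordinate. -/
lemma second_coord_null [CompactSpace G] (μ : Measure G) [μ.IsHaarMeasure]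
    [IsProbabilityMeasure μ] (F : Set G) (hFopen : IsOpen F)
    (E : Set (G × G)) (hE : IsClosed E)
    (hsl : ∀ y ∉ F, ∀ n : ℕ, ∃ W : Set G, IsOpen W ∧ μ W ≤ (n : ℝ≥0∞)⁻¹ ∧
      ∀ x : G, (x, y) ∈ E → x ∈ W) :
    μ.prod μ {p : G × G | p.2 ∉ F ∧ p ∈ E} = 0 := by
  classical
  have hbound : ∀ n : ℕ, μ.prod μ {p : G × G | p.2 ∉ F ∧ p ∈ E} ≤ (n : ℝ≥0∞)⁻¹ := by
    intro n
    have htube : ∀ y : {y : G // y ∉ F}, ∃ UW : Set G × Set G,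
        IsOpen UW.1 ∧ (y : G) ∈ UW.1 ∧ IsOpen UW.2 ∧ μ UW.2 ≤ (n : ℝ≥0∞)⁻¹ ∧
          ∀ p : G × G, p ∈ E → p.2 ∈ UW.1 → p.1 ∈ UW.2 := by
      rintro ⟨y, hy⟩
      obtain ⟨W, hWo, hWμ, hWsl⟩ := hsl y hy n
      set K : Set (G × G) := E ∩ Wᶜ ×ˢ Set.univ with hK
      have hKclosed : IsClosed K := hE.inter (hWo.isClosed_compl.prod isClosed_univ)
      have hproj : IsClosed (Prod.snd '' K) :=
        (hKclosed.isCompact.image continuous_snd).isClosed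
      refine ⟨((Prod.snd '' K)ᶜ, W), hproj.isOpen_compl, ?_, hWo, hWμ, ?_⟩
      · intro hmem
        obtain ⟨⟨x, y'⟩, hpK, rfl⟩ := hmem
        exact hpK.2.1 (hWsl x hpK.1)
      · rintro ⟨x, y'⟩ hpE hpU
        by_contra hxW
        exact hpU ⟨(x, y'), ⟨hpE, ⟨hxW, trivial⟩⟩, rfl⟩
    choose UW hUo hUm hWo hWμ hUWtube using htube
    have hFcomp : IsCompact (Fᶜ : Set G) := hFopen.isClosed_compl.isCompact
    have hcover : (Fᶜ : Set G) ⊆ ⋃ i : {y : G // y ∉ F}, (UW i).1 := fun y hy =>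
      Set.mem_iUnion.2 ⟨⟨y, hy⟩, hUm _⟩
    obtain ⟨t, ht⟩ := hFcomp.elim_finite_subcover (fun i => (UW i).1) (fun i => hUo i) hcover
    set l := t.toList with hl
    set U' : ℕ → Set G := fun m => (l[m]?.map fun i => (UW i).1).getD ∅ with hU'
    set W' : ℕ → Set G := fun m => (l[m]?.map fun i => (UW i).2).getD ∅ with hW'
    have hU'open : ∀ m, IsOpen (U' m) := by
      intro m
      cases h : l[m]? with
      | none => simp [hU', h]
      | some i => simpa [hU', h] using hUo i
    have hW'μ : ∀ m, μ (W' m) ≤ (n : ℝ≥0∞)⁻¹ := by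
      intro m
      cases h : l[m]? with
      | none => simp [hW', h]
      | some i => simpa [hW', h] using hWμ i
    have htube' : ∀ m, ∀ p : G × G, p ∈ E → p.2 ∈ U' m → p.1 ∈ W' m := by
      intro m p hpE hpU
      cases h : l[m]? with
      | none => simp [hU', h] at hpU
      | some i =>
        simp only [hU', h, Option.map_some, Option.getD_some] at hpU
        simpa [hW', h] using hUWtube i p hpE hpU
    have hcov' : (Fᶜ : Set G) ⊆ ⋃ m, U' m := by
      intro y hy
      obtain ⟨i, hit, hyU⟩ := Set.mem_iUnion₂.1 (ht hy)
      obtain ⟨m, hm⟩ := List.mem_iff_getElem?.1 (Finset.mem_toList.2 hit)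
      refine Set.mem_iUnion.2 ⟨m, ?_⟩
      simp only [hU', hl, hm, Option.map_some, Option.getD_some]
      exact hyU
    have hsub : {p : G × G | p.2 ∉ F ∧ p ∈ E} ⊆
        ⋃ m, W' m ×ˢ (disjointed U' m ∩ Fᶜ) := by
      rintro ⟨x, y⟩ ⟨hy, hE'⟩
      have hy' : y ∈ ⋃ m, disjointed U' m := by
        rw [iUnion_disjointed]; exact hcov' hy
      obtain ⟨m, hm⟩ := Set.mem_iUnion.1 hy'
      exact Set.mem_iUnion.2 ⟨m, ⟨htube' m (x, y) hE' (disjointed_subset U' m hm), ⟨hm, hy⟩⟩⟩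
    calc μ.prod μ {p : G × G | p.2 ∉ F ∧ p ∈ E}
        ≤ μ.prod μ (⋃ m, W' m ×ˢ (disjointed U' m ∩ Fᶜ)) := measure_mono hsub
      _ ≤ ∑' m, μ.prod μ (W' m ×ˢ (disjointed U' m ∩ Fᶜ)) := measure_iUnion_le _
      _ = ∑' m, μ (W' m) * μ (disjointed U' m ∩ Fᶜ) := by
          simp only [Measure.prod_prod]
      _ ≤ ∑' m, (n : ℝ≥0∞)⁻¹ * μ (disjointed U' m) := ENNReal.tsum_le_tsum fun m =>
          mul_le_mul' (hW'μ m) (measure_mono Set.inter_subset_left)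
      _ = (n : ℝ≥0∞)⁻¹ * ∑' m, μ (disjointed U' m) := ENNReal.tsum_mul_left
      _ = (n : ℝ≥0∞)⁻¹ * μ (⋃ m, disjointed U' m) := by
          rw [measure_iUnion (disjoint_disjointed U')
            (MeasurableSet.disjointed fun m => (hU'open m).measurableSet)]
      _ ≤ (n : ℝ≥0∞)⁻¹ * 1 := mul_le_mul' le_rfl prob_le_one
      _ = (n : ℝ≥0∞)⁻¹ := mul_one _
  by_contra h
  obtain ⟨n, hn⟩ := ENNReal.exists_inv_nat_lt h
  exact absurd (hbound n) (not_le.2 hn)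

end Aux

/-- Let `G` be a compact Hausdorff topological group whose FC-centre
`F = {g : conjugacy class of g is finite}` is open. Then for every `g ∈ F`, the fiber of the
commutator map over `g` has the same `μ × μ`-measure as its intersection with `F × F`. -/
theorem commutator_fiber_measure_eq_inter_FC_centre {G : Type*} [Group G] [TopologicalSpace G]
    [IsTopologicalGroup G] [CompactSpace G] [T2Space G] [MeasurableSpace G] [BorelSpace G]
    (μ : Measure G) [μ.IsHaarMeasure] [IsProbabilityMeasure μ]
    (F : Set G) (hF : F = {g : G | ({x : G | ∃ a : G, a * g * a⁻¹ = x} : Set G).Finite})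
    (hFopen : IsOpen F) (g : G) (hg : g ∈ F) :
    (μ.prod μ) {p : G × G | p.1 * p.2 * p.1⁻¹ * p.2⁻¹ = g} =
      (μ.prod μ) ({p : G × G | p.1 * p.2 * p.1⁻¹ * p.2⁻¹ = g} ∩ F ×ˢ F) := by
  set T : Set (G × G) := {p : G × G | p.1 * p.2 * p.1⁻¹ * p.2⁻¹ = g} with hT
  have hFF : MeasurableSet (F ×ˢ F) := hFopen.measurableSet.prod hFopen.measurableSet
  -- two auxiliary closed sets containing the fiber
  set E₁ : Set (G × G) := {p : G × G | p.2 * p.1 * p.2⁻¹ = g⁻¹ * p.1} with hE₁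
  set E₂ : Set (G × G) := {p : G × G | p.1 * p.2 * p.1⁻¹ = g * p.2} with hE₂
  have hE₁closed : IsClosed E₁ := isClosed_eq (by fun_prop) (by fun_prop)
  have hE₂closed : IsClosed E₂ := isClosed_eq (by fun_prop) (by fun_prop)
  have hTE₁ : T ⊆ E₁ := by
    rintro ⟨x, y⟩ hp
    simp only [hT, Set.mem_setOf_eq] at hp
    show y * x * y⁻¹ = g⁻¹ * x
    calc y * x * y⁻¹ = (x * y * x⁻¹ * y⁻¹)⁻¹ * x := by group
      _ = g⁻¹ * x := by rw [hp]
  have hTE₂ : T ⊆ E₂ := by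
    rintro ⟨x, y⟩ hp
    simp only [hT, Set.mem_setOf_eq] at hp
    show x * y * x⁻¹ = g * y
    calc x * y * x⁻¹ = (x * y * x⁻¹ * y⁻¹) * y := by group
      _ = g * y := by rw [hp]
  -- the two "bad" parts are null
  have hA : μ.prod μ {p : G × G | p.1 ∉ F ∧ p ∈ E₁} = 0 := by
    refine first_coord_null μ F hFopen E₁ hE₁closed fun x hx n => ?_
    have hinf : ({z : G | ∃ a : G, a * x * a⁻¹ = z} : Set G).Infinite := by
      rw [hF] at hx; exact hx
    obtain ⟨W, hWo, hWμ, hWsub⟩ := small_conj_nbhd μ x hinf (g⁻¹ * x) n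
    exact ⟨W, hWo, hWμ, fun y hy => hWsub hy⟩
  have hB : μ.prod μ {p : G × G | p.2 ∉ F ∧ p ∈ E₂} = 0 := by
    refine second_coord_null μ F hFopen E₂ hE₂closed fun y hy n => ?_
    have hinf : ({z : G | ∃ a : G, a * y * a⁻¹ = z} : Set G).Infinite := by
      rw [hF] at hy; exact hy
    obtain ⟨W, hWo, hWμ, hWsub⟩ := small_conj_nbhd μ y hinf (g * y) n
    exact ⟨W, hWo, hWμ, fun x hx => hWsub hx⟩
  have hdiff : μ.prod μ (T \ F ×ˢ F) = 0 := by
    have hsub : T \ F ×ˢ F ⊆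
        {p : G × G | p.1 ∉ F ∧ p ∈ E₁} ∪ {p : G × G | p.2 ∉ F ∧ p ∈ E₂} := by
      rintro ⟨x, y⟩ ⟨hxy, hnot⟩
      rw [Set.mem_prod] at hnot
      push_neg at hnot
      by_cases hx : x ∈ F
      · exact Or.inr ⟨hnot hx, hTE₂ hxy⟩
      · exact Or.inl ⟨hx, hTE₁ hxy⟩
    exact measure_mono_null hsub (measure_union_null hA hB)
  have hkey := measure_inter_add_diff (μ := μ.prod μ) T hFF
  rw [hdiff, add_zero] at hkey
  exact hkey.symm
end
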